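/- arXiv:2102.11306 — 4 statements merged into one kernel-verified Lean document; each statement's English description precedes it below -/
import Mathlib

section
/- Let w = w_0w_1⋯w_n be a generalized snake word of length n ≥ 1, and let k be the largest index with w_k ≠ w_n (0 ≤ k ≤ n−1). Then the number of filters of P(w) equals the number of filters of P(w_0⋯w_{n−1}) plus n − k + 3. -/
/-- The two-letter alphabet `{L, R}` for generalized snake words. -/
inductive Letter : Type
  | L
  | R
  deriving DecidableEq

/-- The element of the generalized snake poset covered by `2m+2` (besides the relations
coming from `2m+3`): it is `2m-1` when the word turns at the `m`-th letter
(i.e. `m = 1` and `w 1 = L`, or `m ≥ 2` and `w (m-1) ≠ w m`), and `2m` otherwise. -/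
def snakeSide (w : ℕ → Letter) (m : ℕ) : ℕ :=
  if (m = 1 ∧ w 1 = Letter.L) ∨ (2 ≤ m ∧ w (m - 1) ≠ w m) then 2 * m - 1 else 2 * m

/-- The covering relation of the generalized snake poset `P(w)` for the word
`ε w₁ ⋯ w_n` (the letter `w i` for `1 ≤ i ≤ n` is the `i`-th letter).
`SnakeCov n w a b` means `a ≺ b`, i.e. `a` is covered by `b`. -/
inductive SnakeCov (n : ℕ) (w : ℕ → Letter) : ℕ → ℕ → Prop
  | cov10 : SnakeCov n w 1 0
  | cov20 : SnakeCov n w 2 0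
  | cov31 : SnakeCov n w 3 1
  | cov32 : SnakeCov n w 3 2
  | covOdd (m : ℕ) (h1 : 1 ≤ m) (h2 : m ≤ n) : SnakeCov n w (2 * m + 3) (2 * m + 1)
  | covBot (m : ℕ) (h1 : 1 ≤ m) (h2 : m ≤ n) : SnakeCov n w (2 * m + 3) (2 * m + 2)
  | covSide (m : ℕ) (h1 : 1 ≤ m) (h2 : m ≤ n) : SnakeCov n w (2 * m + 2) (snakeSide w m)

/-- The order relation of the generalized snake poset `P(w)` on `{0, …, 2n+3}`:
the reflexive-transitive closure of the covering relation. -/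
def SnakeLE (n : ℕ) (w : ℕ → Letter) : ℕ → ℕ → Prop :=
  Relation.ReflTransGen (SnakeCov n w)

theorem snakeCov_lt {n : ℕ} {w : ℕ → Letter} {a b : ℕ} (h : SnakeCov n w a b) : b < a := by
  cases h
  case covSide m h1 h2 => unfold snakeSide; split <;> omega
  all_goals omega

theorem snakeLE_le {n : ℕ} {w : ℕ → Letter} {a b : ℕ} (h : SnakeLE n w a b) : b ≤ a := by
  induction h with
  | refl => exact le_refl a
  | tail _ hc ih => exact le_trans (le_of_lt (snakeCov_lt hc)) ih

/-- The generalized snake poset `P(ε w₁ ⋯ w_n)` as a type: its elements are `0, 1, …, 2n+3`. -/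
def SnakePoset (n : ℕ) (w : ℕ → Letter) : Type := Fin (2 * n + 4)

instance (n : ℕ) (w : ℕ → Letter) : PartialOrder (SnakePoset n w) where
  le a b := SnakeLE n w a.1 b.1
  le_refl _ := Relation.ReflTransGen.refl
  le_trans _ _ _ h1 h2 := Relation.ReflTransGen.trans h1 h2
  le_antisymm a b h1 h2 := Fin.ext (Nat.le_antisymm (snakeLE_le h2) (snakeLE_le h1))

/-- The number of linear extensions of `P(ε w₁ ⋯ w_n)`: order-preserving bijections
onto the chain `Fin (2n+4)`.  By Stanley's theorem this is the normalized volume of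
the order polytope `O(P(w))`. -/
noncomputable def linExtCount (n : ℕ) (w : ℕ → Letter) : ℕ :=
  Nat.card {f : SnakePoset n w ≃ Fin (2 * n + 4) //
    ∀ a b : SnakePoset n w, a ≤ b → f a ≤ f b}

/-- The collection of filters (upper order ideals) of `P(ε w₁ ⋯ w_n)`,
as subsets of `{0, …, 2n+3} ⊆ ℕ`. -/
def SnakeFilters (n : ℕ) (w : ℕ → Letter) : Set (Set ℕ) :=
  {A | (∀ a ∈ A, a < 2 * n + 4) ∧ ∀ a ∈ A, ∀ b, SnakeLE n w a b → b ∈ A}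

/-- The filter of `P(ε w₁ ⋯ w_n)` generated by a set `S`: its upward closure. -/
def snakeUp (n : ℕ) (w : ℕ → Letter) (S : Set ℕ) : Set ℕ :=
  {b | ∃ a ∈ S, SnakeLE n w a b}

/-- The alternating word `L R L R ⋯` (letter `i` is `L` for odd `i`),
defining the snake poset `S_n = P(ε L R L R ⋯)`. -/
def altWord : ℕ → Letter := fun i => if i % 2 = 1 then Letter.L else Letter.R

/-- Flipping a letter `L ↔ R`. -/
def Letter.flip : Letter → Letter
  | Letter.L => Letter.R
  | Letter.R => Letter.L

/-- The swap operation `f_i`: flip all letters with index `≥ i`. -/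
def swapFrom (w : ℕ → Letter) (i : ℕ) : ℕ → Letter :=
  fun j => if i ≤ j then (w j).flip else w j

/-- Membership in `𝒱`: the letter sequence `w₁ ⋯ w_n` contains neither `LRL` nor
`RLR` as a consecutive substring. -/
def InV (n : ℕ) (w : ℕ → Letter) : Prop :=
  ∀ i, 1 ≤ i → i + 2 ≤ n → w i = w (i + 1) ∨ w (i + 1) = w (i + 2)

/-- The order on `{0, …, 2n+5}` making `P̂(w)`: the poset `P(w)` (elements `0, …, 2n+3`)
with a new maximum `2n+4` and a new minimum `2n+5` adjoined. -/
def SnakeHatLE (n : ℕ) (w : ℕ → Letter) (a b : ℕ) : Prop :=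
  a = 2 * n + 5 ∨ b = 2 * n + 4 ∨ (a < 2 * n + 4 ∧ b < 2 * n + 4 ∧ SnakeLE n w a b)

/-- The lattice `P̂(w)`: `P(w)` with a new minimum `0̂ = 2n+5` and maximum `1̂ = 2n+4`. -/
def SnakeHat (n : ℕ) (w : ℕ → Letter) : Type := Fin (2 * n + 6)

instance (n : ℕ) (w : ℕ → Letter) : PartialOrder (SnakeHat n w) where
  le a b := SnakeHatLE n w a.1 b.1
  le_refl a := by
    by_cases h5 : a.1 = 2 * n + 5
    · exact Or.inl h5
    · by_cases h4 : a.1 = 2 * n + 4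
      · exact Or.inr (Or.inl h4)
      · have := a.2
        exact Or.inr (Or.inr ⟨by omega, by omega, Relation.ReflTransGen.refl⟩)
  le_trans a b c hab hbc := by
    rcases hab with h | h | ⟨ha, hb, hab⟩
    · exact Or.inl h
    · rcases hbc with h' | h' | ⟨hb', hc, hbc⟩
      · exact absurd h' (by omega)
      · exact Or.inr (Or.inl h')
      · exact absurd h (by omega)
    · rcases hbc with h' | h' | ⟨hb', hc, hbc⟩
      · exact absurd h' (by omega)
      · exact Or.inr (Or.inl h')
      · exact Or.inr (Or.inr ⟨ha, hc, Relation.ReflTransGen.trans hab hbc⟩)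
  le_antisymm a b h1 h2 := by
    apply Fin.ext
    rcases h1 with h | h | ⟨ha, hb, hab⟩ <;>
      rcases h2 with h' | h' | ⟨ha', hb', hba⟩ <;>
        first
          | omega
          | exact Nat.le_antisymm (snakeLE_le hba) (snakeLE_le hab)

/-- An element `x` of a (finite) lattice is meet-irreducible if it is not the maximum
element and whenever `x` is the meet (greatest lower bound) of `y` and `z`,
one has `x = y` or `x = z`. -/
def MeetIrred {α : Type*} [PartialOrder α] (x : α) : Prop :=
  ¬IsTop x ∧ ∀ y z : α, IsGLB {y, z} x → x = y ∨ x = z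

/-- The poset `Q_w` of meet-irreducible elements of `P̂(w)`, as an induced subposet. -/
abbrev SnakeQ (n : ℕ) (w : ℕ → Letter) : Type :=
  {x : SnakeHat n w // MeetIrred x}

/-- The vertex set of the order polytope `O(α)` of a finite poset `α`: the 0/1 indicator
vectors of the filters of `α`. -/
def OPVertexSet (α : Type*) [PartialOrder α] : Set (α → ℝ) :=
  {v | ∃ A : Set α, (∀ a ∈ A, ∀ b, a ≤ b → b ∈ A) ∧ v = A.indicator fun _ => (1 : ℝ)}

/-- A circuit of a point configuration: an affinely dependent set all of whose proper
subsets are affinely independent. -/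
def IsAffCircuit {α : Type*} (Z : Set (α → ℝ)) : Prop :=
  ¬AffineIndependent ℝ (Subtype.val : Z → (α → ℝ)) ∧
    ∀ Y : Set (α → ℝ), Y ⊂ Z → AffineIndependent ℝ (Subtype.val : Y → (α → ℝ))

/-- The adjacency relation of the graph `G(w)` on vertices `{0, 1, …, n}`:
consecutive indices are adjacent, and `i` and `i+2` are adjacent when
`w (i+1) ≠ w (i+2)` (a turn of the word). -/
def snakeAdj (n : ℕ) (w : ℕ → Letter) (i j : ℕ) : Prop :=
  (j = i + 1 ∧ j ≤ n) ∨ (i = j + 1 ∧ i ≤ n) ∨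
    (j = i + 2 ∧ j ≤ n ∧ w (i + 1) ≠ w (i + 2)) ∨
    (i = j + 2 ∧ i ≤ n ∧ w (j + 1) ≠ w (j + 2))

/-- `𝒢(w)`: the collection of nonempty subsets of `{0, …, n}` inducing connected
subgraphs of `G(w)`. -/
def GSets (n : ℕ) (w : ℕ → Letter) : Set (Set ℕ) :=
  {S | S.Nonempty ∧ (∀ i ∈ S, i ≤ n) ∧
    ∀ a ∈ S, ∀ b ∈ S,
      Relation.ReflTransGen (fun x y => x ∈ S ∧ y ∈ S ∧ snakeAdj n w x y) a b}

section SnakeAux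

open Relation

lemma snakeSide_cases (w : ℕ → Letter) (m : ℕ) :
    snakeSide w m = 2 * m - 1 ∨ snakeSide w m = 2 * m := by
  unfold snakeSide; split
  · exact Or.inl rfl
  · exact Or.inr rfl

lemma snakeCov_mono {n : ℕ} {w : ℕ → Letter} {a b : ℕ} (h : SnakeCov n w a b) :
    SnakeCov (n + 1) w a b := by
  cases h with
  | cov10 => exact .cov10
  | cov20 => exact .cov20
  | cov31 => exact .cov31
  | cov32 => exact .cov32
  | covOdd m h1 h2 => exact .covOdd m h1 (by omega)
  | covBot m h1 h2 => exact .covBot m h1 (by omega)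
  | covSide m h1 h2 => exact .covSide m h1 (by omega)

lemma snakeLE_mono {n : ℕ} {w : ℕ → Letter} {a b : ℕ} (h : SnakeLE n w a b) :
    SnakeLE (n + 1) w a b := by
  induction h with
  | refl => exact .refl
  | tail _ hc ih => exact .tail ih (snakeCov_mono hc)

lemma snakeCov_restrict {n : ℕ} {w : ℕ → Letter} {a b : ℕ}
    (h : SnakeCov (n + 1) w a b) (ha : a < 2 * n + 4) : SnakeCov n w a b := by
  cases h with
  | cov10 => exact .cov10
  | cov20 => exact .cov20
  | cov31 => exact .cov31
  | cov32 => exact .cov32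
  | covOdd m h1 h2 => exact .covOdd m h1 (by omega)
  | covBot m h1 h2 => exact .covBot m h1 (by omega)
  | covSide m h1 h2 => exact .covSide m h1 (by omega)

lemma snakeLE_restrict {n : ℕ} {w : ℕ → Letter} {a b : ℕ}
    (h : SnakeLE (n + 1) w a b) (ha : a < 2 * n + 4) : SnakeLE n w a b := by
  induction h with
  | refl => exact .refl
  | tail hab hc ih =>
      have hb := snakeLE_le hab
      exact .tail ih (snakeCov_restrict hc (by omega))

lemma snakeMin (n : ℕ) (w : ℕ → Letter) :
    ∀ m, m ≤ n + 1 → ∀ x, x ≤ 2 * m + 1 → SnakeLE n w (2 * m + 1) x := by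
  intro m
  induction m using Nat.strong_induction_on with
  | _ m ih =>
    intro hm x hx
    match m, hm, hx with
    | 0, _, hx =>
        interval_cases x
        · exact ReflTransGen.single .cov10
        · exact .refl
    | 1, _, hx =>
        interval_cases x
        · exact (ReflTransGen.single .cov31).tail .cov10
        · exact ReflTransGen.single .cov31
        · exact ReflTransGen.single .cov32
        · exact .refl
    | (m + 2), hm, hx =>
        rcases Nat.lt_or_ge x (2 * (m + 2) + 1) with hlt | hge
        · rcases Nat.lt_or_ge x (2 * (m + 1) + 2) with hlt2 | hge2
          · -- x ≤ 2(m+1)+1 : go through covOdd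
            have hcov : SnakeCov n w (2 * (m + 2) + 1) (2 * (m + 1) + 1) := by
              have h := SnakeCov.covOdd (n := n) (w := w) (m + 1) (by omega) (by omega)
              have e : 2 * (m + 1) + 3 = 2 * (m + 2) + 1 := by ring
              rwa [e] at h
            exact ReflTransGen.head hcov (ih (m + 1) (by omega) (by omega) x (by omega))
          · -- x = 2(m+1)+2 = 2m+4
            have hx4 : x = 2 * m + 4 := by omega
            subst hx4
            have h := SnakeCov.covBot (n := n) (w := w) (m + 1) (by omega) (by omega)
            have hcov : SnakeCov n w (2 * (m + 2) + 1) (2 * m + 4) := by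
              have e1 : 2 * (m + 1) + 3 = 2 * (m + 2) + 1 := by ring
              have e2 : 2 * (m + 1) + 2 = 2 * m + 4 := by ring
              rwa [e1, e2] at h
            exact ReflTransGen.single hcov
        · have : x = 2 * (m + 2) + 1 := by omega
          subst this
          exact .refl

end SnakeAux


section SnakeCore

open Relation

/-- Chain elements below `s` that are outside the up-set of `s`. -/
def cvF (k e j : ℕ) : ℕ := if j = 0 then e else 2 * k + 2 * j + 1

/-- The `i`-th filter containing `s = snakeSide w (n+1)`. -/
def AfamF (n k e i : ℕ) : Set ℕ :=
  {x | x < 2 * n + 4 ∧ ((x ≤ 2 * k + 2 ∧ x ≠ e) ∨ (x % 2 = 0 ∧ 2 * k + 4 ≤ x) ∨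
    (1 ≤ i ∧ x = e) ∨ (x % 2 = 1 ∧ 2 * k + 3 ≤ x ∧ x < 2 * k + 2 * i))}

lemma mem_AfamF {n k e i x : ℕ} :
    x ∈ AfamF n k e i ↔ x < 2 * n + 4 ∧ ((x ≤ 2 * k + 2 ∧ x ≠ e) ∨ (x % 2 = 0 ∧ 2 * k + 4 ≤ x) ∨
    (1 ≤ i ∧ x = e) ∨ (x % 2 = 1 ∧ 2 * k + 3 ≤ x ∧ x < 2 * k + 2 * i)) := Iff.rfl

lemma Afam_filter (n k : ℕ) (w : ℕ → Letter) (hk : k ≤ n) (e : ℕ)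
    (he : e = 2 * k + 2 ∨ (e = 2 * k + 1 ∧ k = 0))
    (hside1 : snakeSide w (k + 1) = 4 * k + 3 - e)
    (hsidem : ∀ m, k + 2 ≤ m → m ≤ n + 1 → snakeSide w m = 2 * m)
    (i : ℕ) : AfamF n k e i ∈ SnakeFilters n w := by
  have step : ∀ a ∈ AfamF n k e i, ∀ b, SnakeCov n w a b → b ∈ AfamF n k e i := by
    intro a ha b hc
    rw [mem_AfamF] at ha ⊢
    obtain ⟨haz, hd⟩ := ha
    cases hc with
    | cov10 => exact ⟨by omega, by omega⟩
    | cov20 => exact ⟨by omega, by omega⟩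
    | cov31 => exact ⟨by omega, by omega⟩
    | cov32 => exact ⟨by omega, by omega⟩
    | covOdd m h1 h2 => exact ⟨by omega, by omega⟩
    | covBot m h1 h2 => exact ⟨by omega, by omega⟩
    | covSide m h1 h2 =>
        rcases Nat.lt_or_ge m (k + 1) with hm | hm
        · rcases snakeSide_cases w m with hs | hs <;> rw [hs] <;> exact ⟨by omega, by omega⟩
        · rcases Nat.lt_or_ge m (k + 2) with hm2 | hm2
          · have : m = k + 1 := by omega
            subst this
            rw [hside1]
            exact ⟨by omega, by omega⟩
          · rw [hsidem m hm2 (by omega)]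
            exact ⟨by omega, by omega⟩
  refine ⟨fun a ha => ha.1, ?_⟩
  intro a ha b hle
  induction hle with
  | refl => exact ha
  | tail h1 h2 ih => exact step _ ih _ h2

lemma chainLE (n k : ℕ) (w : ℕ → Letter)
    (hsidem : ∀ m, k + 2 ≤ m → m ≤ n + 1 → snakeSide w m = 2 * m) :
    ∀ d, d ≤ n - (k + 1) → SnakeLE n w (2 * n + 2) (2 * (n - d) + 2) := by
  intro d
  induction d with
  | zero => intro _; simp only [Nat.sub_zero]; exact .refl
  | succ d ih =>
      intro hd
      have h1 := ih (by omega)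
      have hc := SnakeCov.covSide (n := n) (w := w) (n - d) (by omega) (by omega)
      have hs : snakeSide w (n - d) = 2 * (n - (d + 1)) + 2 := by
        rw [hsidem (n - d) (by omega) (by omega)]; omega
      rw [hs] at hc
      exact h1.tail hc

lemma reach_other (n k : ℕ) (w : ℕ → Letter) (hk : k ≤ n) (e : ℕ)
    (hside1 : snakeSide w (k + 1) = 4 * k + 3 - e)
    (hsidem : ∀ m, k + 2 ≤ m → m ≤ n + 1 → snakeSide w m = 2 * m) :
    SnakeLE n w (snakeSide w (n + 1)) (4 * k + 3 - e) := by
  rcases eq_or_lt_of_le hk with rfl | hkn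
  · rw [hside1]; exact .refl
  · have hs : snakeSide w (n + 1) = 2 * n + 2 := by
      have := hsidem (n + 1) (by omega) (by omega); omega
    rw [hs]
    have h1 := chainLE n k w hsidem (n - (k + 1)) le_rfl
    have h2 : 2 * (n - (n - (k + 1))) + 2 = 2 * (k + 1) + 2 := by omega
    rw [h2] at h1
    have hc := SnakeCov.covSide (n := n) (w := w) (k + 1) (by omega) (by omega)
    rw [hside1] at hc
    exact h1.tail hc

lemma U_sub (n k : ℕ) (w : ℕ → Letter) (hk : k ≤ n) (e : ℕ)
    (he : e = 2 * k + 2 ∨ (e = 2 * k + 1 ∧ k = 0))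
    (hside1 : snakeSide w (k + 1) = 4 * k + 3 - e)
    (hsidem : ∀ m, k + 2 ≤ m → m ≤ n + 1 → snakeSide w m = 2 * m)
    (x : ℕ) (hx : x < 2 * n + 4)
    (hU : (x ≤ 2 * k + 2 ∧ x ≠ e) ∨ (x % 2 = 0 ∧ 2 * k + 4 ≤ x)) :
    SnakeLE n w (snakeSide w (n + 1)) x := by
  rcases hU with ⟨h1, h2⟩ | ⟨h1, h2⟩
  · refine (reach_other n k w hk e hside1 hsidem).trans ?_
    rcases he with he | ⟨he, hk0⟩
    · have hh : 4 * k + 3 - e = 2 * k + 1 := by omega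
      rw [hh]
      exact snakeMin n w k (by omega) x (by omega)
    · subst hk0
      have hh : 4 * 0 + 3 - e = 2 := by omega
      rw [hh]
      have hx02 : x = 0 ∨ x = 2 := by omega
      rcases hx02 with rfl | rfl
      · exact ReflTransGen.single .cov20
      · exact .refl
  · have hkn : k < n := by omega
    have hs : snakeSide w (n + 1) = 2 * n + 2 := by
      have := hsidem (n + 1) (by omega) (by omega); omega
    rw [hs]
    obtain ⟨m, rfl⟩ : ∃ m, x = 2 * m + 2 := ⟨(x - 2) / 2, by omega⟩
    have h := chainLE n k w hsidem (n - m) (by omega)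
    have e2 : 2 * (n - (n - m)) + 2 = 2 * m + 2 := by omega
    rwa [e2] at h

lemma cvCov (n k : ℕ) (w : ℕ → Letter) (hk : k ≤ n) (e : ℕ)
    (he : e = 2 * k + 2 ∨ (e = 2 * k + 1 ∧ k = 0))
    (j : ℕ) (hj : j + 1 ≤ n - k + 1) :
    SnakeCov n w (cvF k e (j + 1)) (cvF k e j) := by
  cases j with
  | zero =>
      simp only [cvF, if_pos rfl, if_neg (by omega : (0:ℕ)+1 ≠ 0)]
      rcases he with he | ⟨he, hk0⟩
      · subst he
        cases k with
        | zero => exact .cov32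
        | succ k' =>
            have h := SnakeCov.covBot (n := n) (w := w) (k' + 1) (by omega) (by omega)
            have e1 : 2 * (k' + 1) + 3 = 2 * (k' + 1) + 2 * 1 + 1 := by ring
            have e2 : 2 * (k' + 1) + 2 = 2 * (k' + 1) + 2 := rfl
            rw [e1] at h
            exact h
      · subst hk0; subst he
        exact .cov31
  | succ j =>
      simp only [cvF, if_neg (by omega : j + 1 + 1 ≠ 0), if_neg (by omega : j + 1 ≠ 0)]
      have h := SnakeCov.covOdd (n := n) (w := w) (k + j + 1) (by omega) (by omega)
      have e1 : 2 * (k + j + 1) + 3 = 2 * k + 2 * (j + 1 + 1) + 1 := by ring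
      have e2 : 2 * (k + j + 1) + 1 = 2 * k + 2 * (j + 1) + 1 := by ring
      rw [e1, e2] at h
      exact h

lemma s_mem_Afam (n k : ℕ) (w : ℕ → Letter) (hk : k ≤ n) (e : ℕ)
    (he : e = 2 * k + 2 ∨ (e = 2 * k + 1 ∧ k = 0))
    (hside1 : snakeSide w (k + 1) = 4 * k + 3 - e)
    (hsidem : ∀ m, k + 2 ≤ m → m ≤ n + 1 → snakeSide w m = 2 * m)
    (i : ℕ) : snakeSide w (n + 1) ∈ AfamF n k e i := by
  rcases eq_or_lt_of_le hk with rfl | hkn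
  · rw [hside1, mem_AfamF]
    exact ⟨by omega, by omega⟩
  · have hs : snakeSide w (n + 1) = 2 * n + 2 := by
      have := hsidem (n + 1) (by omega) (by omega); omega
    rw [hs, mem_AfamF]
    exact ⟨by omega, by omega⟩

end SnakeCore


section SnakeCount

open Relation

lemma Afam_strict (n k : ℕ) (hk : k ≤ n) (e : ℕ)
    (he : e = 2 * k + 2 ∨ (e = 2 * k + 1 ∧ k = 0))
    {i j : ℕ} (hij : i < j) (hj : j ≤ n - k + 2) :
    cvF k e i ∈ AfamF n k e j ∧ cvF k e i ∉ AfamF n k e i := by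
  cases i with
  | zero =>
      rw [show cvF k e 0 = e from rfl, mem_AfamF, mem_AfamF]
      constructor
      · exact ⟨by omega, by omega⟩
      · omega
  | succ i =>
      rw [show cvF k e (i + 1) = 2 * k + 2 * (i + 1) + 1 from rfl, mem_AfamF, mem_AfamF]
      constructor
      · exact ⟨by omega, by omega⟩
      · omega

lemma Afam_injOn (n k : ℕ) (hk : k ≤ n) (e : ℕ)
    (he : e = 2 * k + 2 ∨ (e = 2 * k + 1 ∧ k = 0)) :
    Set.InjOn (AfamF n k e) (Set.Iic (n - k + 2)) := by
  intro i hi j hj hij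
  rcases lt_trichotomy i j with h | h | h
  · obtain ⟨h1, h2⟩ := Afam_strict n k hk e he h (by simpa using hj)
    rw [← hij] at h1
    exact absurd h1 h2
  · exact h
  · obtain ⟨h1, h2⟩ := Afam_strict n k hk e he h (by simpa using hi)
    rw [hij] at h1
    exact absurd h1 h2

lemma snakeCore (n k : ℕ) (w : ℕ → Letter) (hk : k ≤ n) (e : ℕ)
    (he : e = 2 * k + 2 ∨ (e = 2 * k + 1 ∧ k = 0))
    (hside1 : snakeSide w (k + 1) = 4 * k + 3 - e)
    (hsidem : ∀ m, k + 2 ≤ m → m ≤ n + 1 → snakeSide w m = 2 * m) :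
    {A | A ∈ SnakeFilters n w ∧ snakeSide w (n + 1) ∈ A}.ncard = n - k + 3 := by
  classical
  have hT : {A | A ∈ SnakeFilters n w ∧ snakeSide w (n + 1) ∈ A}
      = AfamF n k e '' Set.Iic (n - k + 2) := by
    ext A
    constructor
    · rintro ⟨hAf, hsA⟩
      set P : ℕ → Prop := fun j => 0 < j ∧ cvF k e (j - 1) ∈ A with hP
      set i := Nat.findGreatest P (n - k + 2) with hi
      have hile : i ≤ n - k + 2 := Nat.findGreatest_le _
      have hpref : ∀ j, j ≤ n - k + 1 → cvF k e j ∈ A → ∀ j', j' ≤ j → cvF k e j' ∈ A := by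
        intro j
        induction j with
        | zero =>
            intro _ hj j' hj'
            have : j' = 0 := by omega
            subst this; exact hj
        | succ j ih =>
            intro hjle hmem j' hj'
            have hprev : cvF k e j ∈ A :=
              hAf.2 _ hmem _ (ReflTransGen.single (cvCov n k w hk e he j hjle))
            rcases Nat.lt_succ_iff_lt_or_eq.mp (Nat.lt_succ_of_le hj') with h | h
            · exact ih (by omega) hprev j' (by omega)
            · subst h; exact hmem
      have hin : ∀ j, j < i → cvF k e j ∈ A := by
        intro j hj
        have hi0 : i ≠ 0 := by omega
        have hPi : P i := Nat.findGreatest_of_ne_zero hi.symm hi0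
        exact hpref (i - 1) (by omega) hPi.2 j (by omega)
      have hout : ∀ j, j ≤ n - k + 1 → i ≤ j → cvF k e j ∉ A := by
        intro j hj hij hmem
        have hPj : P (j + 1) := ⟨Nat.succ_pos j, by simpa using hmem⟩
        exact absurd hPj (Nat.findGreatest_is_greatest (P := P) (n := n - k + 2)
          (by omega) (by omega))
      refine ⟨i, by simpa using hile, Eq.symm ?_⟩
      ext x
      rw [mem_AfamF]
      constructor
      · intro hx
        have hxb : x < 2 * n + 4 := hAf.1 x hx
        refine ⟨hxb, ?_⟩
        by_cases hU : (x ≤ 2 * k + 2 ∧ x ≠ e) ∨ (x % 2 = 0 ∧ 2 * k + 4 ≤ x)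
        · rcases hU with h | h
          · exact Or.inl h
          · exact Or.inr (Or.inl h)
        · have htri : x = e ∨ (x % 2 = 1 ∧ 2 * k + 3 ≤ x) := by omega
          rcases htri with hxe | hodd
          · have h0 : 0 < i := by
              rcases Nat.eq_zero_or_pos i with h | h
              · have hne := hout 0 (by omega) (by omega)
                rw [show cvF k e 0 = e from rfl] at hne
                exact absurd (hxe ▸ hx) hne
              · exact h
            exact Or.inr (Or.inr (Or.inl ⟨h0, hxe⟩))
          · obtain ⟨j, hj1, hjx⟩ : ∃ j, 1 ≤ j ∧ x = 2 * k + 2 * j + 1 :=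
              ⟨(x - 2 * k - 1) / 2, by omega⟩
            have hjn : j ≤ n - k + 1 := by omega
            have hjA : cvF k e j ∈ A := by
              have hcv : cvF k e j = x := by rw [cvF, if_neg (by omega : ¬ j = 0)]; omega
              rwa [hcv]
            have hji : j < i := by
              by_contra h
              exact hout j hjn (by omega) hjA
            exact Or.inr (Or.inr (Or.inr ⟨by omega, by omega, by omega⟩))
      · rintro ⟨hxb, hd⟩
        have hUs : ((x ≤ 2 * k + 2 ∧ x ≠ e) ∨ (x % 2 = 0 ∧ 2 * k + 4 ≤ x)) → x ∈ A := by
          intro h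
          exact hAf.2 _ hsA _ (U_sub n k w hk e he hside1 hsidem x hxb h)
        rcases hd with h | h | ⟨h1, hxe⟩ | h
        · exact hUs (Or.inl h)
        · exact hUs (Or.inr h)
        · have := hin 0 h1
          rwa [show cvF k e 0 = e from rfl, ← hxe] at this
        · obtain ⟨j, hj1, hjx⟩ : ∃ j, 1 ≤ j ∧ x = 2 * k + 2 * j + 1 :=
            ⟨(x - 2 * k - 1) / 2, by omega⟩
          have hji : j < i := by omega
          have := hin j hji
          have hcv : cvF k e j = x := by rw [cvF, if_neg (by omega : ¬ j = 0)]; omega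
          rwa [hcv] at this
    · rintro ⟨i, hi, rfl⟩
      exact ⟨Afam_filter n k w hk e he hside1 hsidem i,
        s_mem_Afam n k w hk e he hside1 hsidem i⟩
  rw [hT, Set.ncard_image_of_injOn (Afam_injOn n k hk e he)]
  have : (Set.Iic (n - k + 2)) = (↑(Finset.Iic (n - k + 2)) : Set ℕ) := by simp
  rw [this, Set.ncard_coe_finset, Nat.card_Iic]

end SnakeCount


section SnakeOuter

open Relation

lemma snakeFilters_finite (m : ℕ) (w : ℕ → Letter) : (SnakeFilters m w).Finite := by
  apply Set.Finite.subset (Set.Finite.finite_subsets (Set.finite_Iio (2 * m + 4)))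
  intro A hA x hx
  exact hA.1 x hx

lemma cov_from_top {n : ℕ} {w : ℕ → Letter} {c : ℕ}
    (h : SnakeCov (n + 1) w (2 * n + 4) c) : c = snakeSide w (n + 1) := by
  generalize hA : 2 * n + 4 = A at h
  cases h with
  | cov10 => omega
  | cov20 => omega
  | cov31 => omega
  | cov32 => omega
  | covOdd m h1 h2 => omega
  | covBot m h1 h2 => omega
  | covSide m h1 h2 =>
      have hm : m = n + 1 := by omega
      rw [hm]

lemma le_from_top {n : ℕ} {w : ℕ → Letter} {b : ℕ}
    (h : SnakeLE (n + 1) w (2 * n + 4) b) :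
    b = 2 * n + 4 ∨ SnakeLE (n + 1) w (snakeSide w (n + 1)) b := by
  rcases h.cases_head with h | ⟨c, hc, hr⟩
  · exact Or.inl h.symm
  · rw [cov_from_top hc] at hr
    exact Or.inr hr

lemma snakeSide_le {w : ℕ → Letter} {m : ℕ} : snakeSide w m ≤ 2 * m := by
  rcases snakeSide_cases w m with h | h <;> omega

lemma cov_side_top (n : ℕ) (w : ℕ → Letter) :
    SnakeCov (n + 1) w (2 * n + 4) (snakeSide w (n + 1)) := by
  have h := SnakeCov.covSide (n := n + 1) (w := w) (n + 1) (by omega) le_rfl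
  have e : 2 * (n + 1) + 2 = 2 * n + 4 := by ring
  rwa [e] at h

theorem stmt2' (n k : ℕ) (w : ℕ → Letter) (hk1 : k ≤ n)
    (hk2 : k = 0 ∨ w k ≠ w (n + 1))
    (hk3 : ∀ j, k < j → j ≤ n → w j = w (n + 1)) :
    (SnakeFilters (n + 1) w).ncard = (SnakeFilters n w).ncard + ((n + 1 - k) + 3) := by
  classical
  -- the letter at index k+1 equals the letter at n+1
  have hwk1 : w (k + 1) = w (n + 1) := by
    rcases Nat.lt_or_ge (k + 1) (n + 1) with h | h
    · exact hk3 (k + 1) (by omega) (by omega)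
    · have : k + 1 = n + 1 := by omega
      rw [this]
  -- side facts
  have hside_cases := snakeSide_cases w (k + 1)
  set e := 4 * k + 3 - snakeSide w (k + 1) with hedef
  have hside1 : snakeSide w (k + 1) = 4 * k + 3 - e := by omega
  have he : e = 2 * k + 2 ∨ (e = 2 * k + 1 ∧ k = 0) := by
    rcases hside_cases with h | h
    · left; omega
    · right
      refine ⟨by omega, ?_⟩
      by_contra hk0
      have hkpos : 1 ≤ k := by omega
      have hturn : w k ≠ w (k + 1) := by
        rcases hk2 with h' | h'
        · omega
        · rw [hwk1]; exact h'
      have : snakeSide w (k + 1) = 2 * (k + 1) - 1 := by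
        unfold snakeSide
        rw [if_pos]
        right
        constructor
        · omega
        · simpa using hturn
      omega
  have hsidem : ∀ m, k + 2 ≤ m → m ≤ n + 1 → snakeSide w m = 2 * m := by
    intro m h1 h2
    have hw1 : w (m - 1) = w (n + 1) := by
      rcases Nat.lt_or_ge (m - 1) (n + 1) with h | h
      · exact hk3 (m - 1) (by omega) (by omega)
      · have : m - 1 = n + 1 := by omega
        rw [this]
    have hw2 : w m = w (n + 1) := by
      rcases Nat.lt_or_ge m (n + 1) with h | h
      · exact hk3 m (by omega) (by omega)
      · have : m = n + 1 := by omega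
        rw [this]
    unfold snakeSide
    rw [if_neg]
    push_neg
    constructor
    · intro hm; exact absurd hm (by omega)
    · intro _; rw [hw1, hw2]
  have hcore := snakeCore n k w hk1 e he hside1 hsidem
  set s := snakeSide w (n + 1) with hsdef
  have hsle : s ≤ 2 * n + 2 := by
    have := snakeSide_le (w := w) (m := n + 1); omega
  set T : Set (Set ℕ) := {A | A ∈ SnakeFilters n w ∧ s ∈ A} with hTdef
  -- finiteness
  have hFn : (SnakeFilters n w).Finite := snakeFilters_finite n w
  have hFT : T.Finite := hFn.subset (fun A hA => hA.1)
  have hFim : ((insert (2 * n + 4) : Set ℕ → Set ℕ) '' T).Finite := hFT.image _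
  -- the splitting
  have hsplit : SnakeFilters (n + 1) w =
      (SnakeFilters n w ∪ ((insert (2 * n + 4) : Set ℕ → Set ℕ) '' T)) ∪ {Set.Iio (2 * n + 6)} := by
    ext A
    constructor
    · intro hA
      by_cases h5 : (2 * n + 5) ∈ A
      · right
        have hAe : A = Set.Iio (2 * n + 6) := by
          ext x
          constructor
          · intro hx
            have := hA.1 x hx
            simpa [Set.mem_Iio] using by omega
          · intro hx
            simp only [Set.mem_Iio] at hx
            have hle : SnakeLE (n + 1) w (2 * n + 5) x := by
              have := snakeMin (n + 1) w (n + 2) (by omega) x (by omega)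
              have e2 : 2 * (n + 2) + 1 = 2 * n + 5 := by ring
              rwa [e2] at this
            exact hA.2 _ h5 x hle
        simp [hAe]
      · by_cases h4 : (2 * n + 4) ∈ A
        · left; right
          refine ⟨A \ {2 * n + 4}, ⟨⟨?_, ?_⟩, ?_⟩, ?_⟩
          · intro a ha
            simp only [Set.mem_diff, Set.mem_singleton_iff] at ha
            have := hA.1 a ha.1
            have hne5 : a ≠ 2 * n + 5 := fun h => h5 (h ▸ ha.1)
            omega
          · intro a ha b hle
            simp only [Set.mem_diff, Set.mem_singleton_iff] at ha ⊢
            have hb := hA.2 a ha.1 b (snakeLE_mono hle)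
            have hba : b ≤ a := snakeLE_le hle
            have ha4 : a < 2 * n + 4 := by
              have := hA.1 a ha.1
              have hne5 : a ≠ 2 * n + 5 := fun h => h5 (h ▸ ha.1)
              rcases Nat.lt_or_ge a (2 * n + 4) with h | h
              · exact h
              · omega
            exact ⟨hb, by omega⟩
          · have hs4 : s ∈ A := hA.2 _ h4 s (ReflTransGen.single (cov_side_top n w))
            simp only [Set.mem_diff, Set.mem_singleton_iff]
            exact ⟨hs4, by omega⟩
          · rw [Set.insert_diff_singleton, Set.insert_eq_self.mpr h4]
        · left; left
          constructor
          · intro a ha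
            have := hA.1 a ha
            have hne5 : a ≠ 2 * n + 5 := fun h => h5 (h ▸ ha)
            have hne4 : a ≠ 2 * n + 4 := fun h => h4 (h ▸ ha)
            omega
          · intro a ha b hle
            exact hA.2 a ha b (snakeLE_mono hle)
    · intro hA
      rcases hA with (hA | hA) | hA
      · constructor
        · intro a ha
          have := hA.1 a ha; omega
        · intro a ha b hle
          exact hA.2 a ha b (snakeLE_restrict hle (by have := hA.1 a ha; omega))
      · obtain ⟨B, hB, rfl⟩ := hA
        constructor
        · intro a ha
          rcases Set.mem_insert_iff.mp ha with rfl | ha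
          · omega
          · have := hB.1.1 a ha; omega
        · intro a ha b hle
          rcases Set.mem_insert_iff.mp ha with rfl | ha
          · rcases le_from_top hle with rfl | hsb
            · exact Set.mem_insert _ _
            · have hb4 : b < 2 * n + 4 := by
                have := snakeLE_le hsb; omega
              have hres : SnakeLE n w s b := snakeLE_restrict hsb (by omega)
              exact Set.mem_insert_of_mem _ (hB.1.2 s hB.2 b hres)
          · have ha4 : a < 2 * n + 4 := hB.1.1 a ha
            exact Set.mem_insert_of_mem _
              (hB.1.2 a ha b (snakeLE_restrict hle (by omega)))
      · simp only [Set.mem_singleton_iff] at hA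
        subst hA
        constructor
        · intro a ha
          have := Set.mem_Iio.mp ha; omega
        · intro a ha b hle
          have := snakeLE_le hle
          simp only [Set.mem_Iio] at ha ⊢
          omega
  -- disjointness
  have hnot4 : ∀ A ∈ SnakeFilters n w, (2 * n + 4) ∉ A := by
    intro A hA h
    have := hA.1 _ h; omega
  have hd1 : Disjoint (SnakeFilters n w) ((insert (2 * n + 4) : Set ℕ → Set ℕ) '' T) := by
    rw [Set.disjoint_left]
    rintro A hA ⟨B, hB, rfl⟩
    exact hnot4 _ hA (Set.mem_insert _ _)
  have hd2 : Disjoint (SnakeFilters n w ∪ ((insert (2 * n + 4) : Set ℕ → Set ℕ) '' T))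
      ({Set.Iio (2 * n + 6)} : Set (Set ℕ)) := by
    rw [Set.disjoint_right]
    rintro A hA
    simp only [Set.mem_singleton_iff] at hA
    subst hA
    rintro (h | ⟨B, hB, hBe⟩)
    · have := h.1 (2 * n + 5) (by simp [Set.mem_Iio])
      omega
    · have h5 : (2 * n + 5) ∈ insert (2 * n + 4) B := by
        rw [hBe]; simp [Set.mem_Iio]
      rcases Set.mem_insert_iff.mp h5 with h | h
      · omega
      · have := hB.1.1 _ h; omega
  -- injectivity of insert on T
  have hinj : Set.InjOn (insert (2 * n + 4) : Set ℕ → Set ℕ) T := by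
    intro B1 h1 B2 h2 heq
    have hn1 : (2 * n + 4) ∉ B1 := fun h => by have := h1.1.1 _ h; omega
    have hn2 : (2 * n + 4) ∉ B2 := fun h => by have := h2.1.1 _ h; omega
    ext x
    constructor
    · intro hx
      have : x ∈ insert (2 * n + 4) B2 := heq ▸ Set.mem_insert_of_mem _ hx
      rcases Set.mem_insert_iff.mp this with rfl | h
      · exact absurd hx hn1
      · exact h
    · intro hx
      have : x ∈ insert (2 * n + 4) B1 := heq ▸ Set.mem_insert_of_mem _ hx
      rcases Set.mem_insert_iff.mp this with rfl | h
      · exact absurd hx hn2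
      · exact h
  rw [hsplit, Set.ncard_union_eq hd2 (hFn.union hFim) (Set.finite_singleton _),
    Set.ncard_union_eq hd1 hFn hFim, Set.ncard_image_of_injOn hinj,
    Set.ncard_singleton]
  rw [hTdef, hsdef] at *
  rw [hcore]
  omega

end SnakeOuter


theorem stmt2 (n k : ℕ) (w : ℕ → Letter) (hk1 : k ≤ n)
    (hk2 : k = 0 ∨ w k ≠ w (n + 1))
    (hk3 : ∀ j, k < j → j ≤ n → w j = w (n + 1)) :
    (SnakeFilters (n + 1) w).ncard = (SnakeFilters n w).ncard + ((n + 1 - k) + 3) :=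
  stmt2' n k w hk1 hk2 hk3
end

section
/- Let w = w_0w_1⋯w_n be a generalized snake word of length n ≥ 1, let k be the largest index with w_k ≠ w_n (0 ≤ k ≤ n−1), and set v_m := e(P(w_0⋯w_m)) for 0 ≤ m ≤ n and v_{−1} := 1. Then v_n = Cat(n−k+1)·v_k + (Cat(n−k+2) − 2·Cat(n−k+1))·v_{k−1}, where Cat(m) = (1/(m+1))·binomial(2m, m) is the m-th Catalan number; equivalently (avoiding subtraction), v_n + 2·Cat(n−k+1)·v_{k−1} = Cat(n−k+1)·v_k + Cat(n−k+2)·v_{k−1}. (Here v_0 = e(P(ε)) = 2.) -/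
def pv : ℕ → ℕ → ℕ
  | 0, _ => 1
  | (r+1), 0 => pv r 1 + pv r 0
  | (r+1), (j+1) => pv (r+1) j + pv r (j+2)

lemma pv_zero (j : ℕ) : pv 0 j = 1 := by simp [pv]
lemma pv_succ_zero (r : ℕ) : pv (r+1) 0 = pv r 1 + pv r 0 := by simp [pv]
lemma pv_succ_succ (r j : ℕ) : pv (r+1) (j+1) = pv (r+1) j + pv r (j+2) := by
  conv_lhs => rw [pv]

lemma pascal (n k : ℕ) : (n+1).choose (k+1) = n.choose k + n.choose (k+1) :=
  Nat.choose_succ_succ n k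

lemma pv_one (j : ℕ) : pv 1 j = j + 2 := by
  induction j with
  | zero => norm_num [pv]
  | succ j ih => rw [pv_succ_succ, ih, pv_zero]

lemma pv_two (j : ℕ) : pv 2 j + 1 = (j+4).choose 2 := by
  induction j with
  | zero => norm_num [pv]; decide
  | succ j ih =>
    rw [pv_succ_succ, pv_one, show (1:ℕ)+1 = 2 from rfl]
    have p : (j+5).choose 2 = (j+4).choose 1 + (j+4).choose 2 := by
      have h := pascal (j+4) 1
      rw [show j+4+1 = j+5 by omega] at h
      exact h
    have h1 : (j+4).choose 1 = j + 4 := Nat.choose_one_right _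
    rw [show j+1+4 = j+5 by omega]
    omega

lemma pv_cf : ∀ r j, pv (r+2) j + (2*r+j+4).choose r = (2*r+j+4).choose (r+2) := by
  intro r
  induction r with
  | zero =>
    intro j
    have := pv_two j
    simpa [show 2*0+j+4 = j+4 by omega] using this
  | succ r ih =>
    intro j
    induction j with
    | zero =>
      have e0 : pv (r+3) 0 = pv (r+2) 1 + pv (r+2) 0 := pv_succ_zero (r+2)
      have A1 : pv (r+2) 1 + (2*r+5).choose r = (2*r+5).choose (r+2) := by
        have h := ih 1; rw [show 2*r+1+4 = 2*r+5 by omega] at h; exact h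
      have A2 : pv (r+2) 0 + (2*r+4).choose r = (2*r+4).choose (r+2) := by
        have h := ih 0; rw [show 2*r+0+4 = 2*r+4 by omega] at h; exact h
      have P1 : (2*r+6).choose (r+3) = (2*r+5).choose (r+2) + (2*r+5).choose (r+3) := by
        have h := pascal (2*r+5) (r+2)
        rw [show 2*r+5+1 = 2*r+6 by omega, show r+2+1 = r+3 by omega] at h
        exact h
      have S1 : (2*r+5).choose (r+3) = (2*r+5).choose (r+2) := by
        have h := Nat.choose_symm (n := 2*r+5) (k := r+2) (by omega)
        rw [show 2*r+5-(r+2) = r+3 by omega] at h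
        exact h
      have P2 : (2*r+6).choose (r+1) = (2*r+5).choose r + (2*r+5).choose (r+1) := by
        have h := pascal (2*r+5) r
        rw [show 2*r+5+1 = 2*r+6 by omega] at h
        exact h
      have P3 : (2*r+5).choose (r+2) = (2*r+4).choose (r+1) + (2*r+4).choose (r+2) := by
        have h := pascal (2*r+4) (r+1)
        rw [show 2*r+4+1 = 2*r+5 by omega, show r+1+1 = r+2 by omega] at h
        exact h
      have P4 : (2*r+5).choose (r+1) = (2*r+4).choose r + (2*r+4).choose (r+1) := by
        have h := pascal (2*r+4) r
        rw [show 2*r+4+1 = 2*r+5 by omega] at h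
        exact h
      rw [show 2*(r+1)+0+4 = 2*r+6 by omega, show r+1+2 = r+3 by omega, e0]
      omega
    | succ j ihj =>
      have e0 : pv (r+3) (j+1) = pv (r+3) j + pv (r+2) (j+2) := pv_succ_succ (r+2) j
      have A1 : pv (r+3) j + (2*r+j+6).choose (r+1) = (2*r+j+6).choose (r+3) := by
        have h := ihj
        rw [show 2*(r+1)+j+4 = 2*r+j+6 by omega, show r+1+2 = r+3 by omega] at h
        exact h
      have A2 : pv (r+2) (j+2) + (2*r+j+6).choose r = (2*r+j+6).choose (r+2) := by
        have h := ih (j+2); rw [show 2*r+(j+2)+4 = 2*r+j+6 by omega] at h; exact h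
      have P1 : (2*r+j+7).choose (r+3) = (2*r+j+6).choose (r+2) + (2*r+j+6).choose (r+3) := by
        have h := pascal (2*r+j+6) (r+2)
        rw [show 2*r+j+6+1 = 2*r+j+7 by omega, show r+2+1 = r+3 by omega] at h
        exact h
      have P2 : (2*r+j+7).choose (r+1) = (2*r+j+6).choose r + (2*r+j+6).choose (r+1) := by
        have h := pascal (2*r+j+6) r
        rw [show 2*r+j+6+1 = 2*r+j+7 by omega] at h
        exact h
      rw [show 2*(r+1)+(j+1)+4 = 2*r+j+7 by omega, show r+1+2 = r+3 by omega, e0]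
      omega

lemma pv_catalan : ∀ d, pv d 0 = catalan (d+1) := by
  intro d
  match d with
  | 0 => simp [pv_zero, catalan_one]
  | 1 => rw [pv_one, catalan_two]
  | (r+2) =>
    have cf : pv (r+2) 0 + (2*(r+2)).choose r = (2*(r+2)).choose (r+2) := by
      have h := pv_cf r 0
      rw [show 2*r+0+4 = 2*(r+2) by omega] at h
      exact h
    set d := r + 2 with hd
    set C0 := (2*d).choose d with hC0
    set C' := (2*d).choose (d-1) with hC'
    set X2 := (2*d).choose (d-2) with hX2
    set C1 := (2*d+2).choose (d+1) with hC1
    have f4 : (d+2) * catalan (d+1) = C1 := by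
      have h := succ_mul_catalan_eq_centralBinom (d+1)
      rw [Nat.centralBinom] at h
      rw [show d+2 = d+1+1 by omega, h, show 2*(d+1) = 2*d+2 by omega]
    have f1 : C0 * d = C' * (d+1) := by
      have h := Nat.choose_succ_right_eq (2*d) (d-1)
      rw [show d-1+1 = d by omega, show 2*d - (d-1) = d+1 by omega] at h
      exact h
    have f2 : C' * (d-1) = X2 * (d+2) := by
      have h := Nat.choose_succ_right_eq (2*d) (d-2)
      rw [show d-2+1 = d-1 by omega, show 2*d - (d-2) = d+2 by omega] at h
      exact h
    have f3 : C1 = 2 * C0 + 2 * C' := by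
      have p1 : (2*d+2).choose (d+1) = (2*d+1).choose d + (2*d+1).choose (d+1) := by
        have h := pascal (2*d+1) d
        rw [show 2*d+1+1 = 2*d+2 by omega] at h
        exact h
      have p2 : (2*d+1).choose d = (2*d).choose (d-1) + (2*d).choose d := by
        have h := pascal (2*d) (d-1)
        rw [show d-1+1 = d by omega] at h
        exact h
      have p3 : (2*d+1).choose (d+1) = (2*d).choose d + (2*d).choose (d+1) := pascal (2*d) d
      have s1 : (2*d).choose (d+1) = (2*d).choose (d-1) := by
        have h := Nat.choose_symm (n := 2*d) (k := d+1) (by omega)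
        rw [show 2*d-(d+1) = d-1 by omega] at h
        exact h.symm
      rw [hC1, hC0, hC', p1, p2, p3, s1]
      ring
    have key : (d+2) * (catalan (d+1) + X2) = (d+2) * C0 := by
      calc (d+2) * (catalan (d+1) + X2) = (d+2)*catalan (d+1) + X2*(d+2) := by ring
        _ = C1 + C'*(d-1) := by rw [f4, f2]
        _ = 2*C0 + 2*C' + C'*(d-1) := by rw [f3]
        _ = 2*C0 + C'*(2 + (d-1)) := by ring
        _ = 2*C0 + C'*(d+1) := by rw [show 2+(d-1) = d+1 by omega]
        _ = 2*C0 + C0*d := by rw [← f1]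
        _ = (d+2) * C0 := by ring
    have hcc := Nat.eq_of_mul_eq_mul_left (show 0 < d+2 by omega) key
    have hr : (2*d).choose r = X2 := by rw [hX2, show d - 2 = r by omega]
    rw [hr] at cf
    omega
set_option maxHeartbeats 1000000

namespace SnakeProof

variable (n : ℕ) (w : ℕ → Letter)

/-- monotone equivalences (linear extensions) of the restriction of `P(w)` to `s`. -/
def Mono (s : Finset ℕ) (f : {x // x ∈ s} ≃ Fin s.card) : Prop :=
  ∀ a b : {x // x ∈ s}, SnakeLE n w a.1 b.1 → f a ≤ f b

noncomputable def E (s : Finset ℕ) : ℕ :=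
  Nat.card {f : {x // x ∈ s} ≃ Fin s.card // Mono n w s f}

lemma E_empty : E n w ∅ = 1 := by
  have he : IsEmpty {x : ℕ // x ∈ (∅ : Finset ℕ)} :=
    ⟨fun x => (Finset.notMem_empty x.1 x.2).elim⟩
  haveI : IsEmpty (Fin (∅ : Finset ℕ).card) := by
    rw [Finset.card_empty]; infer_instance
  haveI : Unique {f : {x // x ∈ (∅ : Finset ℕ)} ≃ Fin (∅ : Finset ℕ).card //
      Mono n w ∅ f} := by
    refine ⟨⟨⟨Equiv.equivOfIsEmpty _ _, ?_⟩⟩, ?_⟩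
    · intro a; exact he.elim a
    · intro f
      apply Subtype.ext
      apply Equiv.ext
      intro a; exact he.elim a
  rw [E, Nat.card_unique]

lemma up_closed_le {s : Finset ℕ} (hup : ∀ a ∈ s, ∀ b, SnakeCov n w a b → b ∈ s) :
    ∀ a ∈ s, ∀ b, SnakeLE n w a b → b ∈ s := by
  intro a ha b h
  induction h with
  | refl => exact ha
  | tail h1 h2 ih => exact hup _ ih _ h2

lemma minimal_of_no_cover {s : Finset ℕ} (hup : ∀ a ∈ s, ∀ b, SnakeCov n w a b → b ∈ s)
    {x : ℕ} (hnc : ∀ z, SnakeCov n w z x → z ∉ s) :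
    ∀ y ∈ s, SnakeLE n w y x → y = x := by
  intro y hy h
  cases h with
  | refl => rfl
  | tail h1 h2 =>
    exact absurd (up_closed_le n w hup _ hy _ h1) (hnc _ h2)

lemma symm_zero_minimal {s : Finset ℕ} {f : {x // x ∈ s} ≃ Fin s.card}
    (hf : Mono n w s f) (hc : 0 < s.card) :
    ∀ y ∈ s, SnakeLE n w y (f.symm ⟨0, hc⟩).1 → y = (f.symm ⟨0, hc⟩).1 := by
  intro y hy h
  have h1 : f ⟨y, hy⟩ ≤ f (f.symm ⟨0, hc⟩) := hf _ _ h
  rw [Equiv.apply_symm_apply] at h1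
  have h2 : f ⟨y, hy⟩ = ⟨0, hc⟩ := le_antisymm h1 (by rw [Fin.le_def]; exact Nat.zero_le _)
  have h3 := congrArg f.symm h2
  rw [Equiv.symm_apply_apply] at h3
  exact congrArg Subtype.val h3

lemma fiber_card (s : Finset ℕ) (x : ℕ) (hx : x ∈ s)
    (hmin : ∀ y ∈ s, SnakeLE n w y x → y = x) :
    Nat.card {F : {f : {y // y ∈ s} ≃ Fin s.card // Mono n w s f} //
      (F.1.symm ⟨0, Finset.card_pos.2 ⟨x, hx⟩⟩).1 = x} = E n w (s.erase x) := by
  have hc : (s.erase x).card + 1 = s.card := Finset.card_erase_add_one hx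
  set c := (s.erase x).card with hcdef
  set i0 : Fin s.card := ⟨0, Finset.card_pos.2 ⟨x, hx⟩⟩ with hi0
  have key : ∀ (F : {f : {y // y ∈ s} ≃ Fin s.card // Mono n w s f}),
      (F.1.symm i0).1 = x → F.1 ⟨x, hx⟩ = i0 := by
    intro F hF
    have h1 : (⟨x, hx⟩ : {y // y ∈ s}) = F.1.symm i0 := Subtype.ext hF.symm
    rw [h1, Equiv.apply_symm_apply]
  have valpos : ∀ (F : {f : {y // y ∈ s} ≃ Fin s.card // Mono n w s f}),
      (F.1.symm i0).1 = x → ∀ (y : ℕ) (hy : y ∈ s), y ≠ x →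
      0 < (F.1 ⟨y, hy⟩).1 := by
    intro F hF y hy hyx
    rcases Nat.eq_zero_or_pos (F.1 ⟨y, hy⟩).1 with h | h
    · exfalso
      have h1 : F.1 ⟨y, hy⟩ = i0 := Fin.ext h
      have h2 := congrArg F.1.symm h1
      rw [Equiv.symm_apply_apply] at h2
      exact hyx (by rw [← hF, ← h2])
    · exact h
  have memer : ∀ (F : {f : {y // y ∈ s} ≃ Fin s.card // Mono n w s f}),
      (F.1.symm i0).1 = x → ∀ (j : Fin c),
      (F.1.symm ⟨j.1 + 1, by omega⟩).1 ∈ s.erase x := by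
    intro F hF j
    rw [Finset.mem_erase]
    refine ⟨?_, (F.1.symm ⟨j.1+1, by omega⟩).2⟩
    intro hh
    have h1 : F.1.symm ⟨j.1+1, by omega⟩ = (⟨x, hx⟩ : {y // y ∈ s}) := Subtype.ext hh
    have h2 : F.1.symm i0 = (⟨x, hx⟩ : {y // y ∈ s}) := Subtype.ext hF
    have h3 := F.1.symm.injective (h1.trans h2.symm)
    have h4 := congrArg Fin.val h3
    simp only [hi0] at h4
    omega
  let φ : {F : {f : {y // y ∈ s} ≃ Fin s.card // Mono n w s f} //
      (F.1.symm i0).1 = x} →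
      {g : {y // y ∈ s.erase x} ≃ Fin c // Mono n w (s.erase x) g} :=
    fun F => ⟨⟨fun y => ⟨(F.1.1 ⟨y.1, Finset.mem_of_mem_erase y.2⟩).1 - 1, by
        have h1 := (F.1.1 ⟨y.1, Finset.mem_of_mem_erase y.2⟩).2
        have h2 := valpos F.1 F.2 y.1 (Finset.mem_of_mem_erase y.2)
          (Finset.ne_of_mem_erase y.2)
        omega⟩,
      fun j => ⟨(F.1.1.symm ⟨j.1 + 1, by omega⟩).1, memer F.1 F.2 j⟩,
      by
        intro y
        apply Subtype.ext
        have h2 := valpos F.1 F.2 y.1 (Finset.mem_of_mem_erase y.2)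
          (Finset.ne_of_mem_erase y.2)
        have h3 : (⟨(F.1.1 ⟨y.1, Finset.mem_of_mem_erase y.2⟩).1 - 1 + 1, by omega⟩ :
            Fin s.card) = F.1.1 ⟨y.1, Finset.mem_of_mem_erase y.2⟩ := Fin.ext (by
          simp only []
          omega)
        simp only [h3, Equiv.symm_apply_apply],
      by
        intro j
        apply Fin.ext
        have h3 : (⟨(F.1.1.symm ⟨j.1 + 1, by omega⟩).1,
            Finset.mem_of_mem_erase (memer F.1 F.2 j)⟩ : {y // y ∈ s}) =
            F.1.1.symm ⟨j.1+1, by omega⟩ := Subtype.ext rfl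
        simp only [h3, Equiv.apply_symm_apply]
        omega⟩,
      by
        intro a b hab
        have h1 := F.1.2 ⟨a.1, Finset.mem_of_mem_erase a.2⟩
          ⟨b.1, Finset.mem_of_mem_erase b.2⟩ hab
        have p1 := valpos F.1 F.2 a.1 (Finset.mem_of_mem_erase a.2)
          (Finset.ne_of_mem_erase a.2)
        rw [Fin.le_def] at h1 ⊢
        simp only [Equiv.coe_fn_mk]
        omega⟩
  have φval : ∀ F (y : {y // y ∈ s.erase x}),
      ((φ F).1 y).1 = (F.1.1 ⟨y.1, Finset.mem_of_mem_erase y.2⟩).1 - 1 :=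
    fun F y => rfl
  have hbij : Function.Bijective φ := by
    constructor
    · intro F1 F2 h
      apply Subtype.ext; apply Subtype.ext; apply Equiv.ext
      intro z
      by_cases hz : z.1 = x
      · have hz' : z = ⟨x, hx⟩ := Subtype.ext hz
        rw [hz', key F1.1 F1.2, key F2.1 F2.2]
      · have hmem : z.1 ∈ s.erase x := Finset.mem_erase.2 ⟨hz, z.2⟩
        have h5 : ((φ F1).1 ⟨z.1, hmem⟩).1 = ((φ F2).1 ⟨z.1, hmem⟩).1 := by rw [h]
        rw [φval F1 ⟨z.1, hmem⟩, φval F2 ⟨z.1, hmem⟩] at h5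
        have p1 := valpos F1.1 F1.2 z.1 z.2 hz
        have p2 := valpos F2.1 F2.2 z.1 z.2 hz
        apply Fin.ext
        have e1 : (⟨z.1, Finset.mem_of_mem_erase hmem⟩ : {y // y ∈ s}) = z :=
          Subtype.ext rfl
        have e2 : (⟨z.1, z.2⟩ : {y // y ∈ s}) = z := rfl
        rw [e1] at h5
        rw [e2] at p1 p2
        omega
    · intro G
      refine ⟨⟨⟨⟨fun z => if h : z.1 = x then i0 else
          ⟨(G.1 ⟨z.1, Finset.mem_erase.2 ⟨h, z.2⟩⟩).1 + 1, by
            have h9 := (G.1 ⟨z.1, Finset.mem_erase.2 ⟨h, z.2⟩⟩).2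
            omega⟩,
        fun i => if h : i.1 = 0 then ⟨x, hx⟩ else
          ⟨(G.1.symm ⟨i.1 - 1, by have h9 := i.2; omega⟩).1,
            Finset.mem_of_mem_erase (G.1.symm ⟨i.1 - 1, by have h9 := i.2; omega⟩).2⟩,
        ?_, ?_⟩, ?_⟩, ?_⟩, ?_⟩
      · intro z
        dsimp only
        by_cases h : z.1 = x
        · simp only [dif_pos h, dif_pos (show (i0 : Fin s.card).val = 0 from rfl)]
          exact (Subtype.ext h.symm : (⟨x, hx⟩ : {y // y ∈ s}) = z)
        · rw [dif_neg h]
          have hne : ((⟨(G.1 ⟨z.1, Finset.mem_erase.2 ⟨h, z.2⟩⟩).1 + 1, by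
              have h9 := (G.1 ⟨z.1, Finset.mem_erase.2 ⟨h, z.2⟩⟩).2; omega⟩ :
              Fin s.card)).1 ≠ 0 := by simp
          rw [dif_neg hne]
          apply Subtype.ext
          simp only [Nat.add_sub_cancel]
          have e : (⟨(G.1 ⟨z.1, Finset.mem_erase.2 ⟨h, z.2⟩⟩).1, by
              have h9 := (G.1 ⟨z.1, Finset.mem_erase.2 ⟨h, z.2⟩⟩).2; omega⟩ : Fin c) =
              G.1 ⟨z.1, Finset.mem_erase.2 ⟨h, z.2⟩⟩ := Fin.ext rfl
          rw [e, Equiv.symm_apply_apply]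
      · intro i
        dsimp only
        by_cases h : i.1 = 0
        · rw [dif_pos h]
          rw [dif_pos rfl]
          exact Fin.ext (by rw [hi0]; exact h.symm)
        · rw [dif_neg h]
          have hne : (G.1.symm ⟨i.1 - 1, by have h9 := i.2; omega⟩).1 ≠ x :=
            Finset.ne_of_mem_erase (G.1.symm ⟨i.1 - 1, by have h9 := i.2; omega⟩).2
          rw [dif_neg hne]
          apply Fin.ext
          have e : (⟨(G.1.symm ⟨i.1 - 1, by have h9 := i.2; omega⟩).1,
              Finset.mem_erase.2 ⟨hne, Finset.mem_of_mem_erase (G.1.symm ⟨i.1 - 1, by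
                have h9 := i.2; omega⟩).2⟩⟩ : {y // y ∈ s.erase x}) =
              G.1.symm ⟨i.1 - 1, by have h9 := i.2; omega⟩ := Subtype.ext rfl
          rw [Fin.val_mk, e, Equiv.apply_symm_apply]
          simp only []
          omega
      · intro a b hab
        by_cases ha : a.1 = x
        · simp only [Equiv.coe_fn_mk, dif_pos ha]
          rw [Fin.le_def, hi0]
          exact Nat.zero_le _
        · have hb : b.1 ≠ x := fun hb => ha (hmin a.1 a.2 (hb ▸ hab))
          simp only [Equiv.coe_fn_mk, dif_neg ha, dif_neg hb]
          have h7 := G.2 ⟨a.1, Finset.mem_erase.2 ⟨ha, a.2⟩⟩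
            ⟨b.1, Finset.mem_erase.2 ⟨hb, b.2⟩⟩ hab
          rw [Fin.le_def] at h7 ⊢
          simpa using h7
      · rfl
      · apply Subtype.ext
        apply Equiv.ext
        intro y
        apply Fin.ext
        rw [φval]
        simp only [Equiv.coe_fn_mk]
        rw [dif_neg (Finset.ne_of_mem_erase y.2)]
        simp
  calc Nat.card {F : {f : {y // y ∈ s} ≃ Fin s.card // Mono n w s f} //
        (F.1.symm i0).1 = x}
      = Nat.card {g : {y // y ∈ s.erase x} ≃ Fin c // Mono n w (s.erase x) g} :=
        Nat.card_eq_of_bijective φ hbij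
    _ = E n w (s.erase x) := rfl

end SnakeProof
namespace SnakeProof

variable (n : ℕ) (w : ℕ → Letter)

lemma E_one (s : Finset ℕ) (x : ℕ) (hx : x ∈ s)
    (hmin : ∀ y ∈ s, SnakeLE n w y x → y = x)
    (hall : ∀ y ∈ s, (∀ z ∈ s, SnakeLE n w z y → z = y) → y = x) :
    E n w s = E n w (s.erase x) := by
  have hpos : 0 < s.card := Finset.card_pos.2 ⟨x, hx⟩
  have hall' : ∀ F : {f : {y // y ∈ s} ≃ Fin s.card // Mono n w s f},
      (F.1.symm ⟨0, Finset.card_pos.2 ⟨x, hx⟩⟩).1 = x := by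
    intro F
    exact hall _ (F.1.symm _).2 (symm_zero_minimal n w F.2 _)
  calc E n w s = Nat.card {F : {f : {y // y ∈ s} ≃ Fin s.card // Mono n w s f} //
        (F.1.symm ⟨0, Finset.card_pos.2 ⟨x, hx⟩⟩).1 = x} :=
        (Nat.card_congr (Equiv.subtypeUnivEquiv hall')).symm
    _ = E n w (s.erase x) := fiber_card n w s x hx hmin

lemma E_two (s : Finset ℕ) (a b : ℕ) (ha : a ∈ s) (hb : b ∈ s) (hab : a ≠ b)
    (hmina : ∀ y ∈ s, SnakeLE n w y a → y = a)
    (hminb : ∀ y ∈ s, SnakeLE n w y b → y = b)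
    (hall : ∀ y ∈ s, (∀ z ∈ s, SnakeLE n w z y → z = y) → y = a ∨ y = b) :
    E n w s = E n w (s.erase a) + E n w (s.erase b) := by
  haveI : Finite {f : {y // y ∈ s} ≃ Fin s.card // Mono n w s f} := by
    infer_instance
  have hdich : ∀ F : {f : {y // y ∈ s} ≃ Fin s.card // Mono n w s f},
      (F.1.symm ⟨0, Finset.card_pos.2 ⟨a, ha⟩⟩).1 = a ∨
      (F.1.symm ⟨0, Finset.card_pos.2 ⟨a, ha⟩⟩).1 = b := by
    intro F
    exact hall _ (F.1.symm _).2 (symm_zero_minimal n w F.2 _)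
  have hiff : ∀ F : {f : {y // y ∈ s} ≃ Fin s.card // Mono n w s f},
      ¬ (F.1.symm ⟨0, Finset.card_pos.2 ⟨a, ha⟩⟩).1 = a ↔
      (F.1.symm ⟨0, Finset.card_pos.2 ⟨b, hb⟩⟩).1 = b := by
    intro F
    constructor
    · intro h
      rcases hdich F with h1 | h1
      · exact absurd h1 h
      · exact h1
    · intro h h2
      exact hab (h2.symm.trans h)
  calc E n w s
      = Nat.card ({F : {f : {y // y ∈ s} ≃ Fin s.card // Mono n w s f} //
          (F.1.symm ⟨0, Finset.card_pos.2 ⟨a, ha⟩⟩).1 = a} ⊕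
        {F : {f : {y // y ∈ s} ≃ Fin s.card // Mono n w s f} //
          ¬ (F.1.symm ⟨0, Finset.card_pos.2 ⟨a, ha⟩⟩).1 = a}) :=
        (Nat.card_congr (Equiv.sumCompl _)).symm
    _ = Nat.card {F : {f : {y // y ∈ s} ≃ Fin s.card // Mono n w s f} //
          (F.1.symm ⟨0, Finset.card_pos.2 ⟨a, ha⟩⟩).1 = a} +
        Nat.card {F : {f : {y // y ∈ s} ≃ Fin s.card // Mono n w s f} //
          ¬ (F.1.symm ⟨0, Finset.card_pos.2 ⟨a, ha⟩⟩).1 = a} := Nat.card_sum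
    _ = E n w (s.erase a) + E n w (s.erase b) := by
        rw [fiber_card n w s a ha hmina]
        congr 1
        rw [Nat.card_congr (Equiv.subtypeEquivRight hiff)]
        exact fiber_card n w s b hb hminb

lemma E_chain : ∀ (N : ℕ) (s : Finset ℕ), s.card = N →
    (∀ a ∈ s, ∀ b, SnakeCov n w a b → b ∈ s) →
    (∀ a ∈ s, ∀ b ∈ s, SnakeLE n w a b ∨ SnakeLE n w b a) →
    E n w s = 1 := by
  intro N
  induction N with
  | zero =>
    intro s hs _ _
    rw [Finset.card_eq_zero.1 hs, E_empty]
  | succ N ih =>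
    intro s hs hup htot
    have hne : s.Nonempty := Finset.card_pos.1 (by omega)
    set x := s.max' hne with hxdef
    have hx : x ∈ s := s.max'_mem hne
    have hmin : ∀ y ∈ s, SnakeLE n w y x → y = x := by
      intro y hy h
      have h1 := snakeLE_le h
      have h2 := Finset.le_max' s y hy
      omega
    have hall : ∀ y ∈ s, (∀ z ∈ s, SnakeLE n w z y → z = y) → y = x := by
      intro y hy hminy
      rcases htot x hx y hy with h | h
      · exact (hminy x hx h).symm
      · have h1 := snakeLE_le h
        have h2 := Finset.le_max' s y hy
        omega
    rw [E_one n w s x hx hmin hall]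
    apply ih
    · rw [Finset.card_erase_of_mem hx, hs]; rfl
    · intro a ha2 b hcov
      rw [Finset.mem_erase] at ha2 ⊢
      have hba := snakeCov_lt hcov
      have hax := Finset.le_max' s a ha2.2
      refine ⟨by omega, hup a ha2.2 b hcov⟩
    · intro a ha2 b hb2
      exact htot a (Finset.mem_of_mem_erase ha2) b (Finset.mem_of_mem_erase hb2)

end SnakeProof
namespace SnakeProof

variable (n : ℕ) (w : ℕ → Letter)

lemma snakeCov_mono {m : ℕ} (hmn : m ≤ n) {a b : ℕ} (h : SnakeCov m w a b) :
    SnakeCov n w a b := by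
  cases h with
  | cov10 => exact SnakeCov.cov10
  | cov20 => exact SnakeCov.cov20
  | cov31 => exact SnakeCov.cov31
  | cov32 => exact SnakeCov.cov32
  | covOdd m' h1 h2 => exact SnakeCov.covOdd m' h1 (by omega)
  | covBot m' h1 h2 => exact SnakeCov.covBot m' h1 (by omega)
  | covSide m' h1 h2 => exact SnakeCov.covSide m' h1 (by omega)

lemma snakeCov_trunc {m : ℕ} (hmn : m ≤ n) {a b : ℕ} (ha : a ≤ 2*m+3)
    (h : SnakeCov n w a b) : SnakeCov m w a b := by
  cases h with
  | cov10 => exact SnakeCov.cov10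
  | cov20 => exact SnakeCov.cov20
  | cov31 => exact SnakeCov.cov31
  | cov32 => exact SnakeCov.cov32
  | covOdd m' h1 h2 => exact SnakeCov.covOdd m' h1 (by omega)
  | covBot m' h1 h2 => exact SnakeCov.covBot m' h1 (by omega)
  | covSide m' h1 h2 => exact SnakeCov.covSide m' h1 (by omega)

lemma snakeLE_mono {m : ℕ} (hmn : m ≤ n) {a b : ℕ} (h : SnakeLE m w a b) :
    SnakeLE n w a b := by
  induction h with
  | refl => exact Relation.ReflTransGen.refl
  | tail h1 h2 ih => exact Relation.ReflTransGen.tail ih (snakeCov_mono n w hmn h2)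

lemma snakeLE_of_ambient {m : ℕ} (hmn : m ≤ n) {a b : ℕ} (h : SnakeLE n w a b)
    (ha : a ≤ 2*m+3) : SnakeLE m w a b := by
  revert ha
  induction h using Relation.ReflTransGen.head_induction_on with
  | refl => intro _; exact Relation.ReflTransGen.refl
  | head hcov htail ih =>
    intro ha
    have hlt := snakeCov_lt hcov
    exact Relation.ReflTransGen.head (snakeCov_trunc n w hmn ha hcov) (ih (by omega))

lemma linExtCount_eq_E {m : ℕ} (hmn : m ≤ n) :
    linExtCount m w = E n w (Finset.range (2*m+4)) := by
  have hcr : (Finset.range (2*m+4)).card = 2*m+4 := Finset.card_range _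
  let ε : {x // x ∈ Finset.range (2*m+4)} ≃ Fin (2*m+4) :=
    ⟨fun y => ⟨y.1, Finset.mem_range.1 y.2⟩, fun i => ⟨i.1, Finset.mem_range.2 i.2⟩,
      fun y => rfl, fun i => rfl⟩
  let κ : Fin ((Finset.range (2*m+4)).card) ≃ Fin (2*m+4) := finCongr hcr
  let Φ : {F : {x // x ∈ Finset.range (2*m+4)} ≃ Fin ((Finset.range (2*m+4)).card) //
      Mono n w (Finset.range (2*m+4)) F} ≃
      {f : SnakePoset m w ≃ Fin (2*m+4) //
        ∀ a b : SnakePoset m w, a ≤ b → f a ≤ f b} :=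
    { toFun := fun F => ⟨ε.symm.trans (F.1.trans κ), by
        intro a b hab
        have h1 : SnakeLE m w (a : Fin (2*m+4)).1 (b : Fin (2*m+4)).1 := hab
        have h2 : SnakeLE n w (a : Fin (2*m+4)).1 (b : Fin (2*m+4)).1 :=
          snakeLE_mono n w hmn h1
        have h3 := F.2 (ε.symm a) (ε.symm b) h2
        show κ (F.1 (ε.symm a)) ≤ κ (F.1 (ε.symm b))
        rw [Fin.le_def] at h3 ⊢
        exact h3⟩,
      invFun := fun f => ⟨ε.trans (f.1.trans κ.symm), by
        intro a b hab
        have ha : a.1 ≤ 2*m+3 := by have := Finset.mem_range.1 a.2; omega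
        have h1 : SnakeLE m w a.1 b.1 := snakeLE_of_ambient n w hmn hab ha
        have h3 := f.2 (ε a) (ε b) h1
        show κ.symm (f.1 (ε a)) ≤ κ.symm (f.1 (ε b))
        rw [Fin.le_def] at h3 ⊢
        exact h3⟩,
      left_inv := by
        intro F
        apply Subtype.ext
        apply Equiv.ext
        intro y
        show κ.symm (κ (F.1 (ε.symm (ε y)))) = F.1 y
        rw [Equiv.symm_apply_apply, Equiv.symm_apply_apply]
      right_inv := by
        intro f
        apply Subtype.ext
        apply Equiv.ext
        intro y
        show κ (κ.symm (f.1 (ε (ε.symm y)))) = f.1 y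
        rw [Equiv.apply_symm_apply]; exact congrArg f.1 (ε.apply_symm_apply y) }
  rw [linExtCount, E]
  exact (Nat.card_congr Φ).symm

end SnakeProof
namespace SnakeProof

variable (n : ℕ) (w : ℕ → Letter)

lemma side_cases (m : ℕ) : snakeSide w m = 2*m-1 ∨ snakeSide w m = 2*m := by
  unfold snakeSide
  split
  · left; rfl
  · right; rfl

lemma cov_inv {a b : ℕ} (h : SnakeCov n w a b) :
    (a = 1 ∧ b = 0) ∨ (a = 2 ∧ b = 0) ∨ (a = 3 ∧ b = 1) ∨ (a = 3 ∧ b = 2) ∨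
    (∃ m', 1 ≤ m' ∧ m' ≤ n ∧ a = 2*m'+3 ∧ (b = 2*m'+1 ∨ b = 2*m'+2)) ∨
    (∃ m', 1 ≤ m' ∧ m' ≤ n ∧ a = 2*m'+2 ∧ b = snakeSide w m') := by
  cases h with
  | cov10 => exact Or.inl ⟨rfl, rfl⟩
  | cov20 => exact Or.inr (Or.inl ⟨rfl, rfl⟩)
  | cov31 => exact Or.inr (Or.inr (Or.inl ⟨rfl, rfl⟩))
  | cov32 => exact Or.inr (Or.inr (Or.inr (Or.inl ⟨rfl, rfl⟩)))
  | covOdd m' h1 h2 =>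
    exact Or.inr (Or.inr (Or.inr (Or.inr (Or.inl ⟨m', h1, h2, rfl, Or.inl rfl⟩))))
  | covBot m' h1 h2 =>
    exact Or.inr (Or.inr (Or.inr (Or.inr (Or.inl ⟨m', h1, h2, rfl, Or.inr rfl⟩))))
  | covSide m' h1 h2 =>
    exact Or.inr (Or.inr (Or.inr (Or.inr (Or.inr ⟨m', h1, h2, rfl, rfl⟩))))

lemma cov_into_zero {z : ℕ} (h : SnakeCov n w z 0) : z = 1 ∨ z = 2 := by
  rcases cov_inv n w h with ⟨h1,h2⟩|⟨h1,h2⟩|⟨h1,h2⟩|⟨h1,h2⟩|⟨m',hm1,hm2,h1,h2⟩|⟨m',hm1,hm2,h1,h2⟩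
  · omega
  · omega
  · omega
  · omega
  · omega
  · rcases side_cases w m' with hc | hc <;> omega

lemma cov_into_one {z : ℕ} (h : SnakeCov n w z 1) :
    z = 3 ∨ (z = 4 ∧ snakeSide w 1 = 1) := by
  rcases cov_inv n w h with ⟨h1,h2⟩|⟨h1,h2⟩|⟨h1,h2⟩|⟨h1,h2⟩|⟨m',hm1,hm2,h1,h2⟩|⟨m',hm1,hm2,h1,h2⟩
  · omega
  · omega
  · omega
  · omega
  · omega
  · rcases side_cases w m' with hc | hc
    · have hm' : m' = 1 := by omega
      subst hm'
      right; constructor <;> omega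
    · omega

lemma cov_into_two {z : ℕ} (h : SnakeCov n w z 2) :
    z = 3 ∨ (z = 4 ∧ snakeSide w 1 = 2) := by
  rcases cov_inv n w h with ⟨h1,h2⟩|⟨h1,h2⟩|⟨h1,h2⟩|⟨h1,h2⟩|⟨m',hm1,hm2,h1,h2⟩|⟨m',hm1,hm2,h1,h2⟩
  · omega
  · omega
  · omega
  · omega
  · omega
  · rcases side_cases w m' with hc | hc
    · omega
    · have hm' : m' = 1 := by omega
      subst hm'
      right; constructor <;> omega

lemma cov_into_odd {y z : ℕ} (hy3 : 3 ≤ y) (hyodd : y % 2 = 1)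
    (h : SnakeCov n w z y) : z = y+2 ∨ (z = y+3 ∧ snakeSide w ((y+1)/2) = y) := by
  rcases cov_inv n w h with ⟨h1,h2⟩|⟨h1,h2⟩|⟨h1,h2⟩|⟨h1,h2⟩|⟨m',hm1,hm2,h1,h2⟩|⟨m',hm1,hm2,h1,h2⟩
  · omega
  · omega
  · omega
  · omega
  · omega
  · rcases side_cases w m' with hc | hc
    · have hm' : m' = (y+1)/2 := by omega
      subst hm'
      right; constructor <;> omega
    · omega

lemma cov_into_even {y z : ℕ} (hy4 : 4 ≤ y) (hyev : y % 2 = 0)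
    (h : SnakeCov n w z y) : z = y+1 ∨ (z = y+2 ∧ snakeSide w (y/2) = y) := by
  rcases cov_inv n w h with ⟨h1,h2⟩|⟨h1,h2⟩|⟨h1,h2⟩|⟨h1,h2⟩|⟨m',hm1,hm2,h1,h2⟩|⟨m',hm1,hm2,h1,h2⟩
  · omega
  · omega
  · omega
  · omega
  · omega
  · rcases side_cases w m' with hc | hc
    · omega
    · have hm' : m' = y/2 := by omega
      subst hm'
      right; constructor <;> omega

def Fset (m j : ℕ) : Finset ℕ :=
  (Finset.range (2*m+2*j+3)).filter (fun x => x ≤ 2*m+2 ∨ x % 2 = 0)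

def Gset (k j : ℕ) : Finset ℕ :=
  (Finset.range (2*k+2*j+3)).filter (fun x => x ≤ 2*k+1 ∨ (x % 2 = 0 ∧ 2*k+4 ≤ x))

def Hset2 (j : ℕ) : Finset ℕ :=
  (Finset.range (2*j+3)).filter (fun x => x % 2 = 0)

def Hset1 (j : ℕ) : Finset ℕ :=
  (Finset.range (2*j+3)).filter (fun x => x = 0 ∨ x = 1 ∨ (x % 2 = 0 ∧ 4 ≤ x))

lemma mem_Fset {m j x : ℕ} : x ∈ Fset m j ↔ x < 2*m+2*j+3 ∧ (x ≤ 2*m+2 ∨ x % 2 = 0) := by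
  simp [Fset]

lemma mem_Gset {k j x : ℕ} : x ∈ Gset k j ↔
    x < 2*k+2*j+3 ∧ (x ≤ 2*k+1 ∨ (x % 2 = 0 ∧ 2*k+4 ≤ x)) := by
  simp [Gset]

lemma mem_Hset2 {j x : ℕ} : x ∈ Hset2 j ↔ x < 2*j+3 ∧ x % 2 = 0 := by
  simp [Hset2]

lemma mem_Hset1 {j x : ℕ} : x ∈ Hset1 j ↔
    x < 2*j+3 ∧ (x = 0 ∨ x = 1 ∨ (x % 2 = 0 ∧ 4 ≤ x)) := by
  simp [Hset1]

lemma not_min_low {s : Finset ℕ} {m : ℕ} (hm : m ≤ n)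
    (hcont : ∀ x, x ≤ 2*m+1 → x ∈ s)
    {y : ℕ} (hy : y ≤ 2*m) : ∃ z ∈ s, z ≠ y ∧ SnakeLE n w z y := by
  by_cases h0 : y = 0
  · subst h0
    exact ⟨1, hcont 1 (by omega), by omega, Relation.ReflTransGen.single SnakeCov.cov10⟩
  by_cases h1 : y = 1
  · subst h1
    exact ⟨3, hcont 3 (by omega), by omega, Relation.ReflTransGen.single SnakeCov.cov31⟩
  by_cases h2 : y = 2
  · subst h2
    exact ⟨3, hcont 3 (by omega), by omega, Relation.ReflTransGen.single SnakeCov.cov32⟩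
  rcases Nat.even_or_odd y with he | ho
  · rcases he with ⟨t, ht⟩
    have hy' : y = 2*(t-1)+2 := by omega
    refine ⟨2*(t-1)+3, hcont _ (by omega), by omega, ?_⟩
    rw [hy']
    exact Relation.ReflTransGen.single (SnakeCov.covBot (t-1) (by omega) (by omega))
  · rcases ho with ⟨t, ht⟩
    have hy' : y = 2*t+1 := by omega
    refine ⟨2*t+3, hcont _ (by omega), by omega, ?_⟩
    rw [hy']
    exact Relation.ReflTransGen.single (SnakeCov.covOdd t (by omega) (by omega))

lemma Fset_up {m j : ℕ}
    (hsts : ∀ i, m+2 ≤ i → i ≤ m+j → snakeSide w i = 2*i) :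
    ∀ a ∈ Fset m j, ∀ b, SnakeCov n w a b → b ∈ Fset m j := by
  intro a ha b hcov
  rw [mem_Fset] at ha ⊢
  rcases cov_inv n w hcov with ⟨h1,h2⟩|⟨h1,h2⟩|⟨h1,h2⟩|⟨h1,h2⟩|⟨m',hm1,hm2,h1,h2⟩|⟨m',hm1,hm2,h1,h2⟩
  · omega
  · omega
  · omega
  · omega
  · omega
  · -- a = 2m'+2, b = snakeSide w m'
    by_cases hlow : m' ≤ m
    · rcases side_cases w m' with hc | hc <;> omega
    · -- chain: m+1 ≤ m' ≤ m+j
      have hr : m' ≤ m + j := by omega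
      by_cases hfirst : m' = m+1
      · rcases side_cases w m' with hc | hc <;> omega
      · have := hsts m' (by omega) hr
        omega

lemma Gset_up {k j : ℕ} (hside : snakeSide w (k+1) = 2*k+1)
    (hsts : ∀ i, k+2 ≤ i → i ≤ k+j → snakeSide w i = 2*i) :
    ∀ a ∈ Gset k j, ∀ b, SnakeCov n w a b → b ∈ Gset k j := by
  intro a ha b hcov
  rw [mem_Gset] at ha ⊢
  rcases cov_inv n w hcov with ⟨h1,h2⟩|⟨h1,h2⟩|⟨h1,h2⟩|⟨h1,h2⟩|⟨m',hm1,hm2,h1,h2⟩|⟨m',hm1,hm2,h1,h2⟩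
  · omega
  · omega
  · omega
  · omega
  · omega
  · by_cases hlow : m' ≤ k
    · rcases side_cases w m' with hc | hc <;> omega
    · have hr : m' ≤ k + j := by omega
      by_cases hfirst : m' = k+1
      · subst hfirst; omega
      · have := hsts m' (by omega) hr
        omega

end SnakeProof
namespace SnakeProof

variable (n : ℕ) (w : ℕ → Letter)

lemma bot_not_cov {y : ℕ} (hy4 : 4 ≤ y) (hyev : y % 2 = 0) {s : Finset ℕ}
    (hbd : ∀ x ∈ s, x ≤ y) : ∀ z, SnakeCov n w z y → z ∉ s := by
  intro z hcov hz
  rcases cov_into_even n w hy4 hyev hcov with h | ⟨h, _⟩ <;>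
    · have := hbd z hz; omega

/-- removing the unique minimal element `2m+3` of `P(m)` -/
lemma E_range (m : ℕ) (hm : m ≤ n) :
    E n w (Finset.range (2*m+4)) = E n w (Fset m 0) := by
  have hFr : Fset m 0 = (Finset.range (2*m+4)).erase (2*m+3) := by
    ext x
    rw [mem_Fset, Finset.mem_erase, Finset.mem_range]
    omega
  rw [hFr]
  have hup : ∀ a ∈ Finset.range (2*m+4), ∀ b, SnakeCov n w a b → b ∈ Finset.range (2*m+4) := by
    intro a ha b hcov
    rw [Finset.mem_range] at ha ⊢
    have := snakeCov_lt hcov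
    omega
  apply E_one n w _ (2*m+3) (by rw [Finset.mem_range]; omega)
  · apply minimal_of_no_cover n w hup
    intro z hcov hz
    rw [Finset.mem_range] at hz
    rcases cov_into_odd n w (by omega) (by omega) hcov with h | ⟨h, _⟩ <;> omega
  · intro y hy hminy
    rw [Finset.mem_range] at hy
    by_cases hy1 : y = 2*m+1
    · have hcov : SnakeCov n w (2*m+3) (2*m+1) := by
        rcases Nat.eq_zero_or_pos m with h0 | h0
        · subst h0; norm_num; exact SnakeCov.cov31
        · exact SnakeCov.covOdd m h0 hm
      have := hminy (2*m+3) (by rw [Finset.mem_range]; omega)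
        (by rw [hy1]; exact Relation.ReflTransGen.single hcov)
      omega
    by_cases hy2 : y = 2*m+2
    · have hcov : SnakeCov n w (2*m+3) (2*m+2) := by
        rcases Nat.eq_zero_or_pos m with h0 | h0
        · subst h0; norm_num; exact SnakeCov.cov32
        · exact SnakeCov.covBot m h0 hm
      have := hminy (2*m+3) (by rw [Finset.mem_range]; omega)
        (by rw [hy2]; exact Relation.ReflTransGen.single hcov)
      omega
    by_cases hy3 : y = 2*m+3
    · exact hy3
    · exfalso
      obtain ⟨z, hz, hzne, hzle⟩ := not_min_low n w (m := m)
        (s := Finset.range (2*m+4)) hm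
        (fun x hx => by rw [Finset.mem_range]; omega) (show y ≤ 2*m by omega)
      exact hzne (hminy z hz hzle)

/-- splitting at `P(m)` minus its min: minimal elements `2m+1` and `2m+2`. -/
lemma E_S0 {m : ℕ} (hm1 : 1 ≤ m) (hmn : m ≤ n) :
    E n w (Fset m 0) = E n w (Fset (m-1) 1) + E n w (Finset.range (2*m+2)) := by
  have e1 : (Fset m 0).erase (2*m+1) = Fset (m-1) 1 := by
    ext x
    rw [Finset.mem_erase, mem_Fset, mem_Fset]
    omega
  have e2 : (Fset m 0).erase (2*m+2) = Finset.range (2*m+2) := by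
    ext x
    rw [Finset.mem_erase, mem_Fset, Finset.mem_range]
    omega
  rw [← e1, ← e2]
  have hup := Fset_up n w (m := m) (j := 0) (fun i hi1 hi2 => by omega)
  apply E_two n w _ (2*m+1) (2*m+2) (by rw [mem_Fset]; omega) (by rw [mem_Fset]; omega)
    (by omega)
  · apply minimal_of_no_cover n w hup
    intro z hcov hz
    rw [mem_Fset] at hz
    rcases cov_into_odd n w (by omega) (by omega) hcov with h | ⟨h, _⟩ <;> omega
  · apply minimal_of_no_cover n w hup
    intro z hcov hz
    rw [mem_Fset] at hz
    rcases cov_into_even n w (by omega) (by omega) hcov with h | ⟨h, _⟩ <;> omega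
  · intro y hy hminy
    rw [mem_Fset] at hy
    by_cases hy1 : y = 2*m+1
    · exact Or.inl hy1
    by_cases hy2 : y = 2*m+2
    · exact Or.inr hy2
    exfalso
    obtain ⟨z, hz, hzne, hzle⟩ := not_min_low n w (m := m) (s := Fset m 0) hmn
      (fun x hx => by rw [mem_Fset]; omega) (show y ≤ 2*m by omega)
    exact hzne (hminy z hz hzle)

/-- chain-element witness: `2m'+4` covers `2m'+2` when the word is straight at `m'+1`. -/
lemma chain_cov {m' : ℕ} (h1 : 1 ≤ m'+1) (h2 : m'+1 ≤ n)
    (hs : snakeSide w (m'+1) = 2*m'+2) : SnakeCov n w (2*m'+4) (2*m'+2) := by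
  have h := SnakeCov.covSide (n := n) (w := w) (m'+1) h1 h2
  rw [hs] at h
  have e : 2*(m'+1)+2 = 2*m'+4 := by ring
  rw [e] at h
  exact h

/-- straight-segment splitting -/
lemma E_S {m j : ℕ} (hm : 1 ≤ m) (hmn : m+j+1 ≤ n)
    (hm1 : snakeSide w (m+1) = 2*m+2)
    (hsts : ∀ i, m+2 ≤ i → i ≤ m+j+1 → snakeSide w i = 2*i) :
    E n w (Fset m (j+1)) = E n w (Fset m j) + E n w (Fset (m-1) (j+2)) := by
  have e1 : (Fset m (j+1)).erase (2*m+2*j+4) = Fset m j := by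
    ext x
    rw [Finset.mem_erase, mem_Fset, mem_Fset]
    omega
  have e2 : (Fset m (j+1)).erase (2*m+1) = Fset (m-1) (j+2) := by
    ext x
    rw [Finset.mem_erase, mem_Fset, mem_Fset]
    omega
  rw [← e1, ← e2]
  have hup := Fset_up n w (m := m) (j := j+1)
    (fun i hi1 hi2 => hsts i hi1 (by omega))
  apply E_two n w _ (2*m+2*j+4) (2*m+1) (by rw [mem_Fset]; omega) (by rw [mem_Fset]; omega)
    (by omega)
  · apply minimal_of_no_cover n w hup
    exact bot_not_cov n w (by omega) (by omega)
      (fun x hx => by rw [mem_Fset] at hx; omega)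
  · apply minimal_of_no_cover n w hup
    intro z hcov hz
    rw [mem_Fset] at hz
    rcases cov_into_odd n w (by omega) (by omega) hcov with h | ⟨h, hs⟩
    · omega
    · have e : (2*m+1+1)/2 = m+1 := by omega
      rw [e] at hs
      omega
  · intro y hy hminy
    rw [mem_Fset] at hy
    by_cases hy1 : y = 2*m+2*j+4
    · exact Or.inl hy1
    by_cases hy2 : y = 2*m+1
    · exact Or.inr hy2
    exfalso
    by_cases hylow : y ≤ 2*m
    · obtain ⟨z, hz, hzne, hzle⟩ := not_min_low n w (m := m) (s := Fset m (j+1))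
        (show m ≤ n by omega) (fun x hx => by rw [mem_Fset]; omega) hylow
      exact hzne (hminy z hz hzle)
    · -- y = 2m'+2 with m ≤ m' ≤ m+j
      obtain ⟨m', hym', hm'1, hm'2⟩ : ∃ m', y = 2*m'+2 ∧ m ≤ m' ∧ m' ≤ m+j := by
        refine ⟨y/2-1, by omega, by omega, by omega⟩
      have hside' : snakeSide w (m'+1) = 2*m'+2 := by
        by_cases hfirst : m' = m
        · rw [hfirst]; exact hm1
        · have := hsts (m'+1) (by omega) (by omega)
          omega
      have hcov := chain_cov n w (by omega) (by omega) hside'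
      have := hminy (2*m'+4) (by rw [mem_Fset]; omega)
        (by rw [hym']; exact Relation.ReflTransGen.single hcov)
      omega

end SnakeProof
namespace SnakeProof

variable (n : ℕ) (w : ℕ → Letter)

/-- forced chain removal in the turn branch -/
lemma E_G {k : ℕ} (hk1 : 1 ≤ k) (hside : snakeSide w (k+1) = 2*k+1) :
    ∀ j, k+j ≤ n → (∀ i, k+2 ≤ i → i ≤ k+j → snakeSide w i = 2*i) →
    E n w (Gset k j) = E n w (Finset.range (2*k+2)) := by
  intro j
  induction j with
  | zero =>
    intro _ _
    have h0 : Gset k 0 = Finset.range (2*k+2) := by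
      ext x
      rw [mem_Gset, Finset.mem_range]
      omega
    rw [h0]
  | succ j ih =>
    intro hjn hsts
    have hup := Gset_up n w (k := k) (j := j+1) hside hsts
    have e1 : (Gset k (j+1)).erase (2*k+2*j+4) = Gset k j := by
      ext x
      rw [Finset.mem_erase, mem_Gset, mem_Gset]
      omega
    have step : E n w (Gset k (j+1)) = E n w (Gset k j) := by
      rw [← e1]
      apply E_one n w _ (2*k+2*j+4) (by rw [mem_Gset]; omega)
      · apply minimal_of_no_cover n w hup
        exact bot_not_cov n w (by omega) (by omega)
          (fun x hx => by rw [mem_Gset] at hx; omega)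
      · intro y hy hminy
        rw [mem_Gset] at hy
        by_cases hybot : y = 2*k+2*j+4
        · exact hybot
        exfalso
        by_cases hylow : y ≤ 2*k
        · obtain ⟨z, hz, hzne, hzle⟩ := not_min_low n w (m := k) (s := Gset k (j+1))
            (by omega) (fun x hx => by rw [mem_Gset]; omega) hylow
          exact hzne (hminy z hz hzle)
        by_cases hy1 : y = 2*k+1
        · -- witness 2k+4 covers 2k+1 = side (k+1)
          have h := SnakeCov.covSide (n := n) (w := w) (k+1) (by omega) (by omega)
          rw [hside] at h
          have e : 2*(k+1)+2 = 2*k+4 := by ring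
          rw [e] at h
          have := hminy (2*k+4) (by rw [mem_Gset]; omega)
            (by rw [hy1]; exact Relation.ReflTransGen.single h)
          omega
        · -- chain element y = 2m'+2, k+1 ≤ m' ≤ k+j
          obtain ⟨m', hym', hm'1, hm'2⟩ : ∃ m', y = 2*m'+2 ∧ k+1 ≤ m' ∧ m' ≤ k+j := by
            refine ⟨y/2-1, by omega, by omega, by omega⟩
          have hside' : snakeSide w (m'+1) = 2*m'+2 := by
            have := hsts (m'+1) (by omega) (by omega)
            omega
          have hcov := chain_cov n w (by omega) (by omega) hside'
          have := hminy (2*m'+4) (by rw [mem_Gset]; omega)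
            (by rw [hym']; exact Relation.ReflTransGen.single hcov)
          omega
    rw [step]
    exact ih (by omega) (fun i h1 h2 => hsts i h1 (by omega))

/-- turn splitting -/
lemma E_T {k j : ℕ} (hk1 : 1 ≤ k) (hkn : k+j+1 ≤ n)
    (hside : snakeSide w (k+1) = 2*k+1)
    (hsts : ∀ i, k+2 ≤ i → i ≤ k+j+1 → snakeSide w i = 2*i) :
    E n w (Fset k (j+1)) = E n w (Fset k j) + E n w (Finset.range (2*k+2)) := by
  have e1 : (Fset k (j+1)).erase (2*k+2*j+4) = Fset k j := by
    ext x
    rw [Finset.mem_erase, mem_Fset, mem_Fset]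
    omega
  have e2 : (Fset k (j+1)).erase (2*k+2) = Gset k (j+1) := by
    ext x
    rw [Finset.mem_erase, mem_Fset, mem_Gset]
    omega
  have hG := E_G n w hk1 hside (j+1) (by omega) (fun i h1 h2 => hsts i h1 (by omega))
  rw [← hG, ← e1, ← e2]
  have hup := Fset_up n w (m := k) (j := j+1)
    (fun i hi1 hi2 => hsts i hi1 (by omega))
  apply E_two n w _ (2*k+2*j+4) (2*k+2) (by rw [mem_Fset]; omega) (by rw [mem_Fset]; omega)
    (by omega)
  · apply minimal_of_no_cover n w hup
    exact bot_not_cov n w (by omega) (by omega)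
      (fun x hx => by rw [mem_Fset] at hx; omega)
  · apply minimal_of_no_cover n w hup
    intro z hcov hz
    rw [mem_Fset] at hz
    rcases cov_into_even n w (by omega) (by omega) hcov with h | ⟨h, hs⟩
    · omega
    · have e : (2*k+2)/2 = k+1 := by omega
      rw [e] at hs
      omega
  · intro y hy hminy
    rw [mem_Fset] at hy
    by_cases hy1 : y = 2*k+2*j+4
    · exact Or.inl hy1
    by_cases hy2 : y = 2*k+2
    · exact Or.inr hy2
    exfalso
    by_cases hylow : y ≤ 2*k
    · obtain ⟨z, hz, hzne, hzle⟩ := not_min_low n w (m := k) (s := Fset k (j+1))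
        (by omega) (fun x hx => by rw [mem_Fset]; omega) hylow
      exact hzne (hminy z hz hzle)
    by_cases hy3 : y = 2*k+1
    · have h := SnakeCov.covSide (n := n) (w := w) (k+1) (by omega) (by omega)
      rw [hside] at h
      have e : 2*(k+1)+2 = 2*k+4 := by ring
      rw [e] at h
      have := hminy (2*k+4) (by rw [mem_Fset]; omega)
        (by rw [hy3]; exact Relation.ReflTransGen.single h)
      omega
    · obtain ⟨m', hym', hm'1, hm'2⟩ : ∃ m', y = 2*m'+2 ∧ k+1 ≤ m' ∧ m' ≤ k+j := by
        refine ⟨y/2-1, by omega, by omega, by omega⟩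
      have hside' : snakeSide w (m'+1) = 2*m'+2 := by
        have := hsts (m'+1) (by omega) (by omega)
        omega
      have hcov := chain_cov n w (by omega) (by omega) hside'
      have := hminy (2*m'+4) (by rw [mem_Fset]; omega)
        (by rw [hym']; exact Relation.ReflTransGen.single hcov)
      omega

end SnakeProof
namespace SnakeProof

variable (n : ℕ) (w : ℕ → Letter)

lemma E_H2 {jj : ℕ} (hjj : jj ≤ n) (hside1 : snakeSide w 1 = 2)
    (hsts : ∀ i, 2 ≤ i → i ≤ jj → snakeSide w i = 2*i) :
    E n w (Hset2 jj) = 1 := by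
  have hup : ∀ a ∈ Hset2 jj, ∀ b, SnakeCov n w a b → b ∈ Hset2 jj := by
    intro a ha b hcov
    rw [mem_Hset2] at ha ⊢
    rcases cov_inv n w hcov with ⟨h1,h2⟩|⟨h1,h2⟩|⟨h1,h2⟩|⟨h1,h2⟩|⟨m',hm1,hm2,h1,h2⟩|⟨m',hm1,hm2,h1,h2⟩
    · omega
    · omega
    · omega
    · omega
    · omega
    · by_cases hm'1 : m' = 1
      · subst hm'1; omega
      · have := hsts m' (by omega) (by omega)
        omega
  have comp : ∀ b, b ∈ Hset2 jj → ∀ a ∈ Hset2 jj, a ≤ b → SnakeLE n w b a := by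
    intro b
    induction b using Nat.strong_induction_on with
    | _ b ih =>
      intro hb a ha hab
      rw [mem_Hset2] at hb ha
      by_cases heq : a = b
      · rw [heq]
        exact Relation.ReflTransGen.refl
      have hb2' : 2 ≤ b := by omega
      by_cases hb2 : b = 2
      · have ha0 : a = 0 := by omega
        rw [ha0, hb2]
        exact Relation.ReflTransGen.single SnakeCov.cov20
      obtain ⟨m'', hbm, h1, h2⟩ : ∃ m'', b = 2*m''+2 ∧ 1 ≤ m'' ∧ m'' ≤ jj :=
        ⟨b/2-1, by omega, by omega, by omega⟩
      have hsv : snakeSide w m'' = 2*m'' := by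
        by_cases hm1 : m'' = 1
        · subst hm1; omega
        · exact hsts m'' (by omega) h2
      have hcov : SnakeCov n w b (b-2) := by
        have h := SnakeCov.covSide (n := n) (w := w) m'' (by omega) (by omega)
        rw [hsv, show 2*m''+2 = b by omega, show 2*m'' = b - 2 by omega] at h
        exact h
      refine Relation.ReflTransGen.head hcov (ih (b-2) (by omega) ?_ a ?_ (by omega))
      · rw [mem_Hset2]; omega
      · rw [mem_Hset2]; omega
  apply E_chain n w (Hset2 jj).card _ rfl hup
  intro a ha b hb
  rcases le_total b a with h | h
  · exact Or.inl (comp a ha b hb h)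
  · exact Or.inr (comp b hb a ha h)

lemma E_H1 {jj : ℕ} (hn1 : 1 ≤ n) (hjj : jj ≤ n) (hside1 : snakeSide w 1 = 1)
    (hsts : ∀ i, 2 ≤ i → i ≤ jj → snakeSide w i = 2*i) :
    E n w (Hset1 jj) = 1 := by
  have hup : ∀ a ∈ Hset1 jj, ∀ b, SnakeCov n w a b → b ∈ Hset1 jj := by
    intro a ha b hcov
    rw [mem_Hset1] at ha ⊢
    rcases cov_inv n w hcov with ⟨h1,h2⟩|⟨h1,h2⟩|⟨h1,h2⟩|⟨h1,h2⟩|⟨m',hm1,hm2,h1,h2⟩|⟨m',hm1,hm2,h1,h2⟩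
    · omega
    · omega
    · omega
    · omega
    · omega
    · by_cases hm'1 : m' = 1
      · subst hm'1; omega
      · have := hsts m' (by omega) (by omega)
        omega
  have hcov41 : SnakeCov n w 4 1 := by
    have h := SnakeCov.covSide (n := n) (w := w) 1 (by omega) (by omega)
    rw [hside1, show 2*1+2 = 4 by norm_num] at h
    exact h
  have comp : ∀ b, b ∈ Hset1 jj → ∀ a ∈ Hset1 jj, a ≤ b → SnakeLE n w b a := by
    intro b
    induction b using Nat.strong_induction_on with
    | _ b ih =>
      intro hb a ha hab
      rw [mem_Hset1] at hb ha
      by_cases heq : a = b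
      · rw [heq]
        exact Relation.ReflTransGen.refl
      by_cases hb1 : b = 1
      · have ha0 : a = 0 := by omega
        rw [ha0, hb1]
        exact Relation.ReflTransGen.single SnakeCov.cov10
      have hb4 : 4 ≤ b := by omega
      by_cases hb4' : b = 4
      · have hle : SnakeLE n w 4 1 := Relation.ReflTransGen.single hcov41
        rcases (show a = 0 ∨ a = 1 by omega) with h0 | h0
        · rw [h0, hb4']
          exact Relation.ReflTransGen.tail hle SnakeCov.cov10
        · rw [h0, hb4']
          exact hle
      -- b ≥ 6
      obtain ⟨m'', hbm, h1, h2⟩ : ∃ m'', b = 2*m''+2 ∧ 2 ≤ m'' ∧ m'' ≤ jj :=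
        ⟨b/2-1, by omega, by omega, by omega⟩
      have hsv : snakeSide w m'' = 2*m'' := hsts m'' h1 h2
      have hcov : SnakeCov n w b (b-2) := by
        have h := SnakeCov.covSide (n := n) (w := w) m'' (by omega) (by omega)
        rw [hsv, show 2*m''+2 = b by omega, show 2*m'' = b - 2 by omega] at h
        exact h
      refine Relation.ReflTransGen.head hcov (ih (b-2) (by omega) ?_ a ?_ (by omega))
      · rw [mem_Hset1]; omega
      · rw [mem_Hset1]; omega
  apply E_chain n w (Hset1 jj).card _ rfl hup
  intro a ha b hb
  rcases le_total b a with h | h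
  · exact Or.inl (comp a ha b hb h)
  · exact Or.inr (comp b hb a ha h)

lemma E_Z2 {j : ℕ} (hjn : j+1 ≤ n) (hside1 : snakeSide w 1 = 2)
    (hsts : ∀ i, 2 ≤ i → i ≤ j+1 → snakeSide w i = 2*i) :
    E n w (Fset 0 (j+1)) = E n w (Fset 0 j) + 1 := by
  have e1 : (Fset 0 (j+1)).erase (2*0+2*j+4) = Fset 0 j := by
    ext x
    rw [Finset.mem_erase, mem_Fset, mem_Fset]
    omega
  have e2 : (Fset 0 (j+1)).erase 1 = Hset2 (j+1) := by
    ext x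
    rw [Finset.mem_erase, mem_Fset, mem_Hset2]
    omega
  have hH := E_H2 n w (jj := j+1) (by omega) hside1 hsts
  have hup := Fset_up n w (m := 0) (j := j+1) (fun i h1 h2 => hsts i h1 (by omega))
  have key : E n w (Fset 0 (j+1)) = E n w ((Fset 0 (j+1)).erase (2*0+2*j+4)) +
      E n w ((Fset 0 (j+1)).erase 1) := by
    apply E_two n w _ (2*0+2*j+4) 1 (by rw [mem_Fset]; omega) (by rw [mem_Fset]; omega)
      (by omega)
    · apply minimal_of_no_cover n w hup
      exact bot_not_cov n w (by omega) (by omega)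
        (fun x hx => by rw [mem_Fset] at hx; omega)
    · apply minimal_of_no_cover n w hup
      intro z hcov hz
      rw [mem_Fset] at hz
      rcases cov_into_one n w hcov with h | ⟨h, hs⟩ <;> omega
    · intro y hy hminy
      rw [mem_Fset] at hy
      by_cases hy1 : y = 2*0+2*j+4
      · exact Or.inl hy1
      by_cases hy2 : y = 1
      · exact Or.inr hy2
      exfalso
      by_cases hy0 : y = 0
      · have := hminy 1 (by rw [mem_Fset]; omega)
          (by rw [hy0]; exact Relation.ReflTransGen.single SnakeCov.cov10)
        omega
      by_cases hyo : y = 2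
      · have h := SnakeCov.covSide (n := n) (w := w) 1 (by omega) (by omega)
        rw [hside1, show 2*1+2 = 4 by norm_num] at h
        have := hminy 4 (by rw [mem_Fset]; omega)
          (by rw [hyo]; exact Relation.ReflTransGen.single h)
        omega
      · obtain ⟨m', hym', hm'1, hm'2⟩ : ∃ m', y = 2*m'+2 ∧ 1 ≤ m' ∧ m' ≤ j := by
          refine ⟨y/2-1, by omega, by omega, by omega⟩
        have hside' : snakeSide w (m'+1) = 2*m'+2 := by
          have := hsts (m'+1) (by omega) (by omega)
          omega
        have hcov := chain_cov n w (by omega) (by omega) hside'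
        have := hminy (2*m'+4) (by rw [mem_Fset]; omega)
          (by rw [hym']; exact Relation.ReflTransGen.single hcov)
        omega
  rw [e1, e2, hH] at key
  exact key

lemma E_Z1 {j : ℕ} (hjn : j+1 ≤ n) (hside1 : snakeSide w 1 = 1)
    (hsts : ∀ i, 2 ≤ i → i ≤ j+1 → snakeSide w i = 2*i) :
    E n w (Fset 0 (j+1)) = E n w (Fset 0 j) + 1 := by
  have e1 : (Fset 0 (j+1)).erase (2*0+2*j+4) = Fset 0 j := by
    ext x
    rw [Finset.mem_erase, mem_Fset, mem_Fset]
    omega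
  have e2 : (Fset 0 (j+1)).erase 2 = Hset1 (j+1) := by
    ext x
    rw [Finset.mem_erase, mem_Fset, mem_Hset1]
    omega
  have hH := E_H1 n w (jj := j+1) (by omega) (by omega) hside1 hsts
  have hup := Fset_up n w (m := 0) (j := j+1) (fun i h1 h2 => hsts i h1 (by omega))
  have key : E n w (Fset 0 (j+1)) = E n w ((Fset 0 (j+1)).erase (2*0+2*j+4)) +
      E n w ((Fset 0 (j+1)).erase 2) := by
    apply E_two n w _ (2*0+2*j+4) 2 (by rw [mem_Fset]; omega) (by rw [mem_Fset]; omega)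
      (by omega)
    · apply minimal_of_no_cover n w hup
      exact bot_not_cov n w (by omega) (by omega)
        (fun x hx => by rw [mem_Fset] at hx; omega)
    · apply minimal_of_no_cover n w hup
      intro z hcov hz
      rw [mem_Fset] at hz
      rcases cov_into_two n w hcov with h | ⟨h, hs⟩ <;> omega
    · intro y hy hminy
      rw [mem_Fset] at hy
      by_cases hy1 : y = 2*0+2*j+4
      · exact Or.inl hy1
      by_cases hy2 : y = 2
      · exact Or.inr hy2
      exfalso
      by_cases hy0 : y = 0
      · have := hminy 1 (by rw [mem_Fset]; omega)
          (by rw [hy0]; exact Relation.ReflTransGen.single SnakeCov.cov10)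
        omega
      by_cases hyo : y = 1
      · have h := SnakeCov.covSide (n := n) (w := w) 1 (by omega) (by omega)
        rw [hside1, show 2*1+2 = 4 by norm_num] at h
        have := hminy 4 (by rw [mem_Fset]; omega)
          (by rw [hyo]; exact Relation.ReflTransGen.single h)
        omega
      · obtain ⟨m', hym', hm'1, hm'2⟩ : ∃ m', y = 2*m'+2 ∧ 1 ≤ m' ∧ m' ≤ j := by
          refine ⟨y/2-1, by omega, by omega, by omega⟩
        have hside' : snakeSide w (m'+1) = 2*m'+2 := by
          have := hsts (m'+1) (by omega) (by omega)
          omega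
        have hcov := chain_cov n w (by omega) (by omega) hside'
        have := hminy (2*m'+4) (by rw [mem_Fset]; omega)
          (by rw [hym']; exact Relation.ReflTransGen.single hcov)
        omega
  rw [e1, e2, hH] at key
  exact key

end SnakeProof
theorem stmt3 (n k : ℕ) (w : ℕ → Letter) (hn : 1 ≤ n) (hk : k < n)
    (hk2 : k = 0 ∨ w k ≠ w n) (hk3 : ∀ j, k < j → j < n → w j = w n) :
    linExtCount n w +
        2 * catalan (n - k + 1) * (if k = 0 then 1 else linExtCount (k - 1) w) =
      catalan (n - k + 1) * linExtCount k w +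
        catalan (n - k + 2) * (if k = 0 then 1 else linExtCount (k - 1) w) := by
  classical
  open SnakeProof in
  -- all letters beyond k agree with w n
  have hwall : ∀ i, k+1 ≤ i → i ≤ n → w i = w n := by
    intro i h1 h2
    by_cases hi : i = n
    · rw [hi]
    · exact hk3 i (by omega) (by omega)
  -- the word is straight at every index ≥ k+2
  have hstsAll : ∀ i, k+2 ≤ i → i ≤ n → snakeSide w i = 2*i := by
    intro i h1 h2
    have hcond : ¬((i = 1 ∧ w 1 = Letter.L) ∨ (2 ≤ i ∧ w (i-1) ≠ w i)) := by
      rintro (⟨h3, _⟩ | ⟨_, h4⟩)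
      · omega
      · exact h4 ((hwall (i-1) (by omega) (by omega)).trans (hwall i (by omega) h2).symm)
    unfold snakeSide
    rw [if_neg hcond]
  set B : ℕ := if k = 0 then 1 else linExtCount (k - 1) w with hB
  set X : ℕ := E n w (Fset k 0) with hX
  -- one-step recursion at level k
  have hstep : ∀ j, k+j+1 ≤ n → E n w (Fset k (j+1)) = E n w (Fset k j) + B := by
    intro j hj
    by_cases hk0 : k = 0
    · subst hk0
      have hBv : B = 1 := if_pos rfl
      rw [hBv]
      cases hw1 : w 1 with
      | L =>
        have hcond : (1 = 1 ∧ w 1 = Letter.L) ∨ (2 ≤ 1 ∧ w (1-1) ≠ w 1) :=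
          Or.inl ⟨rfl, hw1⟩
        have hside1 : snakeSide w 1 = 1 := by
          unfold snakeSide
          rw [if_pos hcond]
        exact E_Z1 n w (by omega) hside1
          (fun i h1 h2 => hstsAll i (by omega) (by omega))
      | R =>
        have hside1 : snakeSide w 1 = 2 := by
          have hcond : ¬((1 = 1 ∧ w 1 = Letter.L) ∨ (2 ≤ 1 ∧ w (1-1) ≠ w 1)) := by
            rintro (⟨_, h3⟩ | ⟨h4, _⟩)
            · rw [hw1] at h3; exact Letter.noConfusion h3
            · omega
          unfold snakeSide
          rw [if_neg hcond]
        exact E_Z2 n w (by omega) hside1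
          (fun i h1 h2 => hstsAll i (by omega) (by omega))
    · -- k ≥ 1 : turn at k+1
      have hk1 : 1 ≤ k := by omega
      have hside : snakeSide w (k+1) = 2*k+1 := by
        have hne : w k ≠ w (k+1) := by
          rcases hk2 with h | h
          · omega
          · rw [hwall (k+1) (by omega) (by omega)]
            exact h
        have hcond : (k+1 = 1 ∧ w 1 = Letter.L) ∨ (2 ≤ k+1 ∧ w (k+1-1) ≠ w (k+1)) := by
          right
          refine ⟨by omega, ?_⟩
          rw [show k+1-1 = k by omega]
          exact hne
        have h2 : snakeSide w (k+1) = 2*(k+1)-1 := by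
          unfold snakeSide
          rw [if_pos hcond]
        omega
      have hT := E_T n w (k := k) (j := j) hk1 (by omega) hside
        (fun i h1 h2 => hstsAll i (by omega) (by omega))
      have hBv : B = linExtCount (k-1) w := if_neg hk0
      have hlek : linExtCount (k-1) w = E n w (Finset.range (2*(k-1)+4)) :=
        linExtCount_eq_E n w (by omega)
      have hrng : Finset.range (2*(k-1)+4) = Finset.range (2*k+2) := by
        rw [show 2*(k-1)+4 = 2*k+2 by omega]
      rw [hT, hBv, hlek, hrng]
  -- main induction
  have claim : ∀ r, ∀ j, r + j ≤ n - k →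
      E n w (Fset (k+r) j) + 2 * (pv r j * B) = pv r j * X + pv (r+1) j * B := by
    intro r
    induction r with
    | zero =>
      intro j
      induction j with
      | zero =>
        intro _
        rw [Nat.add_zero, pv_zero, pv_one]
        omega
      | succ j ihj =>
        intro hle
        have hs := hstep j (by omega)
        have ihj' := ihj (by omega)
        rw [Nat.add_zero] at hs ihj' ⊢
        rw [hs]
        rw [pv_zero, pv_one] at ihj' ⊢
        have e : (j+1+2)*B = (j+2)*B + B := by ring
        rw [e]
        omega
    | succ r ihr =>
      intro j
      induction j with
      | zero =>
        intro hle
        have hS0 := E_S0 n w (m := k+r+1) (by omega) (by omega)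
        rw [show k+r+1-1 = k+r by omega] at hS0
        have hrng : Finset.range (2*(k+r+1)+2) = Finset.range (2*(k+r)+4) := by
          rw [show 2*(k+r+1)+2 = 2*(k+r)+4 by omega]
        have hR := E_range n w (k+r) (by omega)
        rw [hrng, hR] at hS0
        have ih1 := ihr 1 (by omega)
        have ih0 := ihr 0 (by omega)
        rw [show k+(r+1) = k+r+1 by omega, hS0]
        have e1 : pv (r+1) 0 * X = pv r 1 * X + pv r 0 * X := by
          rw [pv_succ_zero, add_mul]
        have e2 : pv (r+1) 0 * B = pv r 1 * B + pv r 0 * B := by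
          rw [pv_succ_zero, add_mul]
        have e3 : pv (r+1+1) 0 * B = pv (r+1) 1 * B + pv (r+1) 0 * B := by
          rw [pv_succ_zero (r+1), add_mul]
        omega
      | succ j ihj =>
        intro hle
        have hm1' : snakeSide w (k+r+1+1) = 2*(k+r+1)+2 := by
          have := hstsAll (k+r+1+1) (by omega) (by omega)
          omega
        have hS := E_S n w (m := k+r+1) (j := j) (by omega) (by omega) hm1'
          (fun i h1 h2 => hstsAll i (by omega) (by omega))
        rw [show k+r+1-1 = k+r by omega] at hS
        have ih1 := ihj (by omega)
        have ih2 := ihr (j+2) (by omega)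
        rw [show k+(r+1) = k+r+1 by omega] at ih1 ⊢
        rw [hS]
        have q1 : pv (r+1) (j+1) * X = pv (r+1) j * X + pv r (j+2) * X := by
          rw [pv_succ_succ, add_mul]
        have q2 : pv (r+1) (j+1) * B = pv (r+1) j * B + pv r (j+2) * B := by
          rw [pv_succ_succ, add_mul]
        have q3 : pv (r+1+1) (j+1) * B = pv (r+1+1) j * B + pv (r+1) (j+2) * B := by
          rw [pv_succ_succ (r+1), add_mul]
        omega
  -- assemble
  set d : ℕ := n - k with hd
  have hmain := claim d 0 (by omega)
  rw [show k + d = n by omega] at hmain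
  have hA : linExtCount n w = E n w (Fset n 0) :=
    (linExtCount_eq_E n w (le_refl n)).trans (E_range n w n (le_refl n))
  have hK : linExtCount k w = X :=
    (linExtCount_eq_E n w (by omega)).trans (E_range n w k (by omega))
  rw [pv_catalan d, pv_catalan (d+1), show d+1+1 = d+2 by omega] at hmain
  rw [hA, hK, show n-k+1 = d+1 by omega, show n-k+2 = d+2 by omega,
    mul_assoc 2 (catalan (d+1)) B]
  exact hmain
end

section
/- Let S_n := P(εLRLR⋯) denote the snake poset, built from the alternating generalized snake word of length n whose first letter is L. Then e(S_0) = 2, e(S_1) = 5, and e(S_n) = 2·e(S_{n−1}) + e(S_{n−2}) for all n ≥ 2; that is, the normalized volumes of the order polytopes O(S_n) satisfy the Pell recursion. -/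
def LEq (n a b : ℕ) : Prop :=
  b = a ∨ (a ≤ 2*n+3 ∧ b < a ∧ (a % 2 = 1 ∨ (4 ≤ a ∧ b + 2 < a) ∨ (a = 2 ∧ b = 0)))

instance (n a b : ℕ) : Decidable (LEq n a b) := by unfold LEq; infer_instance

lemma snakeSide_alt (m : ℕ) (hm : 1 ≤ m) : snakeSide altWord m = 2*m-1 := by
  unfold snakeSide
  rcases Nat.lt_or_ge m 2 with h | h
  · have : m = 1 := by omega
    subst this
    simp [altWord]
  · have hne : altWord (m-1) ≠ altWord m := by
      unfold altWord
      rcases Nat.mod_two_eq_zero_or_one m with h1 | h1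
      · have h2 : (m-1) % 2 = 1 := by omega
        simp [h1, h2]
      · have h2 : (m-1) % 2 = 0 := by omega
        simp [h1, h2]
    rw [if_pos (Or.inr ⟨h, hne⟩)]

lemma LEq_step {n a b c : ℕ} (h : LEq n a b) (hc : SnakeCov n altWord b c) : LEq n a c := by
  unfold LEq at *
  cases hc with
  | cov10 => omega
  | cov20 => omega
  | cov31 => omega
  | cov32 => omega
  | covOdd m h1 h2 => omega
  | covBot m h1 h2 => omega
  | covSide m h1 h2 => rw [snakeSide_alt m h1]; omega

lemma LEq_of_snakeLE {n a b : ℕ} (h : SnakeLE n altWord a b) : LEq n a b := by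
  induction h with
  | refl => left; rfl
  | tail _ hc ih => exact LEq_step ih hc

lemma snakeLE_of_LEq : ∀ a b : ℕ, ∀ n, LEq n a b → SnakeLE n altWord a b := by
  intro a
  induction a using Nat.strong_induction_on with
  | _ a ih =>
    intro b n h
    rcases h with rfl | ⟨ha, hb, hc⟩
    · exact Relation.ReflTransGen.refl
    by_cases hodd : a % 2 = 1
    · -- a odd
      rcases Nat.lt_or_ge a 5 with hlt | hge
      · have : a = 1 ∨ a = 3 := by omega
        rcases this with rfl | rfl
        · have : b = 0 := by omega
          subst this
          exact Relation.ReflTransGen.single SnakeCov.cov10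
        · have : b = 0 ∨ b = 1 ∨ b = 2 := by omega
          rcases this with rfl | rfl | rfl
          · exact Relation.ReflTransGen.head SnakeCov.cov31
              (Relation.ReflTransGen.single SnakeCov.cov10)
          · exact Relation.ReflTransGen.single SnakeCov.cov31
          · exact Relation.ReflTransGen.single SnakeCov.cov32
      · obtain ⟨m, rfl⟩ : ∃ m, a = 2*m+3 := ⟨(a-3)/2, by omega⟩
        have hm1 : 1 ≤ m := by omega
        have hm2 : m ≤ n := by omega
        by_cases heq : b = 2*m+2
        · subst heq
          exact Relation.ReflTransGen.single (SnakeCov.covBot m hm1 hm2)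
        · refine Relation.ReflTransGen.head (SnakeCov.covOdd m hm1 hm2) ?_
          exact ih (2*m+1) (by omega) b n (by unfold LEq; omega)
    · -- a even
      rcases hc with h1 | ⟨h4, hb2⟩ | ⟨rfl, rfl⟩
      · omega
      · obtain ⟨m, rfl⟩ : ∃ m, a = 2*m+2 := ⟨(a-2)/2, by omega⟩
        have hm1 : 1 ≤ m := by omega
        have hm2 : m ≤ n := by omega
        have hcov : SnakeCov n altWord (2*m+2) (2*m-1) := by
          have := SnakeCov.covSide (n := n) (w := altWord) m hm1 hm2
          rwa [snakeSide_alt m hm1] at this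
        refine Relation.ReflTransGen.head hcov ?_
        exact ih (2*m-1) (by omega) b n (by unfold LEq; omega)
      · exact Relation.ReflTransGen.single SnakeCov.cov20

lemma snakeLE_iff {n a b : ℕ} : SnakeLE n altWord a b ↔ LEq n a b :=
  ⟨LEq_of_snakeLE, fun h => snakeLE_of_LEq a b n h⟩
def okE (n : ℕ) (f : Fin (2*n+4) ≃ Fin (2*n+4)) : Prop :=
  ∀ a b : Fin (2*n+4), LEq n a.1 b.1 → f a ≤ f b

instance (n : ℕ) (f : Fin (2*n+4) ≃ Fin (2*n+4)) : Decidable (okE n f) := by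
  unfold okE; infer_instance

def EE (n : ℕ) : Finset (Fin (2*n+4) ≃ Fin (2*n+4)) := Finset.univ.filter (okE n)

lemma linExtCount_eq (n : ℕ) : linExtCount n altWord = (EE n).card := by
  unfold linExtCount
  have e1 : {f : SnakePoset n altWord ≃ Fin (2 * n + 4) //
      ∀ a b : SnakePoset n altWord, a ≤ b → f a ≤ f b} ≃
      {f : Fin (2*n+4) ≃ Fin (2*n+4) // okE n f} := by
    apply Equiv.subtypeEquivRight
    intro f
    constructor
    · intro h a b hab
      exact h a b (snakeLE_iff.mpr hab)
    · intro h a b hab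
      exact h a b (snakeLE_iff.mp hab)
  rw [Nat.card_congr e1, Nat.card_eq_fintype_card, Fintype.card_subtype]
  rfl
set_option maxRecDepth 10000 in
lemma EE0 : (EE 0).card = 2 := by decide
set_option maxRecDepth 100000 in
lemma EE1 : (EE 1).card = 5 := by decide
lemma mem_EE {n : ℕ} {f : Fin (2*n+4) ≃ Fin (2*n+4)} : f ∈ EE n ↔ okE n f := by
  simp [EE]

lemma EE_min (n : ℕ) {f : Fin (2*n+4) ≃ Fin (2*n+4)} (hf : f ∈ EE n) :
    (f ⟨2*n+3, by omega⟩).1 = 0 := by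
  obtain ⟨x, hx⟩ := f.surjective ⟨0, by omega⟩
  have h := (mem_EE.mp hf) ⟨2*n+3, by omega⟩ x (by have := x.isLt; unfold LEq; simp only [Fin.val_mk]; omega)
  rw [hx] at h
  exact Nat.le_zero.mp (Fin.le_def.mp h)

lemma EE_vclaim (n : ℕ) (hn : 1 ≤ n) {f : Fin (2*n+4) ≃ Fin (2*n+4)} (hf : f ∈ EE n)
    (y : Fin (2*n+4)) (hy : (f y).1 < (f ⟨2*n+2, by omega⟩).1) (hy0 : (f y).1 ≠ 0) :
    y.1 = 2*n ∨ y.1 = 2*n+1 := by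
  have hlt := y.isLt
  by_contra hcon
  push_neg at hcon
  rcases Nat.lt_or_ge y.1 (2*n) with hle | hge
  · have h := (mem_EE.mp hf) ⟨2*n+2, by omega⟩ y (by unfold LEq; simp only [Fin.val_mk]; omega)
    have := Fin.le_def.mp h
    omega
  · have : y.1 = 2*n+2 ∨ y.1 = 2*n+3 := by omega
    rcases this with h | h
    · have : y = ⟨2*n+2, by omega⟩ := Fin.ext h
      rw [this] at hy
      exact absurd hy (lt_irrefl _)
    · have : y = ⟨2*n+3, by omega⟩ := Fin.ext h
      rw [this] at hy0
      exact hy0 (EE_min n hf)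

lemma EE_v_bounds (n : ℕ) (hn : 1 ≤ n) {f : Fin (2*n+4) ≃ Fin (2*n+4)} (hf : f ∈ EE n) :
    1 ≤ (f ⟨2*n+2, by omega⟩).1 ∧ (f ⟨2*n+2, by omega⟩).1 ≤ 3 := by
  constructor
  · have hne : f ⟨2*n+2, by omega⟩ ≠ f ⟨2*n+3, by omega⟩ := by
      intro h
      have h2 := Fin.val_eq_of_eq (f.injective h)
      simp only [Fin.val_mk] at h2
      omega
    have h0 := EE_min n hf
    have : (f ⟨2*n+2, by omega⟩).1 ≠ 0 := by
      intro h
      exact hne (Fin.ext (by rw [h, h0]))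
    omega
  · by_contra h4
    push_neg at h4
    set y1 := f.symm ⟨1, by omega⟩ with hy1
    set y2 := f.symm ⟨2, by omega⟩ with hy2
    set y3 := f.symm ⟨3, by omega⟩ with hy3
    have e1 : (f y1).1 = 1 := by rw [hy1, Equiv.apply_symm_apply]
    have e2 : (f y2).1 = 2 := by rw [hy2, Equiv.apply_symm_apply]
    have e3 : (f y3).1 = 3 := by rw [hy3, Equiv.apply_symm_apply]
    have c1 := EE_vclaim n hn hf y1 (by omega) (by omega)
    have c2 := EE_vclaim n hn hf y2 (by omega) (by omega)
    have c3 := EE_vclaim n hn hf y3 (by omega) (by omega)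
    have d12 : y1.1 ≠ y2.1 := fun h => by
      have : y1 = y2 := Fin.ext h
      rw [this] at e1; omega
    have d13 : y1.1 ≠ y3.1 := fun h => by
      have : y1 = y3 := Fin.ext h
      rw [this] at e1; omega
    have d23 : y2.1 ≠ y3.1 := fun h => by
      have : y2 = y3 := Fin.ext h
      rw [this] at e2; omega
    omega

lemma EE_v3 (n : ℕ) (hn : 1 ≤ n) {f : Fin (2*n+4) ≃ Fin (2*n+4)} (hf : f ∈ EE n)
    (h3 : (f ⟨2*n+2, by omega⟩).1 = 3) :
    (f ⟨2*n+1, by omega⟩).1 = 1 ∧ (f ⟨2*n, by omega⟩).1 = 2 := by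
  set y1 := f.symm ⟨1, by omega⟩ with hy1
  set y2 := f.symm ⟨2, by omega⟩ with hy2
  have e1 : (f y1).1 = 1 := by rw [hy1, Equiv.apply_symm_apply]
  have e2 : (f y2).1 = 2 := by rw [hy2, Equiv.apply_symm_apply]
  have c1 := EE_vclaim n hn hf y1 (by omega) (by omega)
  have c2 := EE_vclaim n hn hf y2 (by omega) (by omega)
  have d12 : y1.1 ≠ y2.1 := fun h => by
    have : y1 = y2 := Fin.ext h
    rw [this] at e1; omega
  have hord := Fin.le_def.mp ((mem_EE.mp hf) ⟨2*n+1, by omega⟩ ⟨2*n, by omega⟩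
    (by unfold LEq; simp only [Fin.val_mk]; omega))
  have hne : (f ⟨2*n+1, by omega⟩).1 ≠ (f ⟨2*n, by omega⟩).1 := by
    intro h
    have : f ⟨2*n+1, by omega⟩ = f ⟨2*n, by omega⟩ := Fin.ext h
    have h2 := Fin.val_eq_of_eq (f.injective this)
    simp only [Fin.val_mk] at h2
    omega
  have k1 : (f ⟨2*n, by omega⟩).1 = 1 ∨ (f ⟨2*n+1, by omega⟩).1 = 1 := by
    rcases c1 with h | h
    · left
      have : y1 = ⟨2*n, by omega⟩ := Fin.ext h
      rw [← this]; exact e1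
    · right
      have : y1 = ⟨2*n+1, by omega⟩ := Fin.ext h
      rw [← this]; exact e1
  have k2 : (f ⟨2*n, by omega⟩).1 = 2 ∨ (f ⟨2*n+1, by omega⟩).1 = 2 := by
    rcases c2 with h | h
    · left
      have : y2 = ⟨2*n, by omega⟩ := Fin.ext h
      rw [← this]; exact e2
    · right
      have : y2 = ⟨2*n+1, by omega⟩ := Fin.ext h
      rw [← this]; exact e2
  omega
def dvk (k v : ℕ) : ℕ := if v < k then v - 1 else v - 2
def ivk (k u : ℕ) : ℕ := if u + 1 < k then u + 1 else u + 2

lemma dvk_ivk (k u : ℕ) : dvk k (ivk k u) = u := by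
  unfold dvk ivk; split_ifs <;> omega

lemma dvk_mono (k : ℕ) {v v' : ℕ} (h : v ≤ v') : dvk k v ≤ dvk k v' := by
  unfold dvk; split_ifs <;> omega

lemma ivk_mono (k : ℕ) {u u' : ℕ} (h : u ≤ u') : ivk k u ≤ ivk k u' := by
  unfold ivk; split_ifs <;> omega

lemma dvk_inj (k : ℕ) {v v' : ℕ} (h0 : v ≠ 0) (hkv : v ≠ k) (h0' : v' ≠ 0) (hkv' : v' ≠ k)
    (hk1 : 1 ≤ k) (hk2 : k ≤ 2) (h : dvk k v = dvk k v') : v = v' := by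
  unfold dvk at h; split_ifs at h <;> omega

lemma ivk_inj (k : ℕ) {u u' : ℕ} (h : ivk k u = ivk k u') : u = u' := by
  unfold ivk at h; split_ifs at h <;> omega

lemma ivk_ne_zero (k u : ℕ) : ivk k u ≠ 0 := by unfold ivk; split_ifs <;> omega

lemma ivk_ne_k (k u : ℕ) : ivk k u ≠ k := by unfold ivk; split_ifs <;> omega

lemma dvk_lt {k v N : ℕ} (hk : k ≤ 2) (hN : 2 ≤ N) (hv : v < N + 2) : dvk k v < N := by
  unfold dvk; split <;> omega

def PhiFun (p k : ℕ) (hk : k ≤ 2) (f : Fin (2*(p+1)+4) ≃ Fin (2*(p+1)+4)) :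
    Fin (2*p+4) → Fin (2*p+4) :=
  fun x => ⟨dvk k (f ⟨x.1, lt_of_lt_of_le x.isLt (by omega)⟩).1,
    dvk_lt hk (by omega)
      (lt_of_lt_of_le (f ⟨x.1, lt_of_lt_of_le x.isLt (by omega)⟩).isLt (by omega))⟩

lemma PhiFun_val (p k : ℕ) (hk : k ≤ 2) (f : Fin (2*(p+1)+4) ≃ Fin (2*(p+1)+4))
    (x : Fin (2*p+4)) (hx : x.1 < 2*(p+1)+4) :
    (PhiFun p k hk f x).1 = dvk k (f ⟨x.1, hx⟩).1 := rfl

def PsiFun (p k : ℕ) (hk : k ≤ 2) (g : Fin (2*p+4) ≃ Fin (2*p+4)) :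
    Fin (2*(p+1)+4) → Fin (2*(p+1)+4) :=
  fun x =>
    if h : x.1 < 2*p+4 then
      ⟨ivk k (g ⟨x.1, h⟩).1, by
        have := (g ⟨x.1, h⟩).isLt
        unfold ivk; split <;> omega⟩
    else if x.1 = 2*p+4 then ⟨k, by omega⟩ else ⟨0, by omega⟩

lemma PsiFun_val_lo (p k : ℕ) (hk : k ≤ 2) (g : Fin (2*p+4) ≃ Fin (2*p+4))
    (x : Fin (2*(p+1)+4)) (h : x.1 < 2*p+4) :
    (PsiFun p k hk g x).1 = ivk k (g ⟨x.1, h⟩).1 := by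
  unfold PsiFun; rw [dif_pos h]

lemma PsiFun_val_mid (p k : ℕ) (hk : k ≤ 2) (g : Fin (2*p+4) ≃ Fin (2*p+4))
    (x : Fin (2*(p+1)+4)) (h : x.1 = 2*p+4) :
    (PsiFun p k hk g x).1 = k := by
  unfold PsiFun; rw [dif_neg (by omega), if_pos h]

lemma PsiFun_val_hi (p k : ℕ) (hk : k ≤ 2) (g : Fin (2*p+4) ≃ Fin (2*p+4))
    (x : Fin (2*(p+1)+4)) (h : x.1 = 2*p+5) :
    (PsiFun p k hk g x).1 = 0 := by
  unfold PsiFun; rw [dif_neg (by omega), if_neg (by omega)]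

set_option maxHeartbeats 1000000 in
lemma B1 (p k : ℕ) (hk1 : 1 ≤ k) (hk2 : k ≤ 2) :
    ((EE (p+1)).filter (fun f => (f ⟨2*(p+1)+2, by omega⟩).1 = k)).card = (EE p).card := by
  -- facts about members of the fiber
  have hne : ∀ f : Fin (2*(p+1)+4) ≃ Fin (2*(p+1)+4),
      f ∈ (EE (p+1)).filter (fun f => (f ⟨2*(p+1)+2, by omega⟩).1 = k) →
      ∀ z : Fin (2*(p+1)+4), z.1 < 2*p+4 →
        (f z).1 ≠ 0 ∧ (f z).1 ≠ k := by
    intro f hf z hz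
    obtain ⟨hfE, hfk⟩ := Finset.mem_filter.mp hf
    have h0 := EE_min (p+1) hfE
    constructor
    · intro hc
      have : f z = f ⟨2*(p+1)+3, by omega⟩ := Fin.ext (by rw [hc, h0])
      have h2 := Fin.val_eq_of_eq (f.injective this)
      simp only [Fin.val_mk] at h2
      omega
    · intro hc
      have : f z = f ⟨2*(p+1)+2, by omega⟩ := Fin.ext (by rw [hc, hfk])
      have h2 := Fin.val_eq_of_eq (f.injective this)
      simp only [Fin.val_mk] at h2
      omega
  have key : ∀ f (hf : f ∈ (EE (p+1)).filter (fun f => (f ⟨2*(p+1)+2, by omega⟩).1 = k)),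
      Function.Bijective (PhiFun p k hk2 f) := by
    intro f hf
    apply Finite.injective_iff_bijective.mp
    intro x y hxy
    have hval := Fin.val_eq_of_eq hxy
    rw [PhiFun_val p k hk2 f x (by omega), PhiFun_val p k hk2 f y (by omega)] at hval
    have hx := hne f hf ⟨x.1, by omega⟩ x.isLt
    have hy := hne f hf ⟨y.1, by omega⟩ y.isLt
    have hv := dvk_inj k hx.1 hx.2 hy.1 hy.2 hk1 hk2 hval
    have : (⟨x.1, by omega⟩ : Fin (2*(p+1)+4)) = ⟨y.1, by omega⟩ :=
      f.injective (Fin.ext hv)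
    exact Fin.ext (by simpa using Fin.val_eq_of_eq this)
  refine Finset.card_bij (fun f hf => Equiv.ofBijective (PhiFun p k hk2 f) (key f hf))
    ?_ ?_ ?_
  · -- membership
    intro f hf
    obtain ⟨hfE, hfk⟩ := Finset.mem_filter.mp hf
    rw [mem_EE]
    intro a b hab
    have hab' : LEq (p+1) a.1 b.1 := by unfold LEq at hab ⊢; omega
    have hle := (mem_EE.mp hfE) ⟨a.1, by omega⟩ ⟨b.1, by omega⟩ hab'
    simp only [Equiv.ofBijective_apply]
    rw [Fin.le_def, PhiFun_val p k hk2 f a (by omega), PhiFun_val p k hk2 f b (by omega)]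
    exact dvk_mono k (Fin.le_def.mp hle)
  · -- injectivity
    intro f1 h1 f2 h2 heq
    have point : ∀ y : Fin (2*p+4),
        dvk k (f1 ⟨y.1, by omega⟩).1 = dvk k (f2 ⟨y.1, by omega⟩).1 := by
      intro y
      have := congrArg (fun e : Fin (2*p+4) ≃ Fin (2*p+4) => (e y).1) heq
      simpa only [Equiv.ofBijective_apply, PhiFun_val p k hk2 f1 y (by omega),
        PhiFun_val p k hk2 f2 y (by omega)] using this
    obtain ⟨h1E, h1k⟩ := Finset.mem_filter.mp h1
    obtain ⟨h2E, h2k⟩ := Finset.mem_filter.mp h2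
    apply Equiv.ext
    intro x
    rcases (by omega : x.1 < 2*p+4 ∨ x.1 = 2*p+4 ∨ x.1 = 2*p+5) with hx | hx | hx
    · have hp := point ⟨x.1, hx⟩
      have e1 := hne f1 h1 x hx
      have e2 := hne f2 h2 x hx
      have : (f1 ⟨x.1, by omega⟩).1 = (f2 ⟨x.1, by omega⟩).1 := by
        apply dvk_inj k _ _ _ _ hk1 hk2 hp
        · exact (hne f1 h1 ⟨x.1, by omega⟩ hx).1
        · exact (hne f1 h1 ⟨x.1, by omega⟩ hx).2
        · exact (hne f2 h2 ⟨x.1, by omega⟩ hx).1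
        · exact (hne f2 h2 ⟨x.1, by omega⟩ hx).2
      have hxe : (⟨x.1, by omega⟩ : Fin (2*(p+1)+4)) = x := Fin.ext rfl
      rw [hxe] at this
      exact Fin.ext this
    · have hxe : x = (⟨2*(p+1)+2, by omega⟩ : Fin (2*(p+1)+4)) :=
        Fin.ext (by simp only [Fin.val_mk]; omega)
      rw [hxe]
      exact Fin.ext (by rw [h1k, h2k])
    · have hxe : x = (⟨2*(p+1)+3, by omega⟩ : Fin (2*(p+1)+4)) :=
        Fin.ext (by simp only [Fin.val_mk]; omega)
      rw [hxe]
      exact Fin.ext (by rw [EE_min (p+1) h1E, EE_min (p+1) h2E])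
  · -- surjectivity
    intro g hg
    have hginj : Function.Injective (PsiFun p k hk2 g) := by
      intro x y hxy
      unfold PsiFun at hxy
      have hv := Fin.val_eq_of_eq hxy
      clear hxy
      split_ifs at hv with ha hb hc hd he hf'
      · simp only [Fin.val_mk] at hv
        have := Fin.val_eq_of_eq (g.injective (Fin.ext (ivk_inj k hv)))
        simp only [Fin.val_mk] at this
        exact Fin.ext this
      · simp only [Fin.val_mk] at hv
        exact absurd hv (ivk_ne_k k _)
      · simp only [Fin.val_mk] at hv
        exact absurd hv (ivk_ne_zero k _)
      · simp only [Fin.val_mk] at hv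
        exact absurd hv.symm (ivk_ne_k k _)
      · exact Fin.ext (by omega)
      · simp only [Fin.val_mk] at hv
        omega
      · simp only [Fin.val_mk] at hv
        exact absurd hv.symm (ivk_ne_zero k _)
      · simp only [Fin.val_mk] at hv
        omega
      · exact Fin.ext (by omega)
    set f : Fin (2*(p+1)+4) ≃ Fin (2*(p+1)+4) :=
      Equiv.ofBijective _ (Finite.injective_iff_bijective.mp hginj) with hfdef
    have hfapp : ∀ x, f x = PsiFun p k hk2 g x := fun x => rfl
    have hfmem : f ∈ (EE (p+1)).filter (fun f => (f ⟨2*(p+1)+2, by omega⟩).1 = k) := by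
      rw [Finset.mem_filter]
      constructor
      · rw [mem_EE]
        intro a b hab
        rcases hab with heq | ⟨ha, hb, hcond⟩
        · have : a = b := Fin.ext heq.symm
          rw [this]
        · rw [Fin.le_def]
          rcases (by omega : a.1 = 2*p+5 ∨ a.1 = 2*p+4 ∨ a.1 < 2*p+4) with hx | hx | hx
          · rw [hfapp, PsiFun_val_hi p k hk2 g a hx]
            exact Nat.zero_le _
          · have hb4 : b.1 + 2 < 2*p+4 := by omega
            rw [hfapp, hfapp, PsiFun_val_mid p k hk2 g a hx,
              PsiFun_val_lo p k hk2 g b (by omega)]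
            have hu0 : (g ⟨b.1, by omega⟩).1 ≠ 0 := by
              intro hc
              have : g ⟨b.1, by omega⟩ = g ⟨2*p+3, by omega⟩ :=
                Fin.ext (by rw [hc, EE_min p hg])
              have h2 := Fin.val_eq_of_eq (g.injective this)
              simp only [Fin.val_mk] at h2
              omega
            unfold ivk; split <;> omega
          · have hab' : LEq p a.1 b.1 := by unfold LEq; omega
            have hle := (mem_EE.mp hg) ⟨a.1, hx⟩ ⟨b.1, by omega⟩ hab'
            rw [hfapp, hfapp, PsiFun_val_lo p k hk2 g a hx,
              PsiFun_val_lo p k hk2 g b (by omega)]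
            exact ivk_mono k (Fin.le_def.mp hle)
      · rw [hfapp]
        exact PsiFun_val_mid p k hk2 g _ (show 2*(p+1)+2 = 2*p+4 by omega)
    refine ⟨f, hfmem, ?_⟩
    apply Equiv.ext
    intro x
    apply Fin.ext
    rw [Equiv.ofBijective_apply, PhiFun_val p k hk2 f x (by omega), hfapp,
      PsiFun_val_lo p k hk2 g _ (by simpa using x.isLt), dvk_ivk]
def Phi2Fun (p : ℕ) (f : Fin (2*(p+2)+4) ≃ Fin (2*(p+2)+4)) :
    Fin (2*p+4) → Fin (2*p+4) :=
  fun x => ⟨(f ⟨x.1, lt_of_lt_of_le x.isLt (by omega)⟩).1 - 4, by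
    have := (f ⟨x.1, lt_of_lt_of_le x.isLt (by omega)⟩).isLt
    omega⟩

lemma Phi2Fun_val (p : ℕ) (f : Fin (2*(p+2)+4) ≃ Fin (2*(p+2)+4))
    (x : Fin (2*p+4)) (hx : x.1 < 2*(p+2)+4) :
    (Phi2Fun p f x).1 = (f ⟨x.1, hx⟩).1 - 4 := rfl

def Psi2Fun (p : ℕ) (g : Fin (2*p+4) ≃ Fin (2*p+4)) :
    Fin (2*(p+2)+4) → Fin (2*(p+2)+4) :=
  fun x =>
    if h : x.1 < 2*p+4 then
      ⟨(g ⟨x.1, h⟩).1 + 4, by have := (g ⟨x.1, h⟩).isLt; omega⟩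
    else if x.1 = 2*p+4 then ⟨2, by omega⟩
    else if x.1 = 2*p+5 then ⟨1, by omega⟩
    else if x.1 = 2*p+6 then ⟨3, by omega⟩
    else ⟨0, by omega⟩

lemma Psi2Fun_val_lo (p : ℕ) (g : Fin (2*p+4) ≃ Fin (2*p+4))
    (x : Fin (2*(p+2)+4)) (h : x.1 < 2*p+4) :
    (Psi2Fun p g x).1 = (g ⟨x.1, h⟩).1 + 4 := by
  unfold Psi2Fun; rw [dif_pos h]

lemma Psi2Fun_val_m4 (p : ℕ) (g : Fin (2*p+4) ≃ Fin (2*p+4))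
    (x : Fin (2*(p+2)+4)) (h : x.1 = 2*p+4) :
    (Psi2Fun p g x).1 = 2 := by
  unfold Psi2Fun; rw [dif_neg (by omega), if_pos h]

lemma Psi2Fun_val_m5 (p : ℕ) (g : Fin (2*p+4) ≃ Fin (2*p+4))
    (x : Fin (2*(p+2)+4)) (h : x.1 = 2*p+5) :
    (Psi2Fun p g x).1 = 1 := by
  unfold Psi2Fun; rw [dif_neg (by omega), if_neg (by omega), if_pos h]

lemma Psi2Fun_val_m6 (p : ℕ) (g : Fin (2*p+4) ≃ Fin (2*p+4))
    (x : Fin (2*(p+2)+4)) (h : x.1 = 2*p+6) :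
    (Psi2Fun p g x).1 = 3 := by
  unfold Psi2Fun; rw [dif_neg (by omega), if_neg (by omega), if_neg (by omega), if_pos h]

lemma Psi2Fun_val_hi (p : ℕ) (g : Fin (2*p+4) ≃ Fin (2*p+4))
    (x : Fin (2*(p+2)+4)) (h : x.1 = 2*p+7) :
    (Psi2Fun p g x).1 = 0 := by
  unfold Psi2Fun
  rw [dif_neg (by omega), if_neg (by omega), if_neg (by omega), if_neg (by omega)]

set_option maxHeartbeats 8000000 in
lemma B2 (p : ℕ) :
    ((EE (p+2)).filter (fun f => (f ⟨2*(p+2)+2, by omega⟩).1 = 3)).card = (EE p).card := by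
  have hne : ∀ f : Fin (2*(p+2)+4) ≃ Fin (2*(p+2)+4),
      f ∈ (EE (p+2)).filter (fun f => (f ⟨2*(p+2)+2, by omega⟩).1 = 3) →
      ∀ z : Fin (2*(p+2)+4), z.1 < 2*p+4 → 4 ≤ (f z).1 := by
    intro f hf z hz
    obtain ⟨hfE, hfk⟩ := Finset.mem_filter.mp hf
    have h0 := EE_min (p+2) hfE
    have h12 := EE_v3 (p+2) (by omega) hfE hfk
    by_contra hc
    push_neg at hc
    have h4 : (f z).1 = 0 ∨ (f z).1 = 1 ∨ (f z).1 = 2 ∨ (f z).1 = 3 := by omega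
    rcases h4 with h | h | h | h
    · have : f z = f ⟨2*(p+2)+3, by omega⟩ := Fin.ext (by rw [h, h0])
      have h2 := Fin.val_eq_of_eq (f.injective this)
      simp only [Fin.val_mk] at h2
      omega
    · have : f z = f ⟨2*(p+2)+1, by omega⟩ := Fin.ext (by rw [h, h12.1])
      have h2 := Fin.val_eq_of_eq (f.injective this)
      simp only [Fin.val_mk] at h2
      omega
    · have : f z = f ⟨2*(p+2), by omega⟩ := Fin.ext (by rw [h, h12.2])
      have h2 := Fin.val_eq_of_eq (f.injective this)
      simp only [Fin.val_mk] at h2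
      omega
    · have : f z = f ⟨2*(p+2)+2, by omega⟩ := Fin.ext (by rw [h, hfk])
      have h2 := Fin.val_eq_of_eq (f.injective this)
      simp only [Fin.val_mk] at h2
      omega
  have key : ∀ f (hf : f ∈ (EE (p+2)).filter (fun f => (f ⟨2*(p+2)+2, by omega⟩).1 = 3)),
      Function.Bijective (Phi2Fun p f) := by
    intro f hf
    apply Finite.injective_iff_bijective.mp
    intro x y hxy
    have hval := Fin.val_eq_of_eq hxy
    rw [Phi2Fun_val p f x (by omega), Phi2Fun_val p f y (by omega)] at hval
    have hx := hne f hf ⟨x.1, by omega⟩ x.isLt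
    have hy := hne f hf ⟨y.1, by omega⟩ y.isLt
    have hv : (f ⟨x.1, by omega⟩).1 = (f ⟨y.1, by omega⟩).1 := by omega
    have : (⟨x.1, by omega⟩ : Fin (2*(p+2)+4)) = ⟨y.1, by omega⟩ :=
      f.injective (Fin.ext hv)
    exact Fin.ext (by simpa using Fin.val_eq_of_eq this)
  refine Finset.card_bij (fun f hf => Equiv.ofBijective (Phi2Fun p f) (key f hf))
    ?_ ?_ ?_
  · intro f hf
    obtain ⟨hfE, hfk⟩ := Finset.mem_filter.mp hf
    rw [mem_EE]
    intro a b hab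
    have hab' : LEq (p+2) a.1 b.1 := by unfold LEq at hab ⊢; omega
    have hle := (mem_EE.mp hfE) ⟨a.1, by omega⟩ ⟨b.1, by omega⟩ hab'
    simp only [Equiv.ofBijective_apply]
    rw [Fin.le_def, Phi2Fun_val p f a (by omega), Phi2Fun_val p f b (by omega)]
    exact Nat.sub_le_sub_right (Fin.le_def.mp hle) 4
  · intro f1 h1 f2 h2 heq
    obtain ⟨h1E, h1k⟩ := Finset.mem_filter.mp h1
    obtain ⟨h2E, h2k⟩ := Finset.mem_filter.mp h2
    have ha1 := EE_v3 (p+2) (by omega) h1E h1k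
    have ha2 := EE_v3 (p+2) (by omega) h2E h2k
    apply Equiv.ext
    intro x
    rcases (by omega : x.1 < 2*p+4 ∨ x.1 = 2*p+4 ∨ x.1 = 2*p+5 ∨ x.1 = 2*p+6 ∨
      x.1 = 2*p+7) with hx | hx | hx | hx | hx
    · have hp := congrArg (fun e : Fin (2*p+4) ≃ Fin (2*p+4) => (e ⟨x.1, hx⟩).1) heq
      simp only [Equiv.ofBijective_apply,
        Phi2Fun_val p f1 ⟨x.1, hx⟩ (by omega), Phi2Fun_val p f2 ⟨x.1, hx⟩ (by omega)] at hp
      have e1 := hne f1 h1 ⟨x.1, by omega⟩ hx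
      have e2 := hne f2 h2 ⟨x.1, by omega⟩ hx
      have hv : (f1 ⟨x.1, by omega⟩).1 = (f2 ⟨x.1, by omega⟩).1 := by omega
      have hxe : (⟨x.1, by omega⟩ : Fin (2*(p+2)+4)) = x := Fin.ext rfl
      rw [hxe] at hv
      exact Fin.ext hv
    · have hxe : x = (⟨2*(p+2), by omega⟩ : Fin (2*(p+2)+4)) :=
        Fin.ext (by simp only [Fin.val_mk]; omega)
      rw [hxe]
      exact Fin.ext (by rw [ha1.2, ha2.2])
    · have hxe : x = (⟨2*(p+2)+1, by omega⟩ : Fin (2*(p+2)+4)) :=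
        Fin.ext (by simp only [Fin.val_mk]; omega)
      rw [hxe]
      exact Fin.ext (by rw [ha1.1, ha2.1])
    · have hxe : x = (⟨2*(p+2)+2, by omega⟩ : Fin (2*(p+2)+4)) :=
        Fin.ext (by simp only [Fin.val_mk]; omega)
      rw [hxe]
      exact Fin.ext (by rw [h1k, h2k])
    · have hxe : x = (⟨2*(p+2)+3, by omega⟩ : Fin (2*(p+2)+4)) :=
        Fin.ext (by simp only [Fin.val_mk]; omega)
      rw [hxe]
      exact Fin.ext (by rw [EE_min (p+2) h1E, EE_min (p+2) h2E])
  · intro g hg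
    have hginj : Function.Injective (Psi2Fun p g) := by
      have hdec : ∀ x : Fin (2*(p+2)+4),
          (fun v : ℕ => if v = 0 then 2*p+7 else if v = 1 then 2*p+5 else
            if v = 2 then 2*p+4 else if v = 3 then 2*p+6 else
            (g.symm ⟨(v-4) % (2*p+4), Nat.mod_lt _ (by omega)⟩).1)
            ((Psi2Fun p g x).1) = x.1 := by
        intro x
        rcases (by omega : x.1 < 2*p+4 ∨ x.1 = 2*p+4 ∨ x.1 = 2*p+5 ∨ x.1 = 2*p+6 ∨
          x.1 = 2*p+7) with hx | hx | hx | hx | hx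
        · rw [Psi2Fun_val_lo p g x hx]
          simp only []
          rw [if_neg (by omega), if_neg (by omega), if_neg (by omega), if_neg (by omega)]
          have h1 : ((g ⟨x.1, hx⟩).1 + 4 - 4) % (2*p+4) = (g ⟨x.1, hx⟩).1 := by
            rw [Nat.add_sub_cancel]
            exact Nat.mod_eq_of_lt (g ⟨x.1, hx⟩).isLt
          have h2 : (⟨((g ⟨x.1, hx⟩).1 + 4 - 4) % (2*p+4), Nat.mod_lt _ (by omega)⟩ :
              Fin (2*p+4)) = g ⟨x.1, hx⟩ := Fin.ext (by simp only [Fin.val_mk]; exact h1)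
          rw [h2, Equiv.symm_apply_apply]
        · rw [Psi2Fun_val_m4 p g x hx]
          norm_num
          omega
        · rw [Psi2Fun_val_m5 p g x hx]
          norm_num
          omega
        · rw [Psi2Fun_val_m6 p g x hx]
          norm_num
          omega
        · rw [Psi2Fun_val_hi p g x hx]
          norm_num
          omega
      intro x y hxy
      have h1 := hdec x
      have h2 := hdec y
      rw [congrArg Fin.val hxy] at h1
      exact Fin.ext (h1.symm.trans h2)
    set f : Fin (2*(p+2)+4) ≃ Fin (2*(p+2)+4) :=
      Equiv.ofBijective _ (Finite.injective_iff_bijective.mp hginj) with hfdef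
    have hfapp : ∀ x, f x = Psi2Fun p g x := fun x => rfl
    have hfmem : f ∈ (EE (p+2)).filter (fun f => (f ⟨2*(p+2)+2, by omega⟩).1 = 3) := by
      rw [Finset.mem_filter]
      constructor
      · rw [mem_EE]
        intro a b hab
        rcases hab with heq | ⟨ha, hb, hcond⟩
        · have : a = b := Fin.ext heq.symm
          rw [this]
        · rw [Fin.le_def]
          rcases (by omega : a.1 = 2*p+7 ∨ a.1 = 2*p+6 ∨ a.1 = 2*p+5 ∨ a.1 = 2*p+4 ∨
            a.1 < 2*p+4) with hx | hx | hx | hx | hx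
          · rw [hfapp, Psi2Fun_val_hi p g a hx]
            exact Nat.zero_le _
          · have hb4 : b.1 < 2*p+4 := by omega
            rw [hfapp, hfapp, Psi2Fun_val_m6 p g a hx, Psi2Fun_val_lo p g b hb4]
            omega
          · rw [hfapp, Psi2Fun_val_m5 p g a hx]
            rcases (by omega : b.1 = 2*p+4 ∨ b.1 < 2*p+4) with hbx | hbx
            · rw [hfapp, Psi2Fun_val_m4 p g b hbx]
              omega
            · rw [hfapp, Psi2Fun_val_lo p g b hbx]
              omega
          · have hb4 : b.1 < 2*p+4 := by omega
            rw [hfapp, hfapp, Psi2Fun_val_m4 p g a hx, Psi2Fun_val_lo p g b hb4]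
            omega
          · have hab' : LEq p a.1 b.1 := by unfold LEq; omega
            have hle := (mem_EE.mp hg) ⟨a.1, hx⟩ ⟨b.1, by omega⟩ hab'
            rw [hfapp, hfapp, Psi2Fun_val_lo p g a hx, Psi2Fun_val_lo p g b (by omega)]
            have := Fin.le_def.mp hle
            omega
      · rw [hfapp]
        exact Psi2Fun_val_m6 p g _ (show 2*(p+2)+2 = 2*p+6 by omega)
    refine ⟨f, hfmem, ?_⟩
    apply Equiv.ext
    intro x
    apply Fin.ext
    rw [Equiv.ofBijective_apply, Phi2Fun_val p f x (by omega), hfapp,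
      Psi2Fun_val_lo p g _ (by simpa using x.isLt)]
    simp only [Fin.eta]
    omega
set_option maxHeartbeats 400000 in
lemma partA (p : ℕ) : (EE (p+2)).card = ∑ k ∈ ({1,2,3} : Finset ℕ),
      ((EE (p+2)).filter (fun f => (f ⟨2*(p+2)+2, by omega⟩).1 = k)).card := by
  apply Finset.card_eq_sum_card_fiberwise
  intro f hf
  have hb := EE_v_bounds (p+2) (by omega) hf
  simp only [Finset.mem_coe, Finset.mem_insert, Finset.mem_singleton]
  omega

set_option maxHeartbeats 400000 in
lemma partB (p : ℕ) : (EE (p+2)).card =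
    ((EE (p+2)).filter (fun f => (f ⟨2*(p+2)+2, by omega⟩).1 = 1)).card +
    (((EE (p+2)).filter (fun f => (f ⟨2*(p+2)+2, by omega⟩).1 = 2)).card +
     ((EE (p+2)).filter (fun f => (f ⟨2*(p+2)+2, by omega⟩).1 = 3)).card) := by
  have part := partA p
  rw [Finset.sum_insert (by decide), Finset.sum_insert (by decide),
    Finset.sum_singleton] at part
  exact part

set_option maxHeartbeats 400000 in
lemma EEcard_rec (p : ℕ) : (EE (p+2)).card = 2 * (EE (p+1)).card + (EE p).card := by
  have hB1 : ((EE (p+2)).filter (fun f => (f ⟨2*(p+2)+2, by omega⟩).1 = 1)).card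
      = (EE (p+1)).card := B1 (p+1) 1 (by omega) (by omega)
  have hB2' : ((EE (p+2)).filter (fun f => (f ⟨2*(p+2)+2, by omega⟩).1 = 2)).card
      = (EE (p+1)).card := B1 (p+1) 2 (by omega) (by omega)
  have hB3 : ((EE (p+2)).filter (fun f => (f ⟨2*(p+2)+2, by omega⟩).1 = 3)).card
      = (EE p).card := B2 p
  have hs := partB p
  rw [hB1, hB2', hB3] at hs
  omega
theorem stmt4 :
    linExtCount 0 altWord = 2 ∧ linExtCount 1 altWord = 5 ∧
      ∀ n, 2 ≤ n →
        linExtCount n altWord =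
          2 * linExtCount (n - 1) altWord + linExtCount (n - 2) altWord := by
  refine ⟨?_, ?_, ?_⟩
  · rw [linExtCount_eq]; exact EE0
  · rw [linExtCount_eq]; exact EE1
  · intro n hn
    obtain ⟨p, rfl⟩ : ∃ p, n = p+2 := ⟨n-2, by omega⟩
    rw [linExtCount_eq, linExtCount_eq, linExtCount_eq]
    have h1 : p+2-1 = p+1 := by omega
    have h2 : p+2-2 = p := by omega
    rw [h1, h2]
    exact EEcard_rec p
end

section
/- Let 𝓛_n := P(εLL⋯L) denote the ladder poset, built from the generalized snake word of length n all of whose letters are L. Then for all n ≥ 0, e(𝓛_n) = Cat(n+2), the (n+2)-nd Catalan number Cat(m) = (1/(m+1))·binomial(2m, m); i.e., the normalized volume of the order polytope O(𝓛_n) equals Cat(n+2). -/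
section Ladder

/-- Column of an element of the ladder poset. -/
def lcol (a : ℕ) : ℕ :=
  if a = 2 then 0 else if a ≤ 1 then 1 else if a % 2 = 0 then 1 else 0

/-- Height of an element of the ladder poset within its column. -/
def lht (n a : ℕ) : ℕ :=
  if a = 0 then n + 1 else if a = 1 then n else if a = 2 then n + 1 else n + 1 - a / 2

/-- The element of the ladder poset in column `c` at height `j`. -/
def lelt (n c j : ℕ) : ℕ :=
  if j = n + 1 then (if c = 0 then 2 else 0)
  else if c = 1 ∧ j = n then 1
  else 2 * (n + 1 - j) + (1 - c)

lemma lelt_lt {n c j : ℕ} (hj : j ≤ n + 1) : lelt n c j < 2 * n + 4 := by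
  unfold lelt; split_ifs <;> first | omega | simp_all

lemma lcol_le (a : ℕ) : lcol a ≤ 1 := by unfold lcol; split_ifs <;> first | omega | simp_all

lemma lht_le {n a : ℕ} (ha : a < 2 * n + 4) : lht n a ≤ n + 1 := by
  unfold lht; split_ifs <;> first | omega | simp_all

lemma lcol_lelt {n c j : ℕ} (hc : c ≤ 1) (hj : j ≤ n + 1) : lcol (lelt n c j) = c := by
  unfold lelt lcol; split_ifs <;> first | omega | simp_all

lemma lht_lelt {n c j : ℕ} (hc : c ≤ 1) (hj : j ≤ n + 1) : lht n (lelt n c j) = j := by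
  unfold lelt lht; split_ifs <;> first | omega | simp_all

lemma lelt_lcol_lht {n a : ℕ} (ha : a < 2 * n + 4) : lelt n (lcol a) (lht n a) = a := by
  unfold lcol lht lelt; split_ifs <;> first | omega | simp_all

lemma lelt_inj {n c j c' j' : ℕ} (hc : c ≤ 1) (hj : j ≤ n + 1) (hc' : c' ≤ 1)
    (hj' : j' ≤ n + 1) (h : lelt n c j = lelt n c' j') : c = c' ∧ j = j' := by
  constructor
  · rw [← lcol_lelt hc hj, h, lcol_lelt hc' hj']
  · rw [← lht_lelt hc hj, h, lht_lelt hc' hj']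

/-- The relabelling of the ladder poset by column and height. -/
def lE (n : ℕ) : Fin 2 × Fin (n + 2) ≃ Fin (2 * n + 4) where
  toFun x := ⟨lelt n x.1 x.2, lelt_lt (by omega)⟩
  invFun a := (⟨lcol a, by have := lcol_le a.1; omega⟩, ⟨lht n a, by have := lht_le a.2; omega⟩)
  left_inv x := by
    have h1 : (x.1 : ℕ) ≤ 1 := by omega
    have h2 : (x.2 : ℕ) ≤ n + 1 := by omega
    ext
    · exact lcol_lelt h1 h2
    · exact lht_lelt h1 h2
  right_inv a := by
    ext
    exact lelt_lcol_lht a.2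

/-- The all-`L` word. -/
abbrev wL : ℕ → Letter := fun _ => Letter.L

lemma snakeSide_L {m : ℕ} (hm : 1 ≤ m) :
    snakeSide wL m = if m = 1 then 1 else 2 * m := by
  unfold snakeSide wL
  split_ifs <;> first | omega | simp_all

lemma cov_up {n c j : ℕ} (hc : c ≤ 1) (hj : j ≤ n) :
    SnakeCov n wL (lelt n c j) (lelt n c (j + 1)) := by
  interval_cases c
  · rcases Nat.lt_or_ge j n with h | h
    · have h1 : lelt n 0 j = 2 * (n - j) + 3 := by unfold lelt; split_ifs <;> first | omega | simp_all
      have h2 : lelt n 0 (j + 1) = 2 * (n - j) + 1 := by unfold lelt; split_ifs <;> first | omega | simp_all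
      rw [h1, h2]
      exact SnakeCov.covOdd (n - j) (by omega) (by omega)
    · have hj' : j = n := by omega
      have h1 : lelt n 0 j = 3 := by unfold lelt; split_ifs <;> first | omega | simp_all
      have h2 : lelt n 0 (j + 1) = 2 := by unfold lelt; split_ifs <;> first | omega | simp_all
      rw [h1, h2]; exact SnakeCov.cov32
  · rcases Nat.lt_or_ge (j + 1) n with h | h
    · -- lelt n 1 j = 2*(n-j)+2 with n-j ≥ 2
      have h1 : lelt n 1 j = 2 * (n - j) + 2 := by unfold lelt; split_ifs <;> first | omega | simp_all
      have h2 : lelt n 1 (j + 1) = snakeSide wL (n - j) := by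
        rw [snakeSide_L (by omega)]
        unfold lelt; split_ifs <;> first | omega | simp_all
      rw [h1, h2]
      exact SnakeCov.covSide (n - j) (by omega) (by omega)
    · rcases Nat.lt_or_ge j n with h' | h'
      · -- j + 1 = n : 4 ≺ 1
        have h1 : lelt n 1 j = 2 * 1 + 2 := by unfold lelt; split_ifs <;> first | omega | simp_all
        have h2 : lelt n 1 (j + 1) = snakeSide wL 1 := by
          rw [snakeSide_L (by omega)]
          unfold lelt; split_ifs <;> first | omega | simp_all
        rw [h1, h2]
        exact SnakeCov.covSide 1 (by omega) (by omega)
      · -- j = n : 1 ≺ 0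
        have h1 : lelt n 1 j = 1 := by unfold lelt; split_ifs <;> first | omega | simp_all
        have h2 : lelt n 1 (j + 1) = 0 := by unfold lelt; split_ifs <;> first | omega | simp_all
        rw [h1, h2]; exact SnakeCov.cov10

lemma cov_cross {n j : ℕ} (hj : j ≤ n + 1) :
    SnakeCov n wL (lelt n 0 j) (lelt n 1 j) := by
  rcases Nat.lt_or_ge j n with h | h
  · have h1 : lelt n 0 j = 2 * (n - j) + 3 := by unfold lelt; split_ifs <;> first | omega | simp_all
    have h2 : lelt n 1 j = 2 * (n - j) + 2 := by unfold lelt; split_ifs <;> first | omega | simp_all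
    rw [h1, h2]
    exact SnakeCov.covBot (n - j) (by omega) (by omega)
  · rcases Nat.lt_or_ge j (n + 1) with h' | h'
    · have h1 : lelt n 0 j = 3 := by unfold lelt; split_ifs <;> first | omega | simp_all
      have h2 : lelt n 1 j = 1 := by unfold lelt; split_ifs <;> first | omega | simp_all
      rw [h1, h2]; exact SnakeCov.cov31
    · have h1 : lelt n 0 j = 2 := by unfold lelt; split_ifs <;> first | omega | simp_all
      have h2 : lelt n 1 j = 0 := by unfold lelt; split_ifs <;> first | omega | simp_all
      rw [h1, h2]; exact SnakeCov.cov20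

lemma le_chain {n c : ℕ} (hc : c ≤ 1) {j j' : ℕ} (hjj : j ≤ j') (hj' : j' ≤ n + 1) :
    SnakeLE n wL (lelt n c j) (lelt n c j') := by
  induction j' with
  | zero => have : j = 0 := by omega
            subst this; exact Relation.ReflTransGen.refl
  | succ k ih =>
    rcases Nat.lt_or_ge j (k + 1) with h | h
    · exact (ih (by omega) (by omega)).tail (cov_up hc (by omega))
    · have : j = k + 1 := by omega
      subst this; exact Relation.ReflTransGen.refl

lemma le_cross {n j j' : ℕ} (hjj : j ≤ j') (hj' : j' ≤ n + 1) :
    SnakeLE n wL (lelt n 0 j) (lelt n 1 j') :=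
  (le_chain (by omega) hjj hj').tail (cov_cross hj')

lemma cov_coord {n a b : ℕ} (h : SnakeCov n wL a b) :
    lcol a ≤ lcol b ∧ lht n a ≤ lht n b ∧ a < 2 * n + 4 ∧ b < 2 * n + 4 := by
  cases h with
  | cov10 => unfold lcol lht; norm_num
  | cov20 => unfold lcol lht; norm_num
  | cov31 => unfold lcol lht; norm_num
  | cov32 => unfold lcol lht; norm_num
  | covOdd m h1 h2 => unfold lcol lht; split_ifs <;> first | omega | simp_all
  | covBot m h1 h2 => unfold lcol lht; split_ifs <;> first | omega | simp_all
  | covSide m h1 h2 =>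
    rw [snakeSide_L h1]
    rcases eq_or_ne m 1 with rfl | hm
    · rw [if_pos rfl]; unfold lcol lht; norm_num; omega
    · rw [if_neg hm]; unfold lcol lht; split_ifs <;> first | omega | simp_all

lemma le_coord {n a b : ℕ} (h : SnakeLE n wL a b) (ha : a < 2 * n + 4) :
    lcol a ≤ lcol b ∧ lht n a ≤ lht n b ∧ b < 2 * n + 4 := by
  induction h with
  | refl => exact ⟨le_refl _, le_refl _, ha⟩
  | tail _ hc ih =>
    obtain ⟨h1, h2, _⟩ := ih
    obtain ⟨h1', h2', _, hb⟩ := cov_coord hc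
    exact ⟨le_trans h1 h1', le_trans h2 h2', hb⟩

end Ladder

section Counting

open DyckStep

/-- The number of positions `s < i` where `v` takes the step `x`. -/
def lcnt (n : ℕ) (v : Fin (2 * n + 4) → DyckStep) (x : DyckStep) (i : ℕ) : ℕ :=
  (Finset.univ.filter fun s : Fin (2 * n + 4) => s.1 < i ∧ v s = x).card

lemma lcnt_zero (n : ℕ) (v : Fin (2 * n + 4) → DyckStep) (x : DyckStep) :
    lcnt n v x 0 = 0 := by
  simp [lcnt]

lemma lcnt_succ {n : ℕ} (v : Fin (2 * n + 4) → DyckStep) (x : DyckStep) {i : ℕ}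
    (h : i < 2 * n + 4) :
    lcnt n v x (i + 1) = lcnt n v x i + if v ⟨i, h⟩ = x then 1 else 0 := by
  classical
  unfold lcnt
  rcases eq_or_ne (v ⟨i, h⟩) x with hx | hx
  · rw [if_pos hx]
    have he : (Finset.univ.filter fun s : Fin (2 * n + 4) => s.1 < i + 1 ∧ v s = x)
        = insert ⟨i, h⟩ (Finset.univ.filter fun s : Fin (2 * n + 4) => s.1 < i ∧ v s = x) := by
      ext s
      simp only [Finset.mem_filter, Finset.mem_insert, Finset.mem_univ, true_and]
      constructor
      · rintro ⟨hs, hv⟩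
        rcases eq_or_ne s ⟨i, h⟩ with rfl | hne
        · exact Or.inl rfl
        · have : s.1 ≠ i := fun he => hne (Fin.ext he)
          exact Or.inr ⟨by omega, hv⟩
      · rintro (rfl | ⟨hs, hv⟩)
        · exact ⟨by simp, hx⟩
        · exact ⟨by omega, hv⟩
    rw [he, Finset.card_insert_of_notMem (by simp)]
  · rw [if_neg hx]
    have he : (Finset.univ.filter fun s : Fin (2 * n + 4) => s.1 < i + 1 ∧ v s = x)
        = Finset.univ.filter fun s : Fin (2 * n + 4) => s.1 < i ∧ v s = x := by
      ext s
      simp only [Finset.mem_filter, Finset.mem_univ, true_and]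
      constructor
      · rintro ⟨hs, hv⟩
        refine ⟨?_, hv⟩
        rcases eq_or_ne s ⟨i, h⟩ with rfl | hne
        · exact absurd hv hx
        · have : s.1 ≠ i := fun he => hne (Fin.ext he)
          omega
      · rintro ⟨hs, hv⟩
        exact ⟨by omega, hv⟩
    rw [he]
    omega

lemma lcnt_mono {n : ℕ} (v : Fin (2 * n + 4) → DyckStep) (x : DyckStep) {i i' : ℕ}
    (h : i ≤ i') : lcnt n v x i ≤ lcnt n v x i' := by
  apply Finset.card_le_card
  intro s hs
  simp only [Finset.mem_filter, Finset.mem_univ, true_and] at *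
  exact ⟨by omega, hs.2⟩

lemma lcnt_ge {n : ℕ} (v : Fin (2 * n + 4) → DyckStep) (x : DyckStep) {i : ℕ}
    (h : 2 * n + 4 ≤ i) : lcnt n v x i = lcnt n v x (2 * n + 4) := by
  unfold lcnt
  congr 1
  ext s
  simp only [Finset.mem_filter, Finset.mem_univ, true_and]
  have := s.2
  constructor
  · rintro ⟨_, hv⟩; exact ⟨by omega, hv⟩
  · rintro ⟨_, hv⟩; exact ⟨by omega, hv⟩

lemma lcnt_UD {n : ℕ} (v : Fin (2 * n + 4) → DyckStep) (i : ℕ) :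
    lcnt n v U i + lcnt n v D i = min i (2 * n + 4) := by
  induction i with
  | zero => simp [lcnt_zero]
  | succ k ih =>
    rcases Nat.lt_or_ge k (2 * n + 4) with h | h
    · rw [lcnt_succ v U h, lcnt_succ v D h]
      cases hv : v ⟨k, h⟩ <;> simp [hv] <;> omega
    · rw [lcnt_ge v U (by omega), lcnt_ge v D (by omega)]
      rw [lcnt_ge v U h, lcnt_ge v D h] at ih
      omega

lemma count_take_ofFn {n : ℕ} (v : Fin (2 * n + 4) → DyckStep) (x : DyckStep) (i : ℕ) :
    ((List.ofFn v).take i).count x = lcnt n v x i := by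
  induction i with
  | zero => simp [lcnt_zero]
  | succ k ih =>
    rcases Nat.lt_or_ge k (2 * n + 4) with h | h
    · rw [List.take_succ]
      have hl : k < (List.ofFn v).length := by rw [List.length_ofFn]; exact h
      have hk : (List.ofFn v)[k]? = some (v ⟨k, h⟩) := by
        rw [List.getElem?_eq_getElem hl, List.getElem_ofFn]
      rw [hk, List.count_append, ih, lcnt_succ v x h]
      simp only [Option.toList_some]
      rcases eq_or_ne (v ⟨k, h⟩) x with hx | hx
      · rw [if_pos hx, hx]; simp
      · rw [if_neg hx]; simp [List.count_singleton', hx]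
    · have h1 : (List.ofFn v).length ≤ k := by rw [List.length_ofFn]; exact h
      rw [List.take_of_length_le h1] at ih
      rw [lcnt_ge v x (show 2 * n + 4 ≤ k + 1 by omega),
        List.take_of_length_le (by omega), ih, lcnt_ge v x h]

end Counting

section Main

open DyckStep

variable {n : ℕ}

/-- The Dyck step associated to a column. -/
def stepOf (c : ℕ) : DyckStep := if c = 0 then U else D

lemma stepOf_inj {c c' : ℕ} (hc : c ≤ 1) (hc' : c' ≤ 1) (h : stepOf c = stepOf c') :
    c = c' := by
  unfold stepOf at h
  split_ifs at h <;> first | omega | simp_all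

/-- The step word of a linear extension. -/
def vOf (f : Fin (2 * n + 4) ≃ Fin (2 * n + 4)) : Fin (2 * n + 4) → DyckStep :=
  fun t => stepOf (lcol (f.symm t).1)

lemma cnt_eq_ht (f : Fin (2 * n + 4) ≃ Fin (2 * n + 4))
    (hm : ∀ a b : Fin (2 * n + 4), SnakeLE n wL a.1 b.1 → f a ≤ f b)
    (a : Fin (2 * n + 4)) :
    lcnt n (vOf f) (stepOf (lcol a.1)) (f a).1 = lht n a.1 := by
  have ha2 := a.2
  have hha : lht n a.1 ≤ n + 1 := lht_le a.2
  unfold lcnt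
  rw [← Finset.card_range (lht n a.1)]
  apply Finset.card_nbij' (fun s => lht n (f.symm s).1)
      (fun k => f ⟨lelt n (lcol a.1) (min k (n + 1)), lelt_lt (by omega)⟩)
  · intro s hs
    simp only [Finset.mem_coe, Finset.mem_filter, Finset.mem_univ, true_and] at hs
    simp only [Finset.mem_coe, Finset.mem_range]
    have h1 : lcol (f.symm s).1 = lcol a.1 :=
      stepOf_inj (lcol_le _) (lcol_le _) hs.2
    by_contra hcon
    push_neg at hcon
    have hle : SnakeLE n wL a.1 (f.symm s).1 := by
      have e1 : a.1 = lelt n (lcol a.1) (lht n a.1) := (lelt_lcol_lht a.2).symm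
      have e2 : (f.symm s).1 = lelt n (lcol a.1) (lht n (f.symm s).1) := by
        rw [← h1]; exact (lelt_lcol_lht (f.symm s).2).symm
      rw [e1, e2]
      exact le_chain (lcol_le _) hcon (lht_le (f.symm s).2)
    have := hm a (f.symm s) hle
    rw [Equiv.apply_symm_apply] at this
    have := Fin.le_def.mp this
    omega
  · intro k hk
    simp only [Finset.mem_coe, Finset.mem_range] at hk
    have hk' : min k (n + 1) = k := by omega
    simp only [Finset.mem_coe, Finset.mem_filter, Finset.mem_univ, true_and]
    set b : Fin (2 * n + 4) := ⟨lelt n (lcol a.1) (min k (n + 1)), lelt_lt (by omega)⟩ with hb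
    constructor
    · have hle : SnakeLE n wL b.1 a.1 := by
        have e1 : a.1 = lelt n (lcol a.1) (lht n a.1) := (lelt_lcol_lht a.2).symm
        conv_rhs => rw [e1]
        exact le_chain (lcol_le _) (by omega) hha
      have h2 := Fin.le_def.mp (hm b a hle)
      have hne : b ≠ a := by
        intro hba
        have : lelt n (lcol a.1) (min k (n + 1)) = lelt n (lcol a.1) (lht n a.1) :=
          (congrArg Fin.val hba).trans (lelt_lcol_lht a.2).symm
        have := (lelt_inj (lcol_le _) (by omega) (lcol_le _) hha this).2
        omega
      have : f b ≠ f a := fun h => hne (f.injective h)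
      have : (f b).1 ≠ (f a).1 := fun h => this (Fin.ext h)
      omega
    · show stepOf (lcol (f.symm (f b)).1) = _
      rw [Equiv.symm_apply_apply]
      rw [hb]
      simp only []
      rw [lcol_lelt (lcol_le _) (by omega)]
  · intro s hs
    simp only [Finset.mem_coe, Finset.mem_filter, Finset.mem_univ, true_and] at hs
    have h1 : lcol (f.symm s).1 = lcol a.1 :=
      stepOf_inj (lcol_le _) (lcol_le _) hs.2
    have h2 : min (lht n (f.symm s).1) (n + 1) = lht n (f.symm s).1 := by
      have := lht_le (f.symm s).2; omega
    have : (⟨lelt n (lcol a.1) (min (lht n (f.symm s).1) (n + 1)),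
        lelt_lt (by omega)⟩ : Fin (2 * n + 4)) = f.symm s := by
      apply Fin.ext
      show lelt n (lcol a.1) _ = _
      rw [h2, ← h1, lelt_lcol_lht (f.symm s).2]
    beta_reduce; rw [this, Equiv.apply_symm_apply]
  · intro k hk
    simp only [Finset.mem_coe, Finset.mem_range] at hk
    beta_reduce; rw [Equiv.symm_apply_apply]
    show lht n (lelt n (lcol a.1) (min k (n + 1))) = k
    rw [lht_lelt (lcol_le _) (by omega)]
    omega

lemma prefix_cond (f : Fin (2 * n + 4) ≃ Fin (2 * n + 4))
    (hm : ∀ a b : Fin (2 * n + 4), SnakeLE n wL a.1 b.1 → f a ≤ f b) (i : ℕ) :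
    lcnt n (vOf f) D i ≤ lcnt n (vOf f) U i := by
  unfold lcnt
  apply Finset.card_le_card_of_injOn
      (fun s => f ⟨lelt n 0 (lht n (f.symm s).1), lelt_lt (lht_le (f.symm s).2)⟩)
  · intro s hs
    simp only [Finset.mem_coe, Finset.mem_filter, Finset.mem_univ, true_and] at hs ⊢
    have h1 : lcol (f.symm s).1 = 1 := by
      have h := hs.2
      unfold vOf at h
      have := lcol_le (f.symm s).1
      rcases Nat.le_one_iff_eq_zero_or_eq_one.mp this with h0 | h0
      · exfalso; rw [h0] at h; simp [stepOf] at h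
      · exact h0
    set b : Fin (2 * n + 4) := ⟨lelt n 0 (lht n (f.symm s).1), lelt_lt (lht_le (f.symm s).2)⟩
    constructor
    · have hle : SnakeLE n wL b.1 (f.symm s).1 := by
        have e2 : (f.symm s).1 = lelt n 1 (lht n (f.symm s).1) := by
          rw [← h1]; exact (lelt_lcol_lht (f.symm s).2).symm
        conv_rhs => rw [e2]
        exact le_cross (le_refl _) (lht_le (f.symm s).2)
      have h2 := Fin.le_def.mp (hm b (f.symm s) hle)
      rw [Equiv.apply_symm_apply] at h2
      omega
    · show stepOf (lcol (f.symm (f b)).1) = U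
      rw [Equiv.symm_apply_apply]
      show stepOf (lcol (lelt n 0 (lht n (f.symm s).1))) = U
      rw [lcol_lelt (by omega) (lht_le (f.symm s).2)]
      rfl
  · intro s hs s' hs' hss
    simp only [Finset.mem_coe, Finset.mem_filter, Finset.mem_univ, true_and] at hs hs'
    have h1 : lcol (f.symm s).1 = 1 := by
      have h := hs.2
      unfold vOf at h
      have := lcol_le (f.symm s).1
      rcases Nat.le_one_iff_eq_zero_or_eq_one.mp this with h0 | h0
      · exfalso; rw [h0] at h; simp [stepOf] at h
      · exact h0
    have h1' : lcol (f.symm s').1 = 1 := by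
      have h := hs'.2
      unfold vOf at h
      have := lcol_le (f.symm s').1
      rcases Nat.le_one_iff_eq_zero_or_eq_one.mp this with h0 | h0
      · exfalso; rw [h0] at h; simp [stepOf] at h
      · exact h0
    have h2 := f.injective hss
    have h3 : lelt n 0 (lht n (f.symm s).1) = lelt n 0 (lht n (f.symm s').1) :=
      congrArg Fin.val h2
    have h4 := (lelt_inj (by omega) (lht_le (f.symm s).2) (by omega)
        (lht_le (f.symm s').2) h3).2
    have h5 : (f.symm s).1 = (f.symm s').1 := by
      rw [← lelt_lcol_lht (f.symm s).2, ← lelt_lcol_lht (f.symm s').2, h1, h1', h4]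
    have : f.symm s = f.symm s' := Fin.ext h5
    calc s = f (f.symm s) := (Equiv.apply_symm_apply f s).symm
    _ = f (f.symm s') := by rw [this]
    _ = s' := Equiv.apply_symm_apply f s'

lemma total_U (f : Fin (2 * n + 4) ≃ Fin (2 * n + 4)) :
    lcnt n (vOf f) U (2 * n + 4) = n + 2 := by
  unfold lcnt
  rw [show n + 2 = (Finset.range (n + 2)).card from (Finset.card_range _).symm]
  apply Finset.card_nbij' (fun s => lht n (f.symm s).1)
      (fun k => f ⟨lelt n 0 (min k (n + 1)), lelt_lt (by omega)⟩)
  · intro s hs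
    simp only [Finset.mem_coe, Finset.mem_filter, Finset.mem_univ, true_and] at hs
    simp only [Finset.mem_coe, Finset.mem_range]
    have := lht_le (f.symm s).2
    omega
  · intro k hk
    simp only [Finset.mem_coe, Finset.mem_range] at hk
    simp only [Finset.mem_coe, Finset.mem_filter, Finset.mem_univ, true_and]
    refine ⟨(f _).2, ?_⟩
    show stepOf (lcol (f.symm (f _)).1) = U
    rw [Equiv.symm_apply_apply]
    show stepOf (lcol (lelt n 0 (min k (n + 1)))) = U
    rw [lcol_lelt (by omega) (by omega)]
    rfl
  · intro s hs
    simp only [Finset.mem_coe, Finset.mem_filter, Finset.mem_univ, true_and] at hs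
    have h1 : lcol (f.symm s).1 = 0 := by
      have h := hs.2
      unfold vOf at h
      have := lcol_le (f.symm s).1
      rcases Nat.le_one_iff_eq_zero_or_eq_one.mp this with h0 | h0
      · exact h0
      · exfalso; rw [h0] at h; simp [stepOf] at h
    have h2 : min (lht n (f.symm s).1) (n + 1) = lht n (f.symm s).1 := by
      have := lht_le (f.symm s).2; omega
    have : (⟨lelt n 0 (min (lht n (f.symm s).1) (n + 1)),
        lelt_lt (by omega)⟩ : Fin (2 * n + 4)) = f.symm s := by
      apply Fin.ext
      show lelt n 0 _ = _
      rw [h2, ← h1, lelt_lcol_lht (f.symm s).2]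
    beta_reduce; rw [this, Equiv.apply_symm_apply]
  · intro k hk
    simp only [Finset.mem_coe, Finset.mem_range] at hk
    beta_reduce; rw [Equiv.symm_apply_apply]
    show lht n (lelt n 0 (min k (n + 1))) = k
    rw [lht_lelt (by omega) (by omega)]
    omega

end Main
section Build

open DyckStep

variable {n : ℕ}

/-- Column bit of a step. -/
def cbit : DyckStep → ℕ
  | U => 0
  | D => 1

lemma stepOf_cbit (x : DyckStep) : stepOf (cbit x) = x := by cases x <;> rfl

lemma cbit_stepOf {c : ℕ} (hc : c ≤ 1) : cbit (stepOf c) = c := by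
  interval_cases c <;> rfl

lemma cbit_le (x : DyckStep) : cbit x ≤ 1 := by cases x <;> simp [cbit]

lemma cbit_inj {x y : DyckStep} (h : cbit x = cbit y) : x = y := by
  cases x <;> cases y <;> simp_all [cbit]

variable (v : Fin (2 * n + 4) → DyckStep)

lemma cnt_lt (htot : lcnt n v U (2 * n + 4) = n + 2) (t : Fin (2 * n + 4)) :
    lcnt n v (v t) t.1 < n + 2 := by
  have h1 : lcnt n v (v t) (t.1 + 1) = lcnt n v (v t) t.1 + 1 := by
    rw [lcnt_succ v _ t.2]
    simp [Fin.eta]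
  have h2 : lcnt n v (v t) (t.1 + 1) ≤ lcnt n v (v t) (2 * n + 4) :=
    lcnt_mono _ _ (by omega)
  have h3 : lcnt n v (v t) (2 * n + 4) ≤ n + 2 := by
    have := lcnt_UD v (2 * n + 4)
    cases hv : v t <;> omega
  omega

lemma cnt_strict {t t' : Fin (2 * n + 4)} (h : t.1 < t'.1) (he : v t = v t') :
    lcnt n v (v t) t.1 < lcnt n v (v t) t'.1 := by
  have h1 : lcnt n v (v t) (t.1 + 1) = lcnt n v (v t) t.1 + 1 := by
    rw [lcnt_succ v _ t.2]
    simp [Fin.eta]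
  have h2 : lcnt n v (v t) (t.1 + 1) ≤ lcnt n v (v t) t'.1 :=
    lcnt_mono _ _ (by omega)
  omega

/-- The position-to-element map determined by a Dyck step word. -/
def gmap (htot : lcnt n v U (2 * n + 4) = n + 2) :
    Fin (2 * n + 4) → Fin (2 * n + 4) :=
  fun t => ⟨lelt n (cbit (v t)) (lcnt n v (v t) t.1),
    lelt_lt (by have := cnt_lt v htot t; omega)⟩

lemma gmap_inj (htot : lcnt n v U (2 * n + 4) = n + 2) :
    Function.Injective (gmap v htot) := by
  intro t t' h
  have hval : lelt n (cbit (v t)) (lcnt n v (v t) t.1)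
      = lelt n (cbit (v t')) (lcnt n v (v t') t'.1) := congrArg Fin.val h
  have hb := cnt_lt v htot t
  have hb' := cnt_lt v htot t'
  obtain ⟨hc, hj⟩ := lelt_inj (cbit_le _) (by omega) (cbit_le _) (by omega) hval
  have hv : v t = v t' := cbit_inj hc
  rcases lt_trichotomy t.1 t'.1 with hlt | heq | hgt
  · have := cnt_strict v hlt hv
    rw [hv] at hj this
    omega
  · exact Fin.ext heq
  · have := cnt_strict v hgt hv.symm
    rw [hv] at hj
    omega

/-- The linear-extension equivalence determined by a Dyck step word. -/
noncomputable def qExt (htot : lcnt n v U (2 * n + 4) = n + 2) :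
    Fin (2 * n + 4) ≃ Fin (2 * n + 4) :=
  Equiv.ofBijective (gmap v htot)
    ((Finite.injective_iff_bijective).mp (gmap_inj v htot))

lemma qExt_apply (htot : lcnt n v U (2 * n + 4) = n + 2) (t : Fin (2 * n + 4)) :
    qExt v htot t = gmap v htot t := rfl

lemma qExt_mono (htot : lcnt n v U (2 * n + 4) = n + 2)
    (hpre : ∀ i, lcnt n v D i ≤ lcnt n v U i)
    (a b : Fin (2 * n + 4)) (h : SnakeLE n wL a.1 b.1) :
    (qExt v htot).symm a ≤ (qExt v htot).symm b := by
  set q := qExt v htot with hq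
  set t := q.symm a with hts
  set t' := q.symm b with hts'
  have ea : gmap v htot t = a := by rw [← qExt_apply, ← hq, hts, Equiv.apply_symm_apply]
  have eb : gmap v htot t' = b := by rw [← qExt_apply, ← hq, hts', Equiv.apply_symm_apply]
  have hbt := cnt_lt v htot t
  have hbt' := cnt_lt v htot t'
  have hav : a.1 = lelt n (cbit (v t)) (lcnt n v (v t) t.1) := (congrArg Fin.val ea).symm
  have hbv : b.1 = lelt n (cbit (v t')) (lcnt n v (v t') t'.1) := (congrArg Fin.val eb).symm
  obtain ⟨hcol, hht, _⟩ := le_coord h a.2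
  rw [hav, hbv] at hcol hht
  rw [lcol_lelt (cbit_le _) (by omega), lcol_lelt (cbit_le _) (by omega)] at hcol
  rw [lht_lelt (cbit_le _) (by omega), lht_lelt (cbit_le _) (by omega)] at hht
  show t ≤ t'
  rw [Fin.le_def]
  by_contra hcon
  push_neg at hcon
  rcases eq_or_ne (v t) (v t') with hv | hv
  · have := cnt_strict v hcon hv.symm
    rw [← hv] at this hht
    omega
  · have hcc : cbit (v t) ≠ cbit (v t') := fun hcc => hv (cbit_inj hcc)
    have h0 : cbit (v t) = 0 ∧ cbit (v t') = 1 := by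
      have := cbit_le (v t); have := cbit_le (v t'); omega
    have hvt : v t = U := by cases hvt : v t <;> simp_all [cbit]
    have hvt' : v t' = D := by cases hvt' : v t' <;> simp_all [cbit]
    have h1 : lcnt n v D (t'.1 + 1) = lcnt n v D t'.1 + 1 := by
      rw [lcnt_succ v _ t'.2]
      simp [Fin.eta, hvt']
    have h2 : lcnt n v U (t'.1 + 1) = lcnt n v U t'.1 := by
      rw [lcnt_succ v _ t'.2]
      simp [Fin.eta, hvt']
    have h3 := hpre (t'.1 + 1)
    have h4 : lcnt n v U t'.1 ≤ lcnt n v U t.1 := lcnt_mono _ _ (by omega)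
    rw [hvt] at hht
    rw [hvt'] at hht
    omega

end Build
section Assemble

open DyckStep

variable {n : ℕ}

/-- Linear extensions of the ladder poset. -/
abbrev LinExtT (n : ℕ) :=
  {f : SnakePoset n wL ≃ Fin (2 * n + 4) //
    ∀ a b : SnakePoset n wL, a ≤ b → f a ≤ f b}

lemma count_ofFn_eq_lcnt (v : Fin (2 * n + 4) → DyckStep) (x : DyckStep) :
    (List.ofFn v).count x = lcnt n v x (2 * n + 4) := by
  rw [← count_take_ofFn v x (2 * n + 4), List.take_of_length_le (by simp)]

/-- From a linear extension to a Dyck word of semilength `n + 2`. -/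
noncomputable def toDW (f : LinExtT n) : {p : DyckWord // p.semilength = n + 2} := by
  refine ⟨⟨List.ofFn (vOf (n := n) f.1), ?_, ?_⟩, ?_⟩
  · rw [count_ofFn_eq_lcnt, count_ofFn_eq_lcnt, total_U (n := n) f.1]
    have := lcnt_UD (vOf (n := n) f.1) (2 * n + 4)
    have ht := total_U (n := n) f.1
    omega
  · intro i
    rw [count_take_ofFn, count_take_ofFn]
    exact prefix_cond f.1 (fun a b h => f.2 a b h) i
  · show (List.ofFn (vOf (n := n) f.1)).count U = n + 2
    rw [count_ofFn_eq_lcnt, total_U (n := n) f.1]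

/-- From a Dyck word of semilength `n + 2` to a linear extension. -/
noncomputable def fromDW (p : {p : DyckWord // p.semilength = n + 2}) : LinExtT n := by
  have hlen : p.1.toList.length = 2 * n + 4 := by
    have := p.1.two_mul_semilength_eq_length
    rw [p.2] at this
    omega
  refine ?_
  set v : Fin (2 * n + 4) → DyckStep :=
    fun t => p.1.toList.get ⟨t.1, by rw [hlen]; exact t.2⟩ with hv
  have hofn : List.ofFn v = p.1.toList := by
    apply List.ext_getElem (by simp [hlen])
    intro i h1 h2
    rw [List.getElem_ofFn]
    rfl
  have htot : lcnt n v U (2 * n + 4) = n + 2 := by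
    rw [← count_ofFn_eq_lcnt, hofn]
    exact p.2
  have hpre : ∀ i, lcnt n v D i ≤ lcnt n v U i := by
    intro i
    rw [← count_take_ofFn, ← count_take_ofFn, hofn]
    exact p.1.count_D_le_count_U i
  exact ⟨(qExt v htot).symm, fun a b h => qExt_mono v htot hpre a b h⟩

lemma vOf_fromDW (p : {p : DyckWord // p.semilength = n + 2}) (t : Fin (2 * n + 4)) :
    ∀ (v : Fin (2 * n + 4) → DyckStep) (htot : lcnt n v U (2 * n + 4) = n + 2),
      vOf (n := n) ((qExt v htot).symm) t = v t := by
  intro v htot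
  show stepOf (lcol (((qExt v htot).symm.symm) t).1) = v t
  rw [Equiv.symm_symm, qExt_apply]
  show stepOf (lcol (lelt n (cbit (v t)) (lcnt n v (v t) t.1))) = v t
  rw [lcol_lelt (cbit_le _) (by have := cnt_lt v htot t; omega), stepOf_cbit]

lemma gmap_apply_of_ext (f : Fin (2 * n + 4) ≃ Fin (2 * n + 4))
    (hm : ∀ a b : Fin (2 * n + 4), SnakeLE n wL a.1 b.1 → f a ≤ f b)
    (htot : lcnt n (vOf f) U (2 * n + 4) = n + 2) (a : Fin (2 * n + 4)) :
    gmap (vOf f) htot (f a) = a := by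
  apply Fin.ext
  show lelt n (cbit (vOf f (f a))) (lcnt n (vOf f) (vOf f (f a)) (f a).1) = a.1
  have hva : vOf f (f a) = stepOf (lcol a.1) := by
    show stepOf (lcol (f.symm (f a)).1) = _
    rw [Equiv.symm_apply_apply]
  rw [hva, cbit_stepOf (lcol_le _), cnt_eq_ht f hm a, lelt_lcol_lht a.2]

/-- The main equivalence. -/
noncomputable def mainEquiv (n : ℕ) : LinExtT n ≃ {p : DyckWord // p.semilength = n + 2} where
  toFun := toDW
  invFun := fromDW
  left_inv f := by
    apply Subtype.ext
    apply Equiv.ext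
    intro a
    -- the word extracted in fromDW agrees with vOf f.1
    have hv : (fun t : Fin (2 * n + 4) =>
        (toDW f).1.toList.get ⟨t.1, by
          have := (toDW f).1.two_mul_semilength_eq_length
          rw [(toDW f).2] at this
          omega⟩) = vOf (n := n) f.1 := by
      funext t
      show (List.ofFn (vOf (n := n) f.1)).get _ = _
      exact List.getElem_ofFn ..
    show (qExt _ _).symm a = f.1 a
    simp only [hv]
    refine (Equiv.symm_apply_eq _).mpr ?_
    exact (gmap_apply_of_ext f.1 (fun a b h => f.2 a b h) (total_U (n := n) f.1) a).symm
  right_inv p := by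
    apply Subtype.ext
    apply DyckWord.ext
    show List.ofFn (vOf (n := n) (fromDW p).1) = p.1.toList
    have hlen : p.1.toList.length = 2 * n + 4 := by
      have := p.1.two_mul_semilength_eq_length
      rw [p.2] at this
      omega
    have : ∀ t : Fin (2 * n + 4), vOf (n := n) (fromDW p).1 t
        = p.1.toList.get ⟨t.1, by rw [hlen]; exact t.2⟩ := by
      intro t
      exact vOf_fromDW p t _ _
    rw [show vOf (n := n) (fromDW p).1 = _ from funext this]
    apply List.ext_getElem (by simp [hlen])
    intro i h1 h2
    rw [List.getElem_ofFn]
    rfl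

end Assemble

theorem stmt5 (n : ℕ) :
    linExtCount n (fun _ => Letter.L) = catalan (n + 2) := by
  unfold linExtCount
  rw [Nat.card_congr (mainEquiv n), Nat.card_eq_fintype_card,
    DyckWord.card_dyckWord_semilength_eq_catalan]
end
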